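/- arXiv:1901.04244 — 9 statements merged into one kernel-verified Lean document; each statement's English description precedes it below -/
import Mathlib

section
/- Let X be a real random variable satisfying condition (bern1) with constants D, M > 0. Then there exists a positive constant C₁ depending only on D (and not on M) such that for every complex u with |u| ≤ 1/(8M) and every complex v with |v| ≤ 1/2, |E e^{uX − v²/2} − 1| ≤ C₁ (|u| E|X| + |v|). -/
set_option maxHeartbeats 1000000


open MeasureTheory Real

lemma exp_norm_le_two (z : ℂ) (hz : ‖z‖ ≤ 1/8) : ‖Complex.exp z‖ ≤ 2 := by
  rw [Complex.norm_exp]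
  have h1 : z.re ≤ 1/8 := by
    have ha := Complex.abs_re_le_norm z
    linarith [le_abs_self z.re]
  have h2 := Real.add_one_le_exp (-(1/8 : ℝ))
  have h3 : Real.exp (1/8) = (Real.exp (-(1/8)))⁻¹ := by
    rw [← Real.exp_neg]; norm_num
  have h5 : (7/8 : ℝ) ≤ Real.exp (-(1/8)) := by linarith
  have h6 : Real.exp (1/8) ≤ 2 := by
    rw [h3]
    calc (Real.exp (-(1/8)))⁻¹ ≤ ((7:ℝ)/8)⁻¹ := inv_anti₀ (by norm_num) h5
      _ ≤ 2 := by norm_num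
  calc Real.exp z.re ≤ Real.exp (1/8) := Real.exp_le_exp.2 h1
    _ ≤ 2 := h6

lemma exp_sub_one_norm (z : ℂ) (hz : ‖z‖ ≤ 1/8) : ‖Complex.exp z - 1‖ ≤ 2 * ‖z‖ := by
  have h := Complex.norm_exp_sub_one_le (x := z) (by linarith)
  exact h


/-- Auxiliary: the core estimate on `‖∫ e^{uX} - 1‖`. -/
theorem mgf_core (D : ℝ) (hD : 0 < D)
    (Ω : Type) (mΩ : MeasurableSpace Ω) (μ : Measure Ω) (hμ : IsProbabilityMeasure μ)
    (X : Ω → ℝ) (hX : Measurable X)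
    (hint : ∀ k : ℕ, Integrable (fun ω => |X ω| ^ k) μ)
    (M : ℝ) (hM : 0 < M)
    (hbern : ∀ s ∈ ({1, 2, 3} : Set ℕ), ∀ k : ℕ, s ≤ k →
      |∫ ω, X ω ^ k ∂μ| ≤ D * (Nat.factorial k) * M ^ (k - s) * ∫ ω, |X ω| ^ s ∂μ)
    (u : ℂ) (hu : ‖u‖ ≤ 1 / (8 * M)) :
    ‖(∫ ω, Complex.exp (u * (X ω : ℂ)) ∂μ) - 1‖ ≤ 2 * D * ‖u‖ * ∫ ω, |X ω| ∂μ := by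
  set A := ∫ ω, |X ω| ∂μ with hA_def
  have hA : 0 ≤ A := integral_nonneg fun ω => abs_nonneg _
  have hu0 : (0:ℝ) ≤ ‖u‖ := norm_nonneg u
  set im : ℝ := M⁻¹ with him_def
  have him : 0 < im := inv_pos.2 hM
  have hu' : ‖u‖ ≤ im / 8 := by
    calc ‖u‖ ≤ 1 / (8*M) := hu
      _ = im / 8 := by rw [him_def]; field_simp
  have hr8 : ‖u‖ * M ≤ 1/8 := by
    calc ‖u‖ * M ≤ (im/8) * M := mul_le_mul_of_nonneg_right hu' hM.le
      _ = 1/8 := by rw [him_def]; field_simp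
  have hr0 : (0:ℝ) ≤ ‖u‖ * M := mul_nonneg hu0 hM.le
  have hpow : ∀ n : ℕ, (‖u‖*M)^n ≤ (1/8)^n := fun n => pow_le_pow_left₀ hr0 hr8 n
  have hA1 : (∫ ω, |X ω| ^ 1 ∂μ) = A := by simp [hA_def]
  -- even moments, k ≥ 1
  have hev : ∀ k : ℕ, 1 ≤ k → Even k →
      (∫ ω, |X ω| ^ k ∂μ) ≤ D * (Nat.factorial k) * M ^ (k-1) * A := by
    intro k hk hke
    have h1 : (∫ ω, |X ω| ^ k ∂μ) = ∫ ω, X ω ^ k ∂μ := by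
      apply integral_congr_ae
      filter_upwards with ω
      exact hke.pow_abs (X ω)
    rw [h1]
    calc (∫ ω, X ω ^ k ∂μ) ≤ |∫ ω, X ω ^ k ∂μ| := le_abs_self _
      _ ≤ D * (Nat.factorial k) * M ^ (k-1) * ∫ ω, |X ω| ^ 1 ∂μ :=
          hbern 1 (by norm_num) k hk
      _ = D * (Nat.factorial k) * M ^ (k-1) * A := by rw [hA1]
  -- odd comparison
  have hodd : ∀ m : ℕ, (∫ ω, |X ω| ^ (2*m+1) ∂μ)
      ≤ ((∫ ω, |X ω| ^ (2*m) ∂μ) + ∫ ω, |X ω| ^ (2*m+2) ∂μ) / 2 := by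
    intro m
    have hp : ∀ ω, |X ω| ^ (2*m+1) ≤ (|X ω| ^ (2*m) + |X ω| ^ (2*m+2)) / 2 := by
      intro ω
      set a := |X ω| with ha
      have ha0 : 0 ≤ a := abs_nonneg _
      have e1 : a ^ (2*m+1) = a ^ (2*m) * a := pow_succ a (2*m)
      have e2 : a ^ (2*m+2) = a ^ (2*m) * a^2 := by rw [pow_add]
      have h3 : 0 ≤ a ^ (2*m) := pow_nonneg ha0 _
      nlinarith [sq_nonneg (a - 1), mul_nonneg h3 (sq_nonneg (a-1))]
    calc (∫ ω, |X ω| ^ (2*m+1) ∂μ)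
        ≤ ∫ ω, (|X ω| ^ (2*m) + |X ω| ^ (2*m+2)) / 2 ∂μ :=
          integral_mono (hint _) (((hint (2*m)).add (hint (2*m+2))).div_const 2) hp
      _ = ((∫ ω, |X ω| ^ (2*m) ∂μ) + ∫ ω, |X ω| ^ (2*m+2) ∂μ) / 2 := by
          rw [integral_div, integral_add (hint _) (hint _)]
  -- the summand functions
  set g : ℕ → Ω → ℂ := fun k ω => u^k / (Nat.factorial k : ℂ) * (X ω : ℂ)^k with hg_def
  have hXC : ∀ k : ℕ, Integrable (fun ω => ((X ω : ℂ))^k) μ := by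
    intro k
    refine (hint k).mono' ?_ ?_
    · exact ((Complex.measurable_ofReal.comp hX).pow_const k).aestronglyMeasurable
    · filter_upwards with ω
      simp [Complex.norm_real, abs_pow]
  have hgint : ∀ k, Integrable (g k) μ := fun k => (hXC k).const_mul _
  have hbnorm : ∀ k, (∫ ω, ‖g k ω‖ ∂μ) = ‖u‖^k / (Nat.factorial k : ℝ) * ∫ ω, |X ω|^k ∂μ := by
    intro k
    have h1 : ∀ ω, ‖g k ω‖ = ‖u‖^k / (Nat.factorial k : ℝ) * |X ω|^k := by
      intro ω
      rw [hg_def]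
      simp [norm_div, norm_pow, Complex.norm_real, abs_pow]
    simp_rw [h1]
    rw [integral_const_mul]
  -- the dominating constant
  set K : ℝ := (D+1)*(A+1)*(1 + im + im^2) with hK_def
  have hK0 : 0 < K := by positivity
  have hK1 : 1 ≤ K := by nlinarith [mul_nonneg hD.le hA, mul_nonneg hD.le him.le, him.le]
  have hle_aux : ∀ x : ℝ, 0 ≤ x → x ≤ 1 + im + im^2 → D * A * x ≤ K := by
    intro x hx hx'
    calc D * A * x ≤ (D+1) * (A+1) * x := by nlinarith
      _ ≤ (D+1) * (A+1) * (1 + im + im^2) := by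
          apply mul_le_mul_of_nonneg_left hx' (by positivity)
  have hK_DA : D * A ≤ K := by
    have := hle_aux 1 zero_le_one (by nlinarith)
    linarith
  have hK_DAim : D * A * im ≤ K := hle_aux im him.le (by nlinarith)
  have hK_DAim2 : D * A * im^2 ≤ K := hle_aux (im^2) (by positivity) (by nlinarith)
  have hK_Aim : A * im ≤ K := by
    calc A * im ≤ (D+1)*(A+1)*im := by nlinarith [mul_nonneg hA him.le]
      _ ≤ (D+1)*(A+1)*(1 + im + im^2) :=
          mul_le_mul_of_nonneg_left (by nlinarith) (by positivity)
  -- moment bound for k ≥ 1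
  have hmom : ∀ k : ℕ, 1 ≤ k →
      ‖u‖^k / (Nat.factorial k : ℝ) * (∫ ω, |X ω|^k ∂μ) ≤ K * ((k:ℝ)+1) * (1/8)^k := by
    intro k hk
    have hfacpos : (0:ℝ) < (Nat.factorial k : ℝ) := by
      exact_mod_cast Nat.factorial_pos k
    have hmono : ∀ n : ℕ, Even (n+1) →
        ‖u‖^(n+1) / (Nat.factorial (n+1) : ℝ) * (∫ ω, |X ω|^(n+1) ∂μ)
          ≤ D * A * im * (1/8)^(n+1) := by
      intro n hne
      have h1 := hev (n+1) (by omega) hne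
      rw [Nat.add_sub_cancel] at h1
      have hfp : (0:ℝ) < (Nat.factorial (n+1) : ℝ) := by
        exact_mod_cast Nat.factorial_pos (n+1)
      have hint_nonneg : 0 ≤ ∫ ω, |X ω|^(n+1) ∂μ :=
        integral_nonneg fun ω => by positivity
      calc ‖u‖^(n+1) / (Nat.factorial (n+1) : ℝ) * (∫ ω, |X ω|^(n+1) ∂μ)
          ≤ ‖u‖^(n+1) / (Nat.factorial (n+1) : ℝ) * (D * (Nat.factorial (n+1)) * M^n * A) := by
            apply mul_le_mul_of_nonneg_left h1 (by positivity)
        _ = D * A * (‖u‖^(n+1) * M^n) := by field_simp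
        _ = D * A * (‖u‖ * (‖u‖*M)^n) := by rw [pow_succ, mul_pow]; ring
        _ ≤ D * A * ((im/8) * (1/8)^n) := by
            apply mul_le_mul_of_nonneg_left _ (by positivity)
            apply mul_le_mul hu' (hpow n) (by positivity) (by positivity)
        _ = D * A * im * (1/8)^(n+1) := by rw [pow_succ]; ring
    rcases Nat.even_or_odd k with hke | hko
    · -- even
      obtain ⟨n, rfl⟩ : ∃ n, k = n+1 := ⟨k-1, by omega⟩
      calc ‖u‖^(n+1) / (Nat.factorial (n+1) : ℝ) * (∫ ω, |X ω|^(n+1) ∂μ)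
          ≤ D * A * im * (1/8)^(n+1) := hmono n hke
        _ ≤ K * (((n:ℝ)+1)+1) * (1/8)^(n+1) := by
            have h8 : (0:ℝ) ≤ (1/8:ℝ)^(n+1) := by positivity
            have h9 := mul_le_mul_of_nonneg_right hK_DAim h8
            nlinarith [mul_nonneg (mul_nonneg hK0.le (Nat.cast_nonneg n)) h8]
        _ = K * (((n+1:ℕ):ℝ)+1) * (1/8)^(n+1) := by push_cast; ring
    · -- odd
      obtain ⟨m, rfl⟩ := hko
      rcases Nat.eq_zero_or_pos m with rfl | hm
      · -- k = 1
        simp only [Nat.mul_zero, Nat.zero_add, pow_one, Nat.factorial_one, Nat.cast_one, div_one]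
        have h1 : ‖u‖ * A ≤ (im/8) * A := mul_le_mul_of_nonneg_right hu' hA
        have h2 : (im/8)*A ≤ K * (1+1) * (1/8 : ℝ) := by nlinarith
        calc ‖u‖ * (∫ ω, |X ω| ∂μ) ≤ K * (1+1) * (1/8 : ℝ) := by
              rw [← hA_def] at *; linarith
          _ = K * (1+1) * (1/8 : ℝ) := rfl
      · -- k = 2m+1, m ≥ 1
        obtain ⟨q, hq⟩ : ∃ q, 2*m+1 = q+2 := ⟨2*m-1, by omega⟩
        have hq1 : 2*m = q+1 := by omega
        have hq3 : 2*m+2 = q+3 := by omega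
        have hEq1 : Even (q+1) := hq1 ▸ even_two_mul m
        have hEq3 : Even (q+3) := by
          have : Even (2*(m+1)) := even_two_mul (m+1)
          have h' : 2*(m+1) = q+3 := by omega
          rwa [h'] at this
        have h2m := hev (q+1) (by omega) hEq1
        have h2m2 := hev (q+3) (by omega) hEq3
        have e1 : q+1-1 = q := by omega
        have e2 : q+3-1 = q+2 := by omega
        rw [e1] at h2m
        rw [e2] at h2m2
        have hoddm := hodd m
        rw [hq3] at hoddm
        rw [hq] at hoddm
        rw [hq1] at hoddm
        have hfp : (0:ℝ) < (Nat.factorial (q+2) : ℝ) := by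
          exact_mod_cast Nat.factorial_pos (q+2)
        have hf1 : ((Nat.factorial (q+1)) : ℝ) ≤ (Nat.factorial (q+2) : ℝ) := by
          exact_mod_cast Nat.factorial_le (by omega)
        have hf2 : ((Nat.factorial (q+3)) : ℝ) = ((q:ℝ)+3) * (Nat.factorial (q+2) : ℝ) := by
          have : Nat.factorial (q+3) = (q+3) * Nat.factorial (q+2) := Nat.factorial_succ (q+2)
          rw [this]; push_cast; ring
        rw [hq]
        have hTT : (∫ ω, |X ω|^(q+2) ∂μ)
            ≤ (D * (Nat.factorial (q+1)) * M^q * A + D * (Nat.factorial (q+3)) * M^(q+2) * A) / 2 := by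
          calc (∫ ω, |X ω|^(q+2) ∂μ)
              ≤ ((∫ ω, |X ω| ^ (q+1) ∂μ) + ∫ ω, |X ω| ^ (q+3) ∂μ) / 2 := hoddm
            _ ≤ _ := by linarith [add_le_add h2m h2m2]
        have hu2 : ‖u‖^(q+2) * M^q ≤ im^2 * (1/8)^(q+2) := by
          have h1 : ‖u‖^(q+2) * M^q = (‖u‖ * ‖u‖) * (‖u‖*M)^q := by
            rw [mul_pow, pow_add]; ring
          rw [h1]
          calc (‖u‖ * ‖u‖) * (‖u‖*M)^q ≤ ((im/8) * (im/8)) * (1/8)^q := by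
                apply mul_le_mul _ (hpow q) (by positivity) (by positivity)
                exact mul_le_mul hu' hu' hu0 (by positivity)
            _ = im^2 * (1/8)^(q+2) := by rw [pow_add]; ring
        have hu3 : ‖u‖^(q+2) * M^(q+2) ≤ (1/8)^(q+2) := by
          have h1 : ‖u‖^(q+2) * M^(q+2) = (‖u‖*M)^(q+2) := by rw [mul_pow]
          rw [h1]; exact hpow (q+2)
        have hup : (0:ℝ) ≤ ‖u‖^(q+2) := by positivity
        calc ‖u‖^(q+2) / (Nat.factorial (q+2) : ℝ) * (∫ ω, |X ω|^(q+2) ∂μ)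
            ≤ ‖u‖^(q+2) / (Nat.factorial (q+2) : ℝ)
                * ((D * (Nat.factorial (q+1)) * M^q * A + D * (Nat.factorial (q+3)) * M^(q+2) * A) / 2) := by
              apply mul_le_mul_of_nonneg_left hTT (by positivity)
          _ ≤ (D * A * (‖u‖^(q+2) * M^q) + D * A * ((q:ℝ)+3) * (‖u‖^(q+2) * M^(q+2))) / 2 := by
              rw [div_mul_eq_mul_div, div_le_div_iff₀ hfp (by norm_num : (0:ℝ) < 2), hf2]
              have hcoef : (0:ℝ) ≤ D * A * (‖u‖^(q+2) * M^q) := by positivity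
              nlinarith [mul_le_mul_of_nonneg_left hf1 hcoef]
          _ ≤ (D * A * (im^2 * (1/8)^(q+2)) + D * A * ((q:ℝ)+3) * (1/8)^(q+2)) / 2 := by
              have hx1 := mul_le_mul_of_nonneg_left hu2 (by positivity : (0:ℝ) ≤ D * A)
              have hx2 := mul_le_mul_of_nonneg_left hu3 (by positivity : (0:ℝ) ≤ D * A * ((q:ℝ)+3))
              linarith
          _ ≤ K * (((q:ℝ)+2)+1) * (1/8)^(q+2) := by
              have h8 : (0:ℝ) ≤ (1/8:ℝ)^(q+2) := by positivity
              have hx1 : D*A*(im^2*(1/8)^(q+2)) ≤ K*(1/8)^(q+2) := by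
                calc D*A*(im^2*(1/8)^(q+2)) = (D*A*im^2)*(1/8)^(q+2) := by ring
                  _ ≤ K*(1/8)^(q+2) := mul_le_mul_of_nonneg_right hK_DAim2 h8
              have hx2 : D*A*((q:ℝ)+3)*(1/8)^(q+2) ≤ K*((q:ℝ)+3)*(1/8)^(q+2) := by
                apply mul_le_mul_of_nonneg_right _ h8
                exact mul_le_mul_of_nonneg_right hK_DA (by positivity)
              have hx3 : K*(1/8)^(q+2) ≤ K*((q:ℝ)+3)*(1/8)^(q+2) := by
                nlinarith [mul_nonneg (mul_nonneg hK0.le h8) (Nat.cast_nonneg q),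
                  mul_nonneg hK0.le h8]
              linarith
          _ = K * (((q+2:ℕ):ℝ)+1) * (1/8)^(q+2) := by push_cast; ring
  -- summability of the integral norms
  have hnorm_nonneg : ∀ k, 0 ≤ ∫ ω, ‖g k ω‖ ∂μ := fun k => integral_nonneg fun ω => norm_nonneg _
  have hX0 : (∫ ω, |X ω|^0 ∂μ) = 1 := by simp
  have hbd : ∀ k, (∫ ω, ‖g k ω‖ ∂μ) ≤ K * ((k:ℝ)+1) * (1/8)^k := by
    intro k
    rw [hbnorm]
    rcases Nat.eq_zero_or_pos k with rfl | hk
    · simp [hX0]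
      nlinarith
    · exact hmom k hk
  have hc_sum : Summable (fun k : ℕ => K * ((k:ℝ)+1) * (1/8)^k) := by
    have hn18 : ‖(1/8 : ℝ)‖ < 1 := by
      rw [Real.norm_eq_abs, abs_of_nonneg (by norm_num : (0:ℝ) ≤ 1/8)]; norm_num
    have h2 := summable_pow_mul_geometric_of_norm_lt_one (R := ℝ) 1 (r := (1/8:ℝ)) hn18
    have h3 := summable_geometric_of_lt_one (r := (1/8:ℝ)) (by norm_num) (by norm_num)
    have h4 : Summable (fun k : ℕ => ((k:ℝ)+1) * (1/8)^k) := by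
      apply Summable.congr (h2.add h3)
      intro n
      push_cast
      ring
    exact (h4.mul_left K).congr fun n => by ring
  have hsumnorm : Summable (fun k => ∫ ω, ‖g k ω‖ ∂μ) :=
    Summable.of_nonneg_of_le hnorm_nonneg hbd hc_sum
  -- interchange
  have hexp : ∀ ω, Complex.exp (u * (X ω:ℂ)) = ∑' k, g k ω := by
    intro ω
    rw [Complex.exp_eq_exp_ℂ, NormedSpace.exp_eq_tsum_div]
    exact tsum_congr fun k => by rw [hg_def, mul_pow]; ring
  have hswap : (∫ ω, Complex.exp (u * (X ω:ℂ)) ∂μ) = ∑' k, ∫ ω, g k ω ∂μ := by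
    simp_rw [hexp]
    exact (integral_tsum_of_summable_integral_norm hgint hsumnorm).symm
  have hg0 : (∫ ω, g 0 ω ∂μ) = 1 := by
    simp [hg_def]
  have hsummableI : Summable (fun k => ∫ ω, g k ω ∂μ) := by
    apply Summable.of_norm
    exact Summable.of_nonneg_of_le (fun k => norm_nonneg _)
      (fun k => norm_integral_le_integral_norm _) hsumnorm
  have hsplit2 : (∫ ω, Complex.exp (u * (X ω:ℂ)) ∂μ) - 1 = ∑' k, ∫ ω, g (k+1) ω ∂μ := by
    rw [hswap, Summable.tsum_eq_zero_add hsummableI, hg0]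
    ring
  have hterm : ∀ k : ℕ, ‖∫ ω, g (k+1) ω ∂μ‖ ≤ D * ‖u‖ * A * (1/8)^k := by
    intro k
    have h1 : (∫ ω, g (k+1) ω ∂μ)
        = u^(k+1)/((Nat.factorial (k+1)) : ℂ) * ((∫ ω, X ω^(k+1) ∂μ : ℝ) : ℂ) := by
      rw [hg_def]
      simp only
      rw [integral_const_mul]
      congr 1
      rw [show (fun a => ((X a : ℂ))^(k+1)) = (fun a => ((X a ^ (k+1) : ℝ) : ℂ)) from
        funext fun a => by push_cast; ring]
      exact integral_ofReal
    rw [h1, norm_mul, norm_div]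
    simp only [norm_pow, Complex.norm_natCast, Complex.norm_real, Real.norm_eq_abs]
    have hb := hbern 1 (by norm_num) (k+1) (by omega)
    rw [Nat.add_sub_cancel, hA1] at hb
    have hfp : (0:ℝ) < (Nat.factorial (k+1) : ℝ) := by exact_mod_cast Nat.factorial_pos (k+1)
    calc ‖u‖^(k+1) / (Nat.factorial (k+1) : ℝ) * |∫ ω, X ω^(k+1) ∂μ|
        ≤ ‖u‖^(k+1) / (Nat.factorial (k+1) : ℝ) * (D * (Nat.factorial (k+1)) * M^k * A) := by
          apply mul_le_mul_of_nonneg_left hb (by positivity)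
      _ = D * A * (‖u‖^(k+1) * M^k) := by field_simp
      _ = D * A * (‖u‖ * (‖u‖*M)^k) := by rw [pow_succ, mul_pow]; ring
      _ ≤ D * A * (‖u‖ * (1/8)^k) := by
          apply mul_le_mul_of_nonneg_left _ (by positivity)
          exact mul_le_mul_of_nonneg_left (hpow k) hu0
      _ = D * ‖u‖ * A * (1/8)^k := by ring
  have hgeo : HasSum (fun k:ℕ => D * ‖u‖ * A * (1/8)^k) (D * ‖u‖ * A * (1-1/8)⁻¹) :=
    (hasSum_geometric_of_lt_one (by norm_num) (by norm_num)).mul_left _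
  rw [hsplit2]
  calc ‖∑' k, ∫ ω, g (k+1) ω ∂μ‖ ≤ D * ‖u‖ * A * (1-1/8)⁻¹ := tsum_of_norm_bounded hgeo hterm
    _ ≤ 2 * D * ‖u‖ * A := by
        have h1 : (0:ℝ) ≤ D * ‖u‖ * A := by positivity
        have h2 : ((1:ℝ)-1/8)⁻¹ = 8/7 := by norm_num
        rw [h2]
        nlinarith

/-- Lemma 1, first inequality: if a real random variable `X` satisfies the Bernstein-type
condition (bern1) with constants `D, M > 0`, then there is a constant `C₁ > 0` depending
only on `D` (not on `M`) such that for all complex `u, v` with `|u| ≤ 1/(8M)`, `|v| ≤ 1/2`,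
`|E e^{uX − v²/2} − 1| ≤ C₁ (|u| E|X| + |v|)`. -/
theorem mgf_expansion_first_order (D : ℝ) (hD : 0 < D) :
    ∃ C₁ > (0 : ℝ),
      ∀ (Ω : Type) (_ : MeasurableSpace Ω) (μ : Measure Ω), IsProbabilityMeasure μ →
      ∀ (X : Ω → ℝ), Measurable X →
      (∀ k : ℕ, Integrable (fun ω => |X ω| ^ k) μ) →
      ∀ (M : ℝ), 0 < M →
      (∀ s ∈ ({1, 2, 3} : Set ℕ), ∀ k : ℕ, s ≤ k →
        |∫ ω, X ω ^ k ∂μ| ≤ D * (Nat.factorial k) * M ^ (k - s) * ∫ ω, |X ω| ^ s ∂μ) →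
      ∀ (u v : ℂ), ‖u‖ ≤ 1 / (8 * M) → ‖v‖ ≤ 1 / 2 →
        ‖(∫ ω, Complex.exp (u * (X ω : ℂ) - v ^ 2 / 2) ∂μ) - 1‖
          ≤ C₁ * (‖u‖ * ∫ ω, |X ω| ∂μ + ‖v‖) := by
  refine ⟨4 * D + 2, by positivity, ?_⟩
  intro Ω mΩ μ hμ X hX hint M hM hbern u v hu hv
  set A := ∫ ω, |X ω| ∂μ with hA_def
  have hA : 0 ≤ A := integral_nonneg fun ω => abs_nonneg _
  set c : ℂ := Complex.exp (-(v ^ 2 / 2)) with hc_def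
  have hsplit : (∫ ω, Complex.exp (u * (X ω : ℂ) - v ^ 2 / 2) ∂μ)
      = c * ∫ ω, Complex.exp (u * (X ω : ℂ)) ∂μ := by
    have : ∀ ω, Complex.exp (u * (X ω : ℂ) - v ^ 2 / 2)
        = c * Complex.exp (u * (X ω : ℂ)) := by
      intro ω
      rw [hc_def, ← Complex.exp_add]
      ring_nf
    simp_rw [this]
    exact integral_const_mul c _
  have hE : ‖(∫ ω, Complex.exp (u * (X ω : ℂ)) ∂μ) - 1‖ ≤ 2 * D * ‖u‖ * A :=
    mgf_core D hD Ω mΩ μ hμ X hX hint M hM hbern u hu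
  have hv2 : ‖-(v ^ 2 / 2)‖ ≤ 1 / 8 := by
    rw [norm_neg, norm_div]
    simp only [norm_pow]
    calc ‖v‖ ^ 2 / ‖(2 : ℂ)‖ ≤ (1/2)^2 / 2 := by
          rw [Complex.norm_ofNat]
          gcongr
      _ ≤ 1/8 := by norm_num
  have hcnorm : ‖c‖ ≤ 2 := exp_norm_le_two _ hv2
  have hc1 : ‖c - 1‖ ≤ ‖v‖ := by
    calc ‖c - 1‖ ≤ 2 * ‖-(v ^ 2 / 2)‖ := exp_sub_one_norm _ hv2
      _ = 2 * (‖v‖^2 / 2) := by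
          rw [norm_neg, norm_div]
          simp [Complex.norm_ofNat]
      _ = ‖v‖ * ‖v‖ := by ring
      _ ≤ (1/2) * ‖v‖ := mul_le_mul_of_nonneg_right hv (norm_nonneg v)
      _ ≤ ‖v‖ := by nlinarith [norm_nonneg v]
  calc ‖(∫ ω, Complex.exp (u * (X ω : ℂ) - v ^ 2 / 2) ∂μ) - 1‖
      = ‖c * ((∫ ω, Complex.exp (u * (X ω : ℂ)) ∂μ) - 1) + (c - 1)‖ := by
        rw [hsplit]; ring_nf
    _ ≤ ‖c * ((∫ ω, Complex.exp (u * (X ω : ℂ)) ∂μ) - 1)‖ + ‖c - 1‖ := norm_add_le _ _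
    _ = ‖c‖ * ‖(∫ ω, Complex.exp (u * (X ω : ℂ)) ∂μ) - 1‖ + ‖c - 1‖ := by rw [norm_mul]
    _ ≤ 2 * (2 * D * ‖u‖ * A) + ‖v‖ := by
        gcongr <;> first | exact norm_nonneg _ | skip
    _ ≤ (4 * D + 2) * (‖u‖ * A + ‖v‖) := by
        have h1 : 0 ≤ ‖u‖ * A := mul_nonneg (norm_nonneg u) hA
        have h2 : 0 ≤ ‖v‖ := norm_nonneg v
        nlinarith
end

section
/- Let X be a real random variable satisfying condition (bern1) with constants D, M > 0. Then there exists a positive constant C₂ depending only on D (and not on M) such that for every complex u with |u| ≤ 1/(8M) and every complex v with |v| ≤ 1/2, |E e^{uX − v²/2} − 1 − u E X| ≤ C₂ (|u|² E X² + |v|²). -/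
set_option maxHeartbeats 1000000


open MeasureTheory Real

private lemma factorial_two_mul_le_aux (j : ℕ) :
    (Nat.factorial (2 * j) : ℝ) ≤ 4 ^ j * (Nat.factorial j) ^ 2 := by
  induction j with
  | zero => norm_num
  | succ n ih =>
    have h : 2 * (n + 1) = (2 * n + 1) + 1 := by ring
    rw [h, Nat.factorial_succ, Nat.factorial_succ, Nat.factorial_succ]
    push_cast
    have h1 : (0:ℝ) ≤ (Nat.factorial (2*n) : ℝ) := by positivity
    have h2 : (0:ℝ) ≤ (Nat.factorial n : ℝ) := by positivity
    have h3 : (0:ℝ) ≤ (4:ℝ) ^ n := by positivity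
    calc (2 * (n:ℝ) + 1 + 1) * ((2 * (n:ℝ) + 1) * (Nat.factorial (2*n) : ℝ))
        ≤ (2 * (n:ℝ) + 2) ^ 2 * (Nat.factorial (2*n) : ℝ) := by nlinarith
      _ ≤ (2 * (n:ℝ) + 2) ^ 2 * (4 ^ n * (Nat.factorial n : ℝ) ^ 2) := by
          have : (0:ℝ) ≤ (2 * (n:ℝ) + 2) ^ 2 := by positivity
          gcongr
      _ = 4 ^ (n + 1) * (((n:ℝ) + 1) * (Nat.factorial n : ℝ)) ^ 2 := by ring

/-- Lemma 1, second inequality: if a real random variable `X` satisfies the Bernstein-type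
condition (bern1) with constants `D, M > 0`, then there is a constant `C₂ > 0` depending
only on `D` (not on `M`) such that for all complex `u, v` with `|u| ≤ 1/(8M)`, `|v| ≤ 1/2`,
`|E e^{uX − v²/2} − 1 − u E X| ≤ C₂ (|u|² E X² + |v|²)`. -/
theorem mgf_expansion_second_order (D : ℝ) (hD : 0 < D) :
    ∃ C₂ > (0 : ℝ),
      ∀ (Ω : Type) (_ : MeasurableSpace Ω) (μ : Measure Ω), IsProbabilityMeasure μ →
      ∀ (X : Ω → ℝ), Measurable X →
      (∀ k : ℕ, Integrable (fun ω => |X ω| ^ k) μ) →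
      ∀ (M : ℝ), 0 < M →
      (∀ s ∈ ({1, 2, 3} : Set ℕ), ∀ k : ℕ, s ≤ k →
        |∫ ω, X ω ^ k ∂μ| ≤ D * (Nat.factorial k) * M ^ (k - s) * ∫ ω, |X ω| ^ s ∂μ) →
      ∀ (u v : ℂ), ‖u‖ ≤ 1 / (8 * M) → ‖v‖ ≤ 1 / 2 →
        ‖(∫ ω, Complex.exp (u * (X ω : ℂ) - v ^ 2 / 2) ∂μ) - 1 - u * (∫ ω, X ω ∂μ : ℝ)‖
          ≤ C₂ * (‖u‖ ^ 2 * ∫ ω, (X ω) ^ 2 ∂μ + ‖v‖ ^ 2) := by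
  refine ⟨7 * D + 1, by linarith, ?_⟩
  intro Ω mΩ μ hμ X hX hInt M hM hbern u v hu hv
  set m : ℕ → ℝ := fun k => ∫ ω, X ω ^ k ∂μ with hmdef
  set a : ℕ → ℝ := fun k => ∫ ω, |X ω| ^ k ∂μ with hadef
  have hmk : ∀ k, m k = ∫ ω, X ω ^ k ∂μ := fun k => by rw [hmdef]
  have hak : ∀ k, a k = ∫ ω, |X ω| ^ k ∂μ := fun k => by rw [hadef]
  have hu0 : (0:ℝ) ≤ ‖u‖ := norm_nonneg u
  have hum : ‖u‖ * M ≤ 1 / 8 := by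
    have h8 : (0:ℝ) < 8 * M := by linarith
    calc ‖u‖ * M ≤ (1 / (8 * M)) * M := by gcongr
      _ = 1 / 8 := by field_simp
  -- basic integrability and positivity facts
  have ha_nonneg : ∀ k, 0 ≤ a k := by
    intro k; rw [hak]; exact integral_nonneg fun ω => by positivity
  have hint_pow : ∀ k, Integrable (fun ω => X ω ^ k) μ := by
    intro k
    refine (hInt k).mono' ((hX.pow_const k).aestronglyMeasurable) ?_
    filter_upwards with ω
    rw [Real.norm_eq_abs, abs_pow]
  have hm_le : ∀ k, |m k| ≤ a k := by
    intro k
    rw [hmk, hak]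
    calc |∫ ω, X ω ^ k ∂μ| ≤ ∫ ω, |X ω ^ k| ∂μ := by
          simpa [Real.norm_eq_abs] using
            norm_integral_le_integral_norm (μ := μ) (fun ω => X ω ^ k)
      _ = ∫ ω, |X ω| ^ k ∂μ := by simp [abs_pow]
  have hm0 : m 0 = 1 := by rw [hmk]; simp
  have ha2m2 : a 2 = m 2 := by rw [hak, hmk]; simp [sq_abs]
  have hm2_nonneg : 0 ≤ m 2 := ha2m2 ▸ ha_nonneg 2
  -- Cauchy–Schwarz : (a j)² ≤ a (2j)
  have hCS : ∀ j : ℕ, (a j) ^ 2 ≤ a (2 * j) := by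
    intro j
    have hYm : AEStronglyMeasurable (fun ω => |X ω| ^ j) μ :=
      ((hX.abs).pow_const j).aestronglyMeasurable
    have hYsq : Integrable (fun ω => (|X ω| ^ j) ^ 2) μ := by
      have := hInt (j * 2)
      refine this.congr ?_
      filter_upwards with ω
      rw [← pow_mul]
    have hmem : MemLp (fun ω => |X ω| ^ j) 2 μ :=
      (memLp_two_iff_integrable_sq hYm).2 hYsq
    have hvar := ProbabilityTheory.variance_nonneg (fun ω => |X ω| ^ j) μ
    rw [ProbabilityTheory.variance_eq_sub hmem] at hvar
    have heq : (∫ x, ((fun ω => |X ω| ^ j) ^ 2) x ∂μ) = a (2 * j) := by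
      rw [hak]
      refine integral_congr_ae ?_
      filter_upwards with ω
      show ((fun ω => |X ω| ^ j) ^ 2) ω = |X ω| ^ (2 * j)
      simp only [Pi.pow_apply]
      rw [← pow_mul, mul_comm]
    have heq2 : (∫ x, |X x| ^ j ∂μ) = a j := (hak j).symm
    rw [heq, heq2] at hvar
    linarith
  -- Bernstein bounds
  have h1m : (1:ℕ) ∈ ({1,2,3} : Set ℕ) := by simp
  have h2m : (2:ℕ) ∈ ({1,2,3} : Set ℕ) := by simp
  have hmom : ∀ i : ℕ, |m (i + 2)| ≤ D * (Nat.factorial (i+2)) * M ^ i * a 2 := by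
    intro i
    have := hbern 2 h2m (i+2) (by omega)
    rw [← hmk, ← hak] at this
    simpa using this
  have ha1 : a 1 ≤ 2 * D * M := by
    have hb := hbern 1 h1m 2 (by norm_num)
    rw [← hmk, ← hak] at hb
    have hb' : m 2 ≤ 2 * D * M * a 1 := by
      have : |m 2| ≤ D * 2 * M * a 1 := by simpa [Nat.factorial] using hb
      calc m 2 ≤ |m 2| := le_abs_self _
        _ ≤ D * 2 * M * a 1 := this
        _ = 2 * D * M * a 1 := by ring
    have hsq : a 1 ^ 2 ≤ m 2 := by
      have := hCS 1
      rwa [show 2 * 1 = 2 by norm_num, ha2m2] at this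
    rcases eq_or_lt_of_le (ha_nonneg 1) with h | h
    · rw [← h]; positivity
    · have : a 1 * a 1 ≤ (2 * D * M) * a 1 := by nlinarith
      exact le_of_mul_le_mul_right this h
  -- key summability bound
  have hkey : ∀ i : ℕ, ‖u‖ ^ (i+1) * a (i+1) / (Nat.factorial (i+1)) ≤
      (Real.sqrt (D * a 2) / M) * (1/4 : ℝ) ^ (i+1) := by
    intro i
    have hfac : (0:ℝ) < (Nat.factorial (i+1) : ℝ) := by
      exact_mod_cast Nat.factorial_pos _
    -- a (i+1) ≤ sqrt (D * a 2) * (2^(i+1) * (i+1)!) * M ^ i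
    have hstep : a (i+1) ≤ Real.sqrt (D * a 2) * (2 ^ (i+1) * (Nat.factorial (i+1))) * M ^ i := by
      have e1 : (a (i+1)) ^ 2 ≤ D * (Nat.factorial (2*i+2)) * M ^ (2*i) * a 2 := by
        calc (a (i+1)) ^ 2 ≤ a (2 * (i+1)) := hCS (i+1)
          _ = a (2*i + 2) := by ring_nf
          _ = m (2*i + 2) := by
              rw [hak, hmk]
              refine integral_congr_ae ?_
              filter_upwards with ω
              exact Even.pow_abs (by exact ⟨i + 1, by ring⟩) _
          _ ≤ |m (2*i + 2)| := le_abs_self _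
          _ ≤ D * (Nat.factorial (2*i+2)) * M ^ (2*i) * a 2 := hmom (2*i)
      have e2 : D * (Nat.factorial (2*i+2)) * M ^ (2*i) * a 2 ≤
          (Real.sqrt (D * a 2) * (2 ^ (i+1) * (Nat.factorial (i+1))) * M ^ i) ^ 2 := by
        have hf := factorial_two_mul_le_aux (i+1)
        have hsq : Real.sqrt (D * a 2) ^ 2 = D * a 2 :=
          Real.sq_sqrt (by positivity)
        have h2i : (2 : ℕ) * (i+1) = 2*i + 2 := by ring
        rw [h2i] at hf
        have expand : (Real.sqrt (D * a 2) * (2 ^ (i+1) * (Nat.factorial (i+1))) * M ^ i) ^ 2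
            = (D * a 2) * ((4:ℝ) ^ (i+1) * (Nat.factorial (i+1) : ℝ) ^ 2) * M ^ (2*i) := by
          have h4 : (4:ℝ) ^ (i+1) = ((2:ℝ) ^ (i+1)) ^ 2 := by
            rw [← pow_mul, show (4:ℝ) = 2^2 by norm_num, ← pow_mul]
            ring_nf
          rw [mul_pow, mul_pow, hsq, h4]
          ring
        rw [expand]
        have ha2 : 0 ≤ a 2 := ha_nonneg 2
        have hMi : (0:ℝ) ≤ M ^ (2*i) := by positivity
        calc D * (Nat.factorial (2*i+2)) * M ^ (2*i) * a 2
            ≤ D * ((4:ℝ) ^ (i+1) * (Nat.factorial (i+1) : ℝ) ^ 2) * M ^ (2*i) * a 2 := by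
              have hD' : (0:ℝ) ≤ D := hD.le
              gcongr
          _ = (D * a 2) * ((4:ℝ) ^ (i+1) * (Nat.factorial (i+1) : ℝ) ^ 2) * M ^ (2*i) := by ring
      have hrhs_nonneg : 0 ≤ Real.sqrt (D * a 2) * (2 ^ (i+1) * (Nat.factorial (i+1))) * M ^ i := by
        positivity
      nlinarith [ha_nonneg (i+1), e1, e2]
    calc ‖u‖ ^ (i+1) * a (i+1) / (Nat.factorial (i+1))
        ≤ ‖u‖ ^ (i+1) * (Real.sqrt (D * a 2) * (2 ^ (i+1) * (Nat.factorial (i+1))) * M ^ i)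
            / (Nat.factorial (i+1)) := by gcongr
      _ = Real.sqrt (D * a 2) * ((2 * ‖u‖) ^ (i+1) * M ^ i) := by
          field_simp
          ring
      _ ≤ Real.sqrt (D * a 2) * ((1/M) * (1/4 : ℝ) ^ (i+1)) := by
          have hpos : (0:ℝ) ≤ Real.sqrt (D * a 2) := Real.sqrt_nonneg _
          have hin : (2 * ‖u‖) ^ (i+1) * M ^ i ≤ (1/M) * (1/4 : ℝ) ^ (i+1) := by
            have hM0 : (0:ℝ) < M := hM
            have h14 : ((2 * ‖u‖) ^ (i+1) * M ^ i) * M = (2 * ‖u‖ * M) ^ (i+1) := by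
              ring
            have hb : (2 * ‖u‖ * M) ^ (i+1) ≤ (1/4 : ℝ) ^ (i+1) := by
              apply pow_le_pow_left₀ (by positivity)
              nlinarith [hum]
            have := hb
            rw [← h14] at this
            calc (2 * ‖u‖) ^ (i+1) * M ^ i
                = (((2 * ‖u‖) ^ (i+1) * M ^ i) * M) / M := by field_simp
              _ ≤ (1/4 : ℝ) ^ (i+1) / M := by gcongr
              _ = (1/M) * (1/4 : ℝ) ^ (i+1) := by ring
          gcongr
      _ = (Real.sqrt (D * a 2) / M) * (1/4 : ℝ) ^ (i+1) := by ring
  have hb_nonneg : ∀ k : ℕ, 0 ≤ ‖u‖ ^ k * a k / (Nat.factorial k) := by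
    intro k
    have := ha_nonneg k
    positivity
  have hsum_b : Summable (fun k => ‖u‖ ^ k * a k / (Nat.factorial k : ℝ)) := by
    rw [← summable_nat_add_iff 1]
    have hgeo : Summable (fun i : ℕ => ((Real.sqrt (D * a 2) / M) * (1/4)) * (1/4 : ℝ) ^ i) :=
      (summable_geometric_of_lt_one (by norm_num) (by norm_num)).mul_left _
    have hmaj : Summable (fun i : ℕ => (Real.sqrt (D * a 2) / M) * (1/4 : ℝ) ^ (i+1)) :=
      hgeo.congr fun i => by ring
    exact Summable.of_nonneg_of_le (fun i => hb_nonneg (i+1)) (fun i => hkey i) hmaj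
  -- the functions in the series
  set f : ℕ → Ω → ℂ := fun k ω => u ^ k * (X ω : ℂ) ^ k / (Nat.factorial k : ℂ) with hfdef
  have hf_int : ∀ k, Integrable (f k) μ := by
    intro k
    have h0 : Integrable (fun ω => ((X ω ^ k : ℝ) : ℂ)) μ := (hint_pow k).ofReal
    have h2 := (h0.const_mul (u ^ k)).div_const ((Nat.factorial k : ℂ))
    refine h2.congr ?_
    filter_upwards with ω
    rw [hfdef]
    push_cast
    ring
  have hnorm_eq : ∀ k, (∫ ω, ‖f k ω‖ ∂μ) = ‖u‖ ^ k * a k / (Nat.factorial k : ℝ) := by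
    intro k
    have : ∀ ω, ‖f k ω‖ = (‖u‖ ^ k / (Nat.factorial k : ℝ)) * |X ω| ^ k := by
      intro ω
      rw [hfdef]
      simp [norm_mul, norm_div, norm_pow, Complex.norm_real, Real.norm_eq_abs]
      ring
    simp_rw [this]
    rw [integral_const_mul, ← hak]
    ring
  have hsum_norm : Summable (fun k => ∫ ω, ‖f k ω‖ ∂μ) := by
    simp_rw [hnorm_eq]; exact hsum_b
  -- value of each integral
  have hfk_int_eq : ∀ k, ∫ ω, f k ω ∂μ = u ^ k * ((m k : ℝ) : ℂ) / (Nat.factorial k : ℂ) := by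
    intro k
    rw [hfdef]
    simp only
    rw [integral_div, integral_const_mul]
    congr 2
    rw [hmk]
    simp_rw [← Complex.ofReal_pow]
    exact integral_ofReal
  -- series representation of the mgf
  have hexp_tsum : ∀ z : ℂ, Complex.exp z = ∑' n : ℕ, z ^ n / (Nat.factorial n : ℂ) := by
    intro z
    rw [Complex.exp_eq_exp_ℂ, NormedSpace.exp_eq_tsum_div]
  have hrepr : (∫ ω, Complex.exp (u * (X ω : ℂ)) ∂μ)
      = ∑' k : ℕ, u ^ k * ((m k : ℝ) : ℂ) / (Nat.factorial k : ℂ) := by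
    have h1 := integral_tsum_of_summable_integral_norm hf_int hsum_norm
    have h2 : ∀ ω, (∑' k : ℕ, f k ω) = Complex.exp (u * (X ω : ℂ)) := by
      intro ω
      rw [hexp_tsum]
      exact tsum_congr fun n => by rw [hfdef]; simp only; rw [mul_pow]
    calc (∫ ω, Complex.exp (u * (X ω : ℂ)) ∂μ)
        = ∫ ω, (∑' k : ℕ, f k ω) ∂μ := by
          refine integral_congr_ae ?_
          filter_upwards with ω
          exact (h2 ω).symm
      _ = ∑' k : ℕ, ∫ ω, f k ω ∂μ := h1.symm
      _ = ∑' k : ℕ, u ^ k * ((m k : ℝ) : ℂ) / (Nat.factorial k : ℂ) := tsum_congr hfk_int_eq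
  -- summability of the coefficient series
  set g : ℕ → ℂ := fun k => u ^ k * ((m k : ℝ) : ℂ) / (Nat.factorial k : ℂ) with hgdef
  have hg_norm_le : ∀ k, ‖g k‖ ≤ ‖u‖ ^ k * a k / (Nat.factorial k : ℝ) := by
    intro k
    rw [hgdef]
    simp only
    rw [norm_div, norm_mul, norm_pow]
    have h1 : ‖((m k : ℝ) : ℂ)‖ = |m k| := by
      rw [Complex.norm_real, Real.norm_eq_abs]
    have h2 : ‖((Nat.factorial k : ℕ) : ℂ)‖ = (Nat.factorial k : ℝ) := by
      simp
    rw [h1, h2]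
    have hfac : (0:ℝ) < (Nat.factorial k : ℝ) := by exact_mod_cast Nat.factorial_pos _
    gcongr
    exact hm_le k
  have hg_norm_sum : Summable (fun k => ‖g k‖) :=
    Summable.of_nonneg_of_le (fun k => norm_nonneg _) hg_norm_le hsum_b
  have hg_sum : Summable g := hg_norm_sum.of_norm
  -- split off the first two terms
  have hsplit := Summable.sum_add_tsum_nat_add 2 hg_sum
  have hfirst : (∑ i ∈ Finset.range 2, g i) = 1 + u * ((m 1 : ℝ) : ℂ) := by
    rw [Finset.sum_range_succ, Finset.sum_range_one, hgdef]
    simp [hm0]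
  have htail_eq : (∫ ω, Complex.exp (u * (X ω : ℂ)) ∂μ) - 1 - u * ((m 1 : ℝ) : ℂ)
      = ∑' i : ℕ, g (i + 2) := by
    rw [hrepr, ← hsplit, hfirst]
    ring
  -- bound the tail
  have htail_norm_sum : Summable (fun i => ‖g (i + 2)‖) :=
    (summable_nat_add_iff 2).mpr hg_norm_sum
  have hgeo8 : Summable (fun i : ℕ => (D * a 2 * ‖u‖ ^ 2) * (1/8 : ℝ) ^ i) :=
    (summable_geometric_of_lt_one (by norm_num) (by norm_num)).mul_left _
  have htail_term : ∀ i : ℕ, ‖g (i + 2)‖ ≤ (D * a 2 * ‖u‖ ^ 2) * (1/8 : ℝ) ^ i := by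
    intro i
    have hfac : (0:ℝ) < (Nat.factorial (i+2) : ℝ) := by exact_mod_cast Nat.factorial_pos _
    have h1 : ‖g (i+2)‖ = ‖u‖ ^ (i+2) * |m (i+2)| / (Nat.factorial (i+2) : ℝ) := by
      rw [hgdef]
      simp only
      rw [norm_div, norm_mul, norm_pow, Complex.norm_real, Real.norm_eq_abs]
      congr 1
      simp
    rw [h1]
    calc ‖u‖ ^ (i+2) * |m (i+2)| / (Nat.factorial (i+2) : ℝ)
        ≤ ‖u‖ ^ (i+2) * (D * (Nat.factorial (i+2)) * M ^ i * a 2) / (Nat.factorial (i+2) : ℝ) := by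
          gcongr
          exact hmom i
      _ = (D * a 2 * ‖u‖ ^ 2) * (‖u‖ * M) ^ i := by
          rw [div_eq_iff (ne_of_gt hfac)]
          ring
      _ ≤ (D * a 2 * ‖u‖ ^ 2) * (1/8 : ℝ) ^ i := by
          have hc : (0:ℝ) ≤ D * a 2 * ‖u‖ ^ 2 := by
            have := ha_nonneg 2
            positivity
          exact mul_le_mul_of_nonneg_left (pow_le_pow_left₀ (by positivity) hum i) hc
  have htail_bound : ‖∑' i : ℕ, g (i + 2)‖ ≤ 2 * D * (‖u‖ ^ 2 * m 2) := by
    calc ‖∑' i : ℕ, g (i + 2)‖ ≤ ∑' i : ℕ, ‖g (i + 2)‖ := norm_tsum_le_tsum_norm htail_norm_sum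
      _ ≤ ∑' i : ℕ, (D * a 2 * ‖u‖ ^ 2) * (1/8 : ℝ) ^ i :=
          Summable.tsum_le_tsum htail_term htail_norm_sum hgeo8
      _ = (D * a 2 * ‖u‖ ^ 2) * (1 - 1/8)⁻¹ := by
          rw [tsum_mul_left, tsum_geometric_of_lt_one (by norm_num) (by norm_num)]
      _ ≤ 2 * D * (‖u‖ ^ 2 * m 2) := by
          rw [ha2m2]
          have h2 : (0:ℝ) ≤ m 2 := hm2_nonneg
          have h3 : (0:ℝ) ≤ ‖u‖ ^ 2 := by positivity
          nlinarith [mul_nonneg (mul_nonneg hD.le h2) h3]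
  -- bound on |u * m 1|
  have hum1 : ‖u * ((m 1 : ℝ) : ℂ)‖ ≤ D / 4 := by
    rw [norm_mul, Complex.norm_real, Real.norm_eq_abs]
    calc ‖u‖ * |m 1| ≤ ‖u‖ * (2 * D * M) := by
          gcongr
          exact (hm_le 1).trans ha1
      _ = 2 * D * (‖u‖ * M) := by ring
      _ ≤ 2 * D * (1/8) := by gcongr
      _ = D / 4 := by ring
  -- put everything together
  set w : ℂ := Complex.exp (-(v ^ 2 / 2)) with hwdef
  have hv2 : ‖v ^ 2 / 2‖ ≤ 1 / 8 := by
    rw [norm_div, norm_pow]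
    rw [RCLike.norm_ofNat]
    nlinarith [norm_nonneg v, hv]
  have hw_norm : ‖w‖ ≤ 3 := by
    rw [hwdef, Complex.norm_exp]
    have h1 : (-(v ^ 2 / 2)).re ≤ 1 := by
      calc (-(v ^ 2 / 2)).re ≤ ‖-(v ^ 2 / 2)‖ := Complex.re_le_norm _
        _ = ‖v ^ 2 / 2‖ := by rw [norm_neg]
        _ ≤ 1 := hv2.trans (by norm_num)
    have h2 : Real.exp (-(v ^ 2 / 2)).re ≤ Real.exp 1 := Real.exp_le_exp.mpr h1
    have h3 : Real.exp 1 ≤ 3 := (Real.exp_one_lt_d9.trans (by norm_num)).le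
    linarith
  have hw1_norm : ‖w - 1‖ ≤ ‖v‖ ^ 2 := by
    rw [hwdef]
    have habs : ‖-(v ^ 2 / 2)‖ ≤ 1 := by
      rw [norm_neg]
      exact hv2.trans (by norm_num)
    have := Complex.norm_exp_sub_one_le habs
    calc ‖Complex.exp (-(v ^ 2 / 2)) - 1‖ ≤ 2 * ‖-(v ^ 2 / 2)‖ := this
      _ = ‖v‖ ^ 2 := by
        rw [norm_neg, norm_div, norm_pow, RCLike.norm_ofNat]
        ring
  -- rewrite the LHS
  have hLHS : (∫ ω, Complex.exp (u * (X ω : ℂ) - v ^ 2 / 2) ∂μ)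
      = w * ∫ ω, Complex.exp (u * (X ω : ℂ)) ∂μ := by
    rw [hwdef, ← integral_const_mul]
    refine integral_congr_ae ?_
    filter_upwards with ω
    rw [← Complex.exp_add]
    congr 1
    ring
  have hgoal_m1 : (∫ ω, X ω ∂μ) = m 1 := by
    rw [hmk]; simp
  have hgoal_m2 : (∫ ω, (X ω) ^ 2 ∂μ) = m 2 := by rw [hmk]
  rw [hLHS, hgoal_m1, hgoal_m2]
  set A : ℂ := ∫ ω, Complex.exp (u * (X ω : ℂ)) ∂μ with hAdef
  have hE2 : ‖A - 1 - u * ((m 1 : ℝ) : ℂ)‖ ≤ 2 * D * (‖u‖ ^ 2 * m 2) := by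
    rw [hAdef, htail_eq]
    exact htail_bound
  have hdecomp : w * A - 1 - u * ((m 1 : ℝ) : ℂ)
      = w * (A - 1 - u * ((m 1 : ℝ) : ℂ)) + (w - 1) * (1 + u * ((m 1 : ℝ) : ℂ)) := by
    ring
  rw [hdecomp]
  have h1pm : ‖(1:ℂ) + u * ((m 1 : ℝ) : ℂ)‖ ≤ 1 + D / 4 := by
    calc ‖(1:ℂ) + u * ((m 1 : ℝ) : ℂ)‖ ≤ ‖(1:ℂ)‖ + ‖u * ((m 1 : ℝ) : ℂ)‖ := norm_add_le _ _
      _ ≤ 1 + D / 4 := by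
        rw [norm_one]
        linarith [hum1]
  calc ‖w * (A - 1 - u * ((m 1 : ℝ) : ℂ)) + (w - 1) * (1 + u * ((m 1 : ℝ) : ℂ))‖
      ≤ ‖w * (A - 1 - u * ((m 1 : ℝ) : ℂ))‖ + ‖(w - 1) * (1 + u * ((m 1 : ℝ) : ℂ))‖ :=
        norm_add_le _ _
    _ = ‖w‖ * ‖A - 1 - u * ((m 1 : ℝ) : ℂ)‖ + ‖w - 1‖ * ‖(1:ℂ) + u * ((m 1 : ℝ) : ℂ)‖ := by
        rw [norm_mul, norm_mul]
    _ ≤ 3 * (2 * D * (‖u‖ ^ 2 * m 2)) + ‖v‖ ^ 2 * (1 + D / 4) := by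
        have t1 : ‖w‖ * ‖A - 1 - u * ((m 1 : ℝ) : ℂ)‖ ≤ 3 * (2 * D * (‖u‖ ^ 2 * m 2)) :=
          mul_le_mul hw_norm hE2 (norm_nonneg _) (by norm_num)
        have t2 : ‖w - 1‖ * ‖(1:ℂ) + u * ((m 1 : ℝ) : ℂ)‖ ≤ ‖v‖ ^ 2 * (1 + D / 4) :=
          mul_le_mul hw1_norm h1pm (norm_nonneg _) (by positivity)
        linarith
    _ ≤ (7 * D + 1) * (‖u‖ ^ 2 * m 2 + ‖v‖ ^ 2) := by
        have h1 : (0:ℝ) ≤ ‖u‖ ^ 2 * m 2 := by positivity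
        have h2 : (0:ℝ) ≤ ‖v‖ ^ 2 := by positivity
        nlinarith [mul_nonneg hD.le h1, mul_nonneg hD.le h2]
end

section
/- Let X be a real random variable satisfying condition (bern1) with constants D, M > 0. Then there exists a positive constant C₃ depending only on D (and not on M) such that for every complex u with |u| ≤ 1/(8M) and every complex v with |v| ≤ 1/2, |E e^{uX − v²/2} − 1 − u E X + v²/2 − (u²/2) E X²| ≤ C₃ (|u|³ E|X|³ + |v|³). -/
open MeasureTheory Real
open scoped Nat ENNReal

lemma complex_exp_tsum (z : ℂ) : Complex.exp z = ∑' n : ℕ, z ^ n / (n ! : ℂ) := by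
  rw [Complex.exp_eq_exp_ℂ, NormedSpace.exp_eq_tsum_div]

lemma real_exp_tsum (x : ℝ) : Real.exp x = ∑' n : ℕ, x ^ n / (n ! : ℝ) := by
  rw [Real.exp_eq_exp_ℝ, NormedSpace.exp_eq_tsum_div]

lemma summable_norm_pow_div_factorial (x : ℝ) : Summable (fun n : ℕ => x ^ n / (n ! : ℝ)) :=
  Real.summable_pow_div_factorial x

lemma exp_tail_bound (z : ℂ) (n : ℕ) :
    ‖Complex.exp z - ∑ i ∈ Finset.range n, z ^ i / (i ! : ℂ)‖
      ≤ ‖z‖ ^ n * Real.exp ‖z‖ / (n ! : ℝ) := by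
  have hsum : Summable (fun k : ℕ => z ^ k / (k ! : ℂ)) := by
    apply Summable.of_norm
    simpa [norm_div, norm_pow] using Real.summable_pow_div_factorial ‖z‖
  have hsumn : Summable (fun k : ℕ => ‖z‖ ^ (k + n) / ((k + n)! : ℝ)) :=
    (summable_nat_add_iff n).2 (Real.summable_pow_div_factorial ‖z‖)
  have h1 : Complex.exp z - ∑ i ∈ Finset.range n, z ^ i / (i ! : ℂ)
      = ∑' k : ℕ, z ^ (k + n) / ((k + n)! : ℂ) := by
    rw [complex_exp_tsum, ← hsum.sum_add_tsum_nat_add n]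
    ring
  rw [h1]
  have h2 : ‖∑' k : ℕ, z ^ (k + n) / ((k + n)! : ℂ)‖
      ≤ ∑' k : ℕ, ‖z ^ (k + n) / ((k + n)! : ℂ)‖ := by
    apply norm_tsum_le_tsum_norm
    exact Summable.of_nonneg_of_le (fun k => norm_nonneg _)
      (fun k => le_of_eq (by simp [norm_div, norm_pow])) hsumn
  refine h2.trans ?_
  have h3 : ∀ k : ℕ, ‖z ^ (k + n) / ((k + n)! : ℂ)‖
      ≤ ‖z‖ ^ n / (n ! : ℝ) * (‖z‖ ^ k / (k ! : ℝ)) := by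
    intro k
    have hd : (n ! : ℝ) * (k ! : ℝ) ≤ ((k + n)! : ℝ) := by
      have := Nat.le_of_dvd (Nat.factorial_pos _)
        (Nat.factorial_mul_factorial_dvd_factorial_add n k)
      rw [Nat.add_comm n k] at this
      exact_mod_cast this
    have hz : ‖z ^ (k + n) / ((k + n)! : ℂ)‖ = ‖z‖ ^ (k + n) / ((k + n)! : ℝ) := by
      simp [norm_div, norm_pow]
    rw [hz]
    rw [div_mul_div_comm, pow_add, mul_comm (‖z‖ ^ n) (‖z‖ ^ k)]
    apply div_le_div_of_nonneg_left (by positivity) (by positivity)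
    · rw [mul_comm]; exact mul_comm (n ! : ℝ) (k ! : ℝ) ▸ hd
  calc ∑' k : ℕ, ‖z ^ (k + n) / ((k + n)! : ℂ)‖
      ≤ ∑' k : ℕ, ‖z‖ ^ n / (n ! : ℝ) * (‖z‖ ^ k / (k ! : ℝ)) := by
        apply Summable.tsum_le_tsum h3
        · exact Summable.of_nonneg_of_le (fun k => norm_nonneg _)
            (fun k => le_of_eq (by simp [norm_div, norm_pow])) hsumn
        · exact (Real.summable_pow_div_factorial ‖z‖).mul_left _
    _ = ‖z‖ ^ n / (n ! : ℝ) * Real.exp ‖z‖ := by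
        rw [tsum_mul_left, ← real_exp_tsum]
    _ = ‖z‖ ^ n * Real.exp ‖z‖ / (n ! : ℝ) := by ring

lemma exp_cubic (z : ℂ) :
    ‖Complex.exp z - 1 - z - z ^ 2 / 2‖ ≤ ‖z‖ ^ 3 * Real.exp ‖z‖ / 6 := by
  have h := exp_tail_bound z 3
  have e1 : ∑ i ∈ Finset.range 3, z ^ i / (i ! : ℂ) = 1 + z + z ^ 2 / 2 := by
    simp [Finset.sum_range_succ, Nat.factorial]
  have e2 : Complex.exp z - (1 + z + z ^ 2 / 2) = Complex.exp z - 1 - z - z ^ 2 / 2 := by ring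
  rw [e1, e2] at h
  simpa [Nat.factorial] using h

lemma exp_quad (z : ℂ) :
    ‖Complex.exp z - 1 - z‖ ≤ ‖z‖ ^ 2 * Real.exp ‖z‖ / 2 := by
  have h := exp_tail_bound z 2
  have e1 : ∑ i ∈ Finset.range 2, z ^ i / (i ! : ℂ) = 1 + z := by
    simp [Finset.sum_range_succ, Nat.factorial]
  have e2 : Complex.exp z - (1 + z) = Complex.exp z - 1 - z := by ring
  rw [e1, e2] at h
  simpa [Nat.factorial] using h

lemma exp_lin (z : ℂ) :
    ‖Complex.exp z - 1‖ ≤ ‖z‖ * Real.exp ‖z‖ := by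
  have h := exp_tail_bound z 1
  simpa [Finset.sum_range_succ, Nat.factorial] using h

lemma abs_pow_succ_le (x a : ℝ) (ha : 0 < a) (n : ℕ) :
    |x| ^ (n + 1) ≤ a * |x| ^ n + |x| ^ (n + 2) / a := by
  rcases le_total |x| a with h | h
  · have h1 : |x| ^ (n + 1) ≤ a * |x| ^ n := by
      rw [pow_succ]
      nlinarith [pow_nonneg (abs_nonneg x) n]
    have h2 : 0 ≤ |x| ^ (n + 2) / a := by positivity
    linarith
  · have h1 : |x| ^ (n + 1) ≤ |x| ^ (n + 2) / a := by
      rw [le_div_iff₀ ha]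
      have : |x| ^ (n + 2) = |x| ^ (n + 1) * |x| := by ring
      rw [this]
      have := pow_nonneg (abs_nonneg x) (n + 1)
      nlinarith
    have h2 : 0 ≤ a * |x| ^ n := by positivity
    linarith

variable {Ω : Type} [MeasurableSpace Ω] {μ : Measure Ω}

lemma moment_growth [IsProbabilityMeasure μ] (X : Ω → ℝ) (hX : Measurable X)
    (hInt : ∀ k : ℕ, Integrable (fun ω => |X ω| ^ k) μ)
    (D M : ℝ) (hD : 0 < D) (hM : 0 < M) (s : ℕ) (hs : Odd s)
    (hbern : ∀ k : ℕ, s ≤ k →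
      |∫ ω, X ω ^ k ∂μ| ≤ D * (Nat.factorial k) * M ^ (k - s) * ∫ ω, |X ω| ^ s ∂μ) :
    ∀ m : ℕ, s ≤ m →
      ∫ ω, |X ω| ^ m ∂μ ≤ (2 * D + 1) * ((m + 1)! : ℝ) * M ^ (m - s) * ∫ ω, |X ω| ^ s ∂μ := by
  have hIs : 0 ≤ ∫ ω, |X ω| ^ s ∂μ := integral_nonneg fun ω => by positivity
  have heven : ∀ m : ℕ, s ≤ m → Even m →
      ∫ ω, |X ω| ^ m ∂μ ≤ D * (m ! : ℝ) * M ^ (m - s) * ∫ ω, |X ω| ^ s ∂μ := by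
    intro m hm hme
    have h1 : ∫ ω, |X ω| ^ m ∂μ = ∫ ω, X ω ^ m ∂μ := by
      congr 1; funext ω; exact hme.pow_abs _
    have h2 : 0 ≤ ∫ ω, |X ω| ^ m ∂μ := integral_nonneg fun ω => by positivity
    calc ∫ ω, |X ω| ^ m ∂μ = |∫ ω, X ω ^ m ∂μ| := by rw [← h1, abs_of_nonneg h2]
      _ ≤ _ := hbern m hm
  intro m hm
  rcases eq_or_lt_of_le hm with rfl | hlt
  · have h1 : (1 : ℝ) ≤ (2 * D + 1) * ((s + 1)! : ℝ) := by
      have : (1 : ℝ) ≤ ((s + 1)! : ℝ) := by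
        exact_mod_cast Nat.one_le_iff_ne_zero.2 (Nat.factorial_ne_zero _)
      nlinarith
    rw [Nat.sub_self, pow_zero]
    nlinarith [integral_nonneg (μ := μ) (f := fun ω => |X ω| ^ s) (fun ω => by positivity : ∀ ω, 0 ≤ |X ω| ^ s)]
  · rcases Nat.even_or_odd m with hme | hmo
    · refine (heven m hm hme).trans ?_
      have h1 : (m ! : ℝ) ≤ ((m + 1)! : ℝ) := by exact_mod_cast Nat.factorial_le (Nat.le_succ m)
      have h2 : (0 : ℝ) ≤ (m ! : ℝ) := by positivity
      have h3 : (0 : ℝ) ≤ M ^ (m - s) := by positivity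
      have h4 : D * (m ! : ℝ) ≤ (2 * D + 1) * ((m + 1)! : ℝ) := by nlinarith
      calc D * (m ! : ℝ) * M ^ (m - s) * ∫ ω, |X ω| ^ s ∂μ
          = (D * (m ! : ℝ)) * (M ^ (m - s) * ∫ ω, |X ω| ^ s ∂μ) := by ring
        _ ≤ ((2 * D + 1) * ((m + 1)! : ℝ)) * (M ^ (m - s) * ∫ ω, |X ω| ^ s ∂μ) :=
            mul_le_mul_of_nonneg_right h4 (mul_nonneg h3 hIs)
        _ = _ := by ring
    · -- m odd, m > s; so m ≥ s + 2
      have hm2 : s + 2 ≤ m := by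
        rcases hs with ⟨i, hi⟩; rcases hmo with ⟨j, hj⟩; omega
      obtain ⟨n, rfl⟩ : ∃ n, m = n + 1 := ⟨m - 1, by omega⟩
      -- pointwise bound and integrate
      have hptw : ∀ ω, |X ω| ^ (n + 1) ≤ M * |X ω| ^ n + |X ω| ^ (n + 2) / M :=
        fun ω => abs_pow_succ_le (X ω) M hM n
      have hint : ∫ ω, |X ω| ^ (n + 1) ∂μ
          ≤ M * ∫ ω, |X ω| ^ n ∂μ + (∫ ω, |X ω| ^ (n + 2) ∂μ) / M := by
        have := integral_mono (hInt (n + 1))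
          (((hInt n).const_mul M).add ((hInt (n + 2)).div_const M)) hptw
        simpa [integral_add ((hInt n).const_mul M) ((hInt (n + 2)).div_const M),
          integral_const_mul, integral_div] using this
      have hbn : ∫ ω, |X ω| ^ n ∂μ ≤ D * (n ! : ℝ) * M ^ (n - s) * ∫ ω, |X ω| ^ s ∂μ :=
        heven n (by omega) (by rcases hmo with ⟨j, hj⟩; exact ⟨j, by omega⟩)
      have hbn2 : ∫ ω, |X ω| ^ (n + 2) ∂μ
          ≤ D * ((n + 2)! : ℝ) * M ^ (n + 2 - s) * ∫ ω, |X ω| ^ s ∂μ :=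
        heven (n + 2) (by omega) (by rcases hmo with ⟨j, hj⟩; exact ⟨j + 1, by omega⟩)
      -- exponent arithmetic
      have e1 : n - s + 1 = n + 1 - s := by omega
      have e2 : n + 2 - s = (n + 1 - s) + 1 := by omega
      have hfac1 : (n ! : ℝ) ≤ ((n + 2)! : ℝ) := by
        exact_mod_cast Nat.factorial_le (by omega)
      calc ∫ ω, |X ω| ^ (n + 1) ∂μ
          ≤ M * (D * (n ! : ℝ) * M ^ (n - s) * ∫ ω, |X ω| ^ s ∂μ)
            + (D * ((n + 2)! : ℝ) * M ^ (n + 2 - s) * ∫ ω, |X ω| ^ s ∂μ) / M := by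
            refine hint.trans ?_
            gcongr
        _ = D * (n ! : ℝ) * M ^ (n + 1 - s) * ∫ ω, |X ω| ^ s ∂μ
            + D * ((n + 2)! : ℝ) * M ^ (n + 1 - s) * ∫ ω, |X ω| ^ s ∂μ := by
            have q1 : M * (D * (n ! : ℝ) * M ^ (n - s) * ∫ ω, |X ω| ^ s ∂μ)
                = D * (n ! : ℝ) * M ^ (n + 1 - s) * ∫ ω, |X ω| ^ s ∂μ := by
              rw [← e1, pow_succ]; ring
            have q2 : (D * ((n + 2)! : ℝ) * M ^ (n + 2 - s) * ∫ ω, |X ω| ^ s ∂μ) / M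
                = D * ((n + 2)! : ℝ) * M ^ (n + 1 - s) * ∫ ω, |X ω| ^ s ∂μ := by
              rw [e2, pow_succ]
              field_simp
            rw [q1, q2]
        _ ≤ (2 * D + 1) * ((n + 1 + 1)! : ℝ) * M ^ (n + 1 - s) * ∫ ω, |X ω| ^ s ∂μ := by
            have h3 : (0 : ℝ) ≤ M ^ (n + 1 - s) := by positivity
            have hq : (0 : ℝ) ≤ M ^ (n + 1 - s) * ∫ ω, |X ω| ^ s ∂μ := mul_nonneg h3 hIs
            have : (n + 1 + 1)! = (n + 2)! := by norm_num
            rw [this]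
            nlinarith [mul_le_mul_of_nonneg_right hfac1 hq,
              mul_nonneg (mul_nonneg hD.le (by positivity : (0:ℝ) ≤ ((n+2)! : ℝ))) hq]

lemma choose_le_two_pow' (n r : ℕ) : n.choose r ≤ 2 ^ n := by
  rcases le_or_gt r n with h | h
  · calc n.choose r ≤ ∑ i ∈ Finset.range (n + 1), n.choose i :=
        Finset.single_le_sum (fun i _ => Nat.zero_le _) (Finset.mem_range.2 (by omega))
      _ = 2 ^ n := Nat.sum_range_choose n
  · rw [Nat.choose_eq_zero_of_lt h]; exact Nat.zero_le _

lemma fact_ratio_bound (s k : ℕ) :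
    (((k + s + 1)! : ℝ)) ≤ ((s + 1)! : ℝ) * 2 ^ (k + s + 1) * (k ! : ℝ) := by
  have h : s + 1 ≤ k + s + 1 := by omega
  have h1 : (k + s + 1).choose (s + 1) * (s + 1)! * (k + s + 1 - (s + 1))! = (k + s + 1)! :=
    Nat.choose_mul_factorial_mul_factorial h
  have h2 : k + s + 1 - (s + 1) = k := by omega
  rw [h2] at h1
  have h3 : (k + s + 1).choose (s + 1) ≤ 2 ^ (k + s + 1) := choose_le_two_pow' _ _
  have : (k + s + 1)! ≤ 2 ^ (k + s + 1) * (s + 1)! * k ! := by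
    rw [← h1]
    exact Nat.mul_le_mul_right _ (Nat.mul_le_mul_right _ h3)
  calc ((k + s + 1)! : ℝ) ≤ ((2 ^ (k + s + 1) * (s + 1)! * k ! : ℕ) : ℝ) := by exact_mod_cast this
    _ = ((s + 1)! : ℝ) * 2 ^ (k + s + 1) * (k ! : ℝ) := by push_cast; ring

variable {Ω : Type} [MeasurableSpace Ω] {μ : Measure Ω}

lemma exp_moment [IsProbabilityMeasure μ] (X : Ω → ℝ) (hX : Measurable X)
    (hInt : ∀ k : ℕ, Integrable (fun ω => |X ω| ^ k) μ)
    (D M t : ℝ) (hD : 0 < D) (hM : 0 < M) (ht : 0 ≤ t) (htM : t * M ≤ 1 / 8)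
    (s : ℕ) (hs3 : s ≤ 3)
    (hmom : ∀ m : ℕ, s ≤ m →
      ∫ ω, |X ω| ^ m ∂μ ≤ (2 * D + 1) * ((m + 1)! : ℝ) * M ^ (m - s) * ∫ ω, |X ω| ^ s ∂μ) :
    Integrable (fun ω => |X ω| ^ s * Real.exp (t * |X ω|)) μ ∧
      ∫ ω, |X ω| ^ s * Real.exp (t * |X ω|) ∂μ
        ≤ 512 * (2 * D + 1) * ∫ ω, |X ω| ^ s ∂μ := by
  have hIs : 0 ≤ ∫ ω, |X ω| ^ s ∂μ := integral_nonneg fun ω => by positivity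
  have hK : (0 : ℝ) < 2 * D + 1 := by linarith
  set Is := ∫ ω, |X ω| ^ s ∂μ with hIsdef
  -- pointwise series
  have hpt : ∀ x : ℝ, HasSum (fun k : ℕ => t ^ k / (k ! : ℝ) * |x| ^ (k + s))
      (|x| ^ s * Real.exp (t * |x|)) := by
    intro x
    have h0 : HasSum (fun k : ℕ => (t * |x|) ^ k / (k ! : ℝ)) (Real.exp (t * |x|)) := by
      rw [real_exp_tsum]
      exact (Real.summable_pow_div_factorial _).hasSum
    have h1 := h0.mul_left (|x| ^ s)
    have h2 : (fun k : ℕ => |x| ^ s * ((t * |x|) ^ k / (k ! : ℝ)))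
        = fun k : ℕ => t ^ k / (k ! : ℝ) * |x| ^ (k + s) := by
      funext k; rw [mul_pow, pow_add]; ring
    rwa [h2] at h1
  have hnn : ∀ (k : ℕ) (x : ℝ), 0 ≤ t ^ k / (k ! : ℝ) * |x| ^ (k + s) := by
    intro k x
    have : (0:ℝ) ≤ t ^ k := pow_nonneg ht k
    positivity
  have hfmeas : Measurable (fun ω => |X ω| ^ s * Real.exp (t * |X ω|)) :=
    (hX.abs.pow_const s).mul (Real.measurable_exp.comp (hX.abs.const_mul t))
  have hfnn : ∀ ω, (0:ℝ) ≤ |X ω| ^ s * Real.exp (t * |X ω|) := fun ω => by positivity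
  -- lintegral expansion
  have hlin : (∫⁻ ω, ENNReal.ofReal (|X ω| ^ s * Real.exp (t * |X ω|)) ∂μ)
      = ∑' k : ℕ, ∫⁻ ω, ENNReal.ofReal (t ^ k / (k ! : ℝ) * |X ω| ^ (k + s)) ∂μ := by
    rw [← lintegral_tsum fun k =>
      (((hX.abs.pow_const (k + s)).const_mul (t ^ k / (k ! : ℝ))).ennreal_ofReal).aemeasurable]
    apply lintegral_congr
    intro ω
    rw [← (hpt (X ω)).tsum_eq,
      ENNReal.ofReal_tsum_of_nonneg (fun k => hnn k (X ω)) (hpt (X ω)).summable]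
  have hterm : ∀ k : ℕ, ∫⁻ ω, ENNReal.ofReal (t ^ k / (k ! : ℝ) * |X ω| ^ (k + s)) ∂μ
      = ENNReal.ofReal (t ^ k / (k ! : ℝ) * ∫ ω, |X ω| ^ (k + s) ∂μ) := by
    intro k
    rw [← ofReal_integral_eq_lintegral_ofReal ((hInt (k + s)).const_mul _)
      (Filter.Eventually.of_forall fun ω => hnn k (X ω)), integral_const_mul]
  -- per-term real bound
  have hbd : ∀ k : ℕ, t ^ k / (k ! : ℝ) * ∫ ω, |X ω| ^ (k + s) ∂μ
      ≤ 384 * (2 * D + 1) * Is * (1 / 4 : ℝ) ^ k := by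
    intro k
    have hkfac : (0 : ℝ) < (k ! : ℝ) := by exact_mod_cast Nat.factorial_pos k
    have h1 : ∫ ω, |X ω| ^ (k + s) ∂μ ≤ (2 * D + 1) * ((k + s + 1)! : ℝ) * M ^ k * Is := by
      have := hmom (k + s) (by omega)
      simpa [Nat.add_sub_cancel] using this
    have h2 : (0:ℝ) ≤ t ^ k / (k ! : ℝ) := by
      have : (0:ℝ) ≤ t ^ k := pow_nonneg ht k
      positivity
    have e3 : t ^ k / (k ! : ℝ) * ((2 * D + 1) * ((k + s + 1)! : ℝ) * M ^ k * Is)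
        = (2 * D + 1) * Is * (((k + s + 1)! : ℝ) / (k ! : ℝ)) * (t * M) ^ k := by
      rw [mul_pow]; field_simp
    have h4 : ((k + s + 1)! : ℝ) / (k ! : ℝ) ≤ 384 * 2 ^ k := by
      rw [div_le_iff₀ hkfac]
      calc ((k + s + 1)! : ℝ) ≤ ((s + 1)! : ℝ) * 2 ^ (k + s + 1) * (k ! : ℝ) :=
            fact_ratio_bound s k
        _ ≤ 24 * (16 * 2 ^ k) * (k ! : ℝ) := by
            have ha : ((s + 1)! : ℝ) ≤ 24 := by
              have h5 : (s + 1)! ≤ 24 := by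
                calc (s + 1)! ≤ (4)! := Nat.factorial_le (by omega)
                  _ = 24 := by decide
              exact_mod_cast h5
            have hb : (2:ℝ) ^ (k + s + 1) ≤ 16 * 2 ^ k := by
              have e : k + s + 1 = k + (s + 1) := by omega
              rw [e, pow_add]
              have h6 : (2:ℝ) ^ (s + 1) ≤ 16 := by
                calc (2:ℝ) ^ (s + 1) ≤ 2 ^ 4 := by
                      apply pow_le_pow_right₀ (by norm_num) (by omega)
                  _ = 16 := by norm_num
              nlinarith [pow_pos (by norm_num : (0:ℝ) < 2) k]
            have hc : (0:ℝ) ≤ 2 ^ (k + s + 1) := by positivity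
            have hd : (0:ℝ) ≤ ((s+1)! : ℝ) := by positivity
            exact mul_le_mul_of_nonneg_right
              (mul_le_mul ha hb hc (by norm_num)) hkfac.le
        _ = 384 * 2 ^ k * (k ! : ℝ) := by ring
    have hq : (t * M) ^ k ≤ (1 / 8 : ℝ) ^ k :=
      pow_le_pow_left₀ (mul_nonneg ht hM.le) htM k
    calc t ^ k / (k ! : ℝ) * ∫ ω, |X ω| ^ (k + s) ∂μ
        ≤ t ^ k / (k ! : ℝ) * ((2 * D + 1) * ((k + s + 1)! : ℝ) * M ^ k * Is) :=
          mul_le_mul_of_nonneg_left h1 h2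
      _ = (2 * D + 1) * Is * (((k + s + 1)! : ℝ) / (k ! : ℝ)) * (t * M) ^ k := e3
      _ ≤ (2 * D + 1) * Is * (384 * 2 ^ k) * (1 / 8) ^ k := by
          apply mul_le_mul (mul_le_mul_of_nonneg_left h4 (mul_nonneg hK.le hIs)) hq
            (pow_nonneg (mul_nonneg ht hM.le) k)
          positivity
      _ = 384 * (2 * D + 1) * Is * (1 / 4) ^ k := by
          rw [show ((1:ℝ)/4) = 2 * (1/8) by norm_num, mul_pow]; ring
  -- tsum bound
  have hBnn : (0:ℝ) ≤ 384 * (2 * D + 1) * Is := by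
    apply mul_nonneg _ hIs; nlinarith
  have hsum_bound : (∑' k : ℕ, ENNReal.ofReal (t ^ k / (k ! : ℝ) * ∫ ω, |X ω| ^ (k + s) ∂μ))
      ≤ ENNReal.ofReal (512 * (2 * D + 1) * Is) := by
    calc (∑' k : ℕ, ENNReal.ofReal (t ^ k / (k ! : ℝ) * ∫ ω, |X ω| ^ (k + s) ∂μ))
        ≤ ∑' k : ℕ, ENNReal.ofReal (384 * (2 * D + 1) * Is * (1 / 4 : ℝ) ^ k) :=
          ENNReal.tsum_le_tsum fun k => ENNReal.ofReal_le_ofReal (hbd k)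
      _ = ENNReal.ofReal (384 * (2 * D + 1) * Is) * ∑' k : ℕ, (ENNReal.ofReal (1/4 : ℝ)) ^ k := by
          simp_rw [ENNReal.ofReal_mul hBnn, ENNReal.ofReal_pow (by norm_num : (0:ℝ) ≤ 1/4)]
          rw [ENNReal.tsum_mul_left]
      _ ≤ ENNReal.ofReal (384 * (2 * D + 1) * Is) * ENNReal.ofReal (4/3) := by
          apply mul_le_mul_right
          rw [ENNReal.tsum_geometric]
          have e1 : (1:ℝ≥0∞) - ENNReal.ofReal (1/4) = ENNReal.ofReal (3/4) := by
            rw [← ENNReal.ofReal_one, ← ENNReal.ofReal_sub _ (by norm_num : (0:ℝ) ≤ 1/4)]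
            norm_num
          rw [e1, ← ENNReal.ofReal_inv_of_pos (by norm_num : (0:ℝ) < 3/4)]
          norm_num
      _ = ENNReal.ofReal (512 * (2 * D + 1) * Is) := by
          rw [← ENNReal.ofReal_mul hBnn]
          congr 1
          ring
  have hlbound : ∫⁻ ω, ENNReal.ofReal (|X ω| ^ s * Real.exp (t * |X ω|)) ∂μ
      ≤ ENNReal.ofReal (512 * (2 * D + 1) * Is) := by
    rw [hlin]
    simp_rw [hterm]
    exact hsum_bound
  have hintg : Integrable (fun ω => |X ω| ^ s * Real.exp (t * |X ω|)) μ := by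
    refine ⟨hfmeas.aestronglyMeasurable, ?_⟩
    rw [hasFiniteIntegral_iff_ofReal (Filter.Eventually.of_forall hfnn)]
    exact lt_of_le_of_lt hlbound ENNReal.ofReal_lt_top
  refine ⟨hintg, ?_⟩
  rw [integral_eq_lintegral_of_nonneg_ae (Filter.Eventually.of_forall hfnn)
    hfmeas.aestronglyMeasurable]
  calc (∫⁻ ω, ENNReal.ofReal (|X ω| ^ s * Real.exp (t * |X ω|)) ∂μ).toReal
      ≤ (ENNReal.ofReal (512 * (2 * D + 1) * Is)).toReal :=
        ENNReal.toReal_mono ENNReal.ofReal_ne_top hlbound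
    _ = 512 * (2 * D + 1) * Is := ENNReal.toReal_ofReal (by nlinarith)

lemma jensen_cube [IsProbabilityMeasure μ] (X : Ω → ℝ)
    (h1 : Integrable (fun ω => |X ω|) μ) (h3 : Integrable (fun ω => |X ω| ^ 3) μ) :
    (∫ ω, |X ω| ∂μ) ^ 3 ≤ ∫ ω, |X ω| ^ 3 ∂μ := by
  have hconv : ConvexOn ℝ (Set.Ici 0) (fun x : ℝ => x ^ 3) := convexOn_pow 3
  have h := hconv.map_average_le ((continuous_pow 3).continuousOn) isClosed_Ici
    (Filter.Eventually.of_forall fun ω => Set.mem_Ici.2 (abs_nonneg (X ω))) h1 h3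
  simpa [average_eq_integral] using h


lemma amgm3 (a b : ℝ) (ha : 0 ≤ a) (hb : 0 ≤ b) : a ^ 2 * b ≤ (2 * a ^ 3 + b ^ 3) / 3 := by
  nlinarith [mul_nonneg (sq_nonneg (a - b)) (by linarith : (0:ℝ) ≤ 2 * a + b)]

lemma bw2_arith (w c E : ℝ) (hw : w = c ^ 2 / 2) (hc : 0 ≤ c) (hc2 : c ≤ 1 / 2)
    (hE : 0 < E) (hE3 : E ≤ 3) : w ^ 2 * E / 2 ≤ c ^ 3 := by
  subst hw
  nlinarith [pow_nonneg hc 3, pow_nonneg hc 4]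

lemma final_arith (K x y n1 n2 n3 : ℝ) (hK : 0 < K) (hx : 0 ≤ x) (hy : 0 ≤ y)
    (h1 : n1 ≤ 512 * K / 6 * x) (h2 : n2 ≤ 512 * K * y + 256 * K * x) (h3 : n3 ≤ y) :
    n1 + n2 + n3 ≤ (512 * K + 1) * (x + y) := by
  nlinarith [mul_nonneg hK.le hx, mul_nonneg hK.le hy]

/-- Lemma 1, third inequality: if a real random variable `X` satisfies the Bernstein-type
condition (bern1) with constants `D, M > 0`, then there is a constant `C₃ > 0` depending
only on `D` (not on `M`) such that for all complex `u, v` with `|u| ≤ 1/(8M)`, `|v| ≤ 1/2`,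
`|E e^{uX − v²/2} − 1 − u E X + v²/2 − (u²/2) E X²| ≤ C₃ (|u|³ E|X|³ + |v|³)`. -/
theorem mgf_expansion_third_order (D : ℝ) (hD : 0 < D) :
    ∃ C₃ > (0 : ℝ),
      ∀ (Ω : Type) (_ : MeasurableSpace Ω) (μ : Measure Ω), IsProbabilityMeasure μ →
      ∀ (X : Ω → ℝ), Measurable X →
      (∀ k : ℕ, Integrable (fun ω => |X ω| ^ k) μ) →
      ∀ (M : ℝ), 0 < M →
      (∀ s ∈ ({1, 2, 3} : Set ℕ), ∀ k : ℕ, s ≤ k →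
        |∫ ω, X ω ^ k ∂μ| ≤ D * (Nat.factorial k) * M ^ (k - s) * ∫ ω, |X ω| ^ s ∂μ) →
      ∀ (u v : ℂ), ‖u‖ ≤ 1 / (8 * M) → ‖v‖ ≤ 1 / 2 →
        ‖(∫ ω, Complex.exp (u * (X ω : ℂ) - v ^ 2 / 2) ∂μ) - 1 - u * (∫ ω, X ω ∂μ : ℝ)
            + v ^ 2 / 2 - u ^ 2 / 2 * (∫ ω, (X ω) ^ 2 ∂μ : ℝ)‖
          ≤ C₃ * (‖u‖ ^ 3 * ∫ ω, |X ω| ^ 3 ∂μ + ‖v‖ ^ 3) := by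
  refine ⟨512 * (2 * D + 1) + 1, by nlinarith, ?_⟩
  intro Ω mΩ μ hprob X hX hInt M hM hbern u v hu hv
  haveI := hprob
  have hK : (0 : ℝ) < 2 * D + 1 := by linarith
  set t := ‖u‖ with htdef
  have ht : 0 ≤ t := norm_nonneg u
  have htM : t * M ≤ 1 / 8 := by
    rw [le_div_iff₀ (by linarith : (0 : ℝ) < 8 * M)] at hu
    linarith
  -- moment bounds
  have hmom1 := moment_growth X hX hInt D M hD hM 1 odd_one
    (fun k hk => hbern 1 (by norm_num) k hk)
  have hmom3 := moment_growth X hX hInt D M hD hM 3 (by decide)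
    (fun k hk => hbern 3 (by norm_num) k hk)
  obtain ⟨hI1e, hB1⟩ := exp_moment X hX hInt D M t hD hM ht htM 1 (by norm_num) hmom1
  obtain ⟨hI3e, hB3⟩ := exp_moment X hX hInt D M t hD hM ht htM 3 (by norm_num) hmom3
  set I1 := ∫ ω, |X ω| ^ 1 ∂μ with hI1def
  set I3 := ∫ ω, |X ω| ^ 3 ∂μ with hI3def
  have hI1 : 0 ≤ I1 := integral_nonneg fun ω => by positivity
  have hI3 : 0 ≤ I3 := integral_nonneg fun ω => by positivity
  -- Jensen
  have hjen : I1 ^ 3 ≤ I3 := by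
    have h1 : Integrable (fun ω => |X ω|) μ := by simpa using hInt 1
    have h := jensen_cube X h1 (hInt 3)
    have e : (∫ ω, |X ω| ∂μ) = I1 := by rw [hI1def]; simp
    rwa [e] at h
  -- integrability of exp factors
  have hexp_le : ∀ y : ℝ, 0 ≤ y → Real.exp y ≤ 1 + y * Real.exp y := by
    intro y hy
    have h1 := Real.add_one_le_exp (-y)
    have h2 := Real.exp_pos y
    rw [Real.exp_neg] at h1
    have h4 : (Real.exp y)⁻¹ * Real.exp y = 1 := inv_mul_cancel₀ (ne_of_gt h2)
    nlinarith
  have hg0meas : Measurable fun ω => Real.exp (t * |X ω|) :=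
    Real.measurable_exp.comp (hX.abs.const_mul t)
  have hg0 : Integrable (fun ω => Real.exp (t * |X ω|)) μ := by
    have hgint : Integrable (fun ω => 1 + t * (|X ω| ^ 1 * Real.exp (t * |X ω|))) μ :=
      (integrable_const 1).add (hI1e.const_mul t)
    refine hgint.mono' hg0meas.aestronglyMeasurable ?_
    filter_upwards with ω
    rw [Real.norm_eq_abs, abs_of_nonneg (Real.exp_pos _).le]
    have h := hexp_le (t * |X ω|) (by positivity)
    have e : 1 + t * |X ω| * Real.exp (t * |X ω|)
        = 1 + t * (|X ω| ^ 1 * Real.exp (t * |X ω|)) := by ring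
    linarith [e ▸ h]
  have hXabs : Integrable (fun ω => |X ω|) μ := by simpa using hInt 1
  have hXint : Integrable X μ :=
    hXabs.mono' hX.aestronglyMeasurable
      (Filter.Eventually.of_forall fun ω => le_of_eq (Real.norm_eq_abs _))
  have hXc : Integrable (fun ω => (X ω : ℂ)) μ := hXint.ofReal
  have hX2int : Integrable (fun ω => X ω ^ 2) μ := by
    have h := hInt 2
    have e : (fun ω => |X ω| ^ 2) = fun ω => X ω ^ 2 := by
      funext ω; exact sq_abs _
    rwa [e] at h
  have hX2c : Integrable (fun ω => (X ω : ℂ) ^ 2) μ := by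
    have h := hX2int.ofReal (𝕜 := ℂ)
    simpa [Complex.ofReal_pow] using h
  have hexpc_meas : AEStronglyMeasurable (fun ω => Complex.exp (u * (X ω : ℂ))) μ :=
    (Complex.measurable_exp.comp ((Complex.measurable_ofReal.comp hX).const_mul u)).aestronglyMeasurable
  have hnormz : ∀ ω, ‖u * (X ω : ℂ)‖ = t * |X ω| := by
    intro ω; rw [norm_mul, Complex.norm_real, Real.norm_eq_abs]
  have hexpc : Integrable (fun ω => Complex.exp (u * (X ω : ℂ))) μ := by
    refine hg0.mono' hexpc_meas ?_
    filter_upwards with ω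
    rw [Complex.norm_exp]
    apply Real.exp_le_exp.2
    calc (u * (X ω : ℂ)).re ≤ ‖u * (X ω : ℂ)‖ := Complex.re_le_norm _
      _ = ‖u * (X ω : ℂ)‖ := rfl
      _ = t * |X ω| := hnormz ω
  have intE1 : Integrable (fun ω => Complex.exp (u * (X ω : ℂ)) - 1) μ :=
    hexpc.sub (integrable_const 1)
  have intE2 : Integrable (fun ω => Complex.exp (u * (X ω : ℂ)) - 1 - u * (X ω : ℂ)) μ :=
    intE1.sub (hXc.const_mul u)
  have intQ : Integrable (fun ω => u ^ 2 * (X ω : ℂ) ^ 2 / 2) μ :=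
    (hX2c.const_mul (u ^ 2)).div_const 2
  have hmain : Integrable
      (fun ω => Complex.exp (u * (X ω : ℂ)) - 1 - u * (X ω : ℂ) - u ^ 2 * (X ω : ℂ) ^ 2 / 2) μ :=
    intE2.sub intQ
  set A := ∫ ω, Complex.exp (u * (X ω : ℂ)) ∂μ with hAdef
  set EX := ∫ ω, X ω ∂μ with hEXdef
  set EX2 := ∫ ω, X ω ^ 2 ∂μ with hEX2def
  have i1 : ∫ _ω, (1 : ℂ) ∂μ = 1 := by simp
  have iX : ∫ ω, u * (X ω : ℂ) ∂μ = u * (EX : ℂ) := by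
    rw [integral_const_mul]
    congr 1
    exact integral_ofReal
  have iX2c : ∫ ω, (X ω : ℂ) ^ 2 ∂μ = ((EX2 : ℝ) : ℂ) := by
    rw [show (fun ω => (X ω : ℂ) ^ 2) = fun ω => ((X ω ^ 2 : ℝ) : ℂ) from
      funext fun ω => by push_cast; ring]
    exact integral_ofReal
  have iX2 : ∫ ω, u ^ 2 * (X ω : ℂ) ^ 2 / 2 ∂μ = u ^ 2 / 2 * (EX2 : ℂ) := by
    rw [integral_div, integral_const_mul, iX2c]; ring
  have hS1val : ∫ ω, (Complex.exp (u * (X ω : ℂ)) - 1 - u * (X ω : ℂ)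
        - u ^ 2 * (X ω : ℂ) ^ 2 / 2) ∂μ
      = A - 1 - u * (EX : ℂ) - u ^ 2 / 2 * (EX2 : ℂ) := by
    rw [integral_sub intE2 intQ, integral_sub intE1 (hXc.const_mul u),
      integral_sub hexpc (integrable_const 1), i1, iX, iX2]
  have hA1val : ∫ ω, (Complex.exp (u * (X ω : ℂ)) - 1) ∂μ = A - 1 := by
    rw [integral_sub hexpc (integrable_const 1), i1]
  -- factor out exp(-v^2/2)
  set w0 : ℂ := -(v ^ 2 / 2) with hw0def
  have hfactor : ∫ ω, Complex.exp (u * (X ω : ℂ) - v ^ 2 / 2) ∂μ = Complex.exp w0 * A := by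
    rw [show (fun ω => Complex.exp (u * (X ω : ℂ) - v ^ 2 / 2))
        = fun ω => Complex.exp w0 * Complex.exp (u * (X ω : ℂ)) from
      funext fun ω => by rw [← Complex.exp_add]; congr 1; rw [hw0def]; ring]
    rw [integral_const_mul]
  have hw0norm : ‖w0‖ = ‖v‖ ^ 2 / 2 := by
    rw [hw0def]
    rw [norm_neg, norm_div, norm_pow]
    norm_num
  have hw0small : ‖w0‖ ≤ 1 / 8 := by
    rw [hw0norm]; nlinarith [norm_nonneg v]
  have hexp3 : Real.exp ‖w0‖ ≤ 3 := by
    calc Real.exp ‖w0‖ ≤ Real.exp 1 := Real.exp_le_exp.2 (by linarith)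
      _ ≤ 3 := by linarith [Real.exp_one_lt_d9]
  -- bound on ‖A - 1‖
  have hB_A1 : ‖A - 1‖ ≤ t * (512 * (2 * D + 1) * I1) := by
    rw [← hA1val]
    calc ‖∫ ω, (Complex.exp (u * (X ω : ℂ)) - 1) ∂μ‖
        ≤ ∫ ω, ‖Complex.exp (u * (X ω : ℂ)) - 1‖ ∂μ := norm_integral_le_integral_norm _
      _ ≤ ∫ ω, t * (|X ω| ^ 1 * Real.exp (t * |X ω|)) ∂μ := by
          apply integral_mono intE1.norm (hI1e.const_mul t)
          intro ω
          show ‖Complex.exp (u * (X ω : ℂ)) - 1‖ ≤ t * (|X ω| ^ 1 * Real.exp (t * |X ω|))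
          have h := exp_lin (u * (X ω : ℂ))
          rw [hnormz ω] at h
          calc ‖Complex.exp (u * (X ω : ℂ)) - 1‖ ≤ t * |X ω| * Real.exp (t * |X ω|) := h
            _ = t * (|X ω| ^ 1 * Real.exp (t * |X ω|)) := by ring
      _ = t * ∫ ω, |X ω| ^ 1 * Real.exp (t * |X ω|) ∂μ := integral_const_mul t _
      _ ≤ t * (512 * (2 * D + 1) * I1) := mul_le_mul_of_nonneg_left hB1 ht
  -- bound on S1
  have hBS1 : ‖A - 1 - u * (EX : ℂ) - u ^ 2 / 2 * (EX2 : ℂ)‖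
      ≤ t ^ 3 / 6 * (512 * (2 * D + 1) * I3) := by
    rw [← hS1val]
    calc ‖∫ ω, (Complex.exp (u * (X ω : ℂ)) - 1 - u * (X ω : ℂ)
          - u ^ 2 * (X ω : ℂ) ^ 2 / 2) ∂μ‖
        ≤ ∫ ω, ‖Complex.exp (u * (X ω : ℂ)) - 1 - u * (X ω : ℂ)
            - u ^ 2 * (X ω : ℂ) ^ 2 / 2‖ ∂μ := norm_integral_le_integral_norm _
      _ ≤ ∫ ω, t ^ 3 / 6 * (|X ω| ^ 3 * Real.exp (t * |X ω|)) ∂μ := by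
          apply integral_mono hmain.norm (hI3e.const_mul _)
          intro ω
          show ‖Complex.exp (u * (X ω : ℂ)) - 1 - u * (X ω : ℂ) - u ^ 2 * (X ω : ℂ) ^ 2 / 2‖
            ≤ t ^ 3 / 6 * (|X ω| ^ 3 * Real.exp (t * |X ω|))
          have h := exp_cubic (u * (X ω : ℂ))
          rw [hnormz ω] at h
          have e : Complex.exp (u * (X ω : ℂ)) - 1 - u * (X ω : ℂ)
              - u ^ 2 * (X ω : ℂ) ^ 2 / 2
              = Complex.exp (u * (X ω : ℂ)) - 1 - u * (X ω : ℂ)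
              - (u * (X ω : ℂ)) ^ 2 / 2 := by ring
          rw [e]
          calc ‖Complex.exp (u * (X ω : ℂ)) - 1 - u * (X ω : ℂ) - (u * (X ω : ℂ)) ^ 2 / 2‖
              ≤ (t * |X ω|) ^ 3 * Real.exp (t * |X ω|) / 6 := h
            _ = t ^ 3 / 6 * (|X ω| ^ 3 * Real.exp (t * |X ω|)) := by ring
      _ = t ^ 3 / 6 * ∫ ω, |X ω| ^ 3 * Real.exp (t * |X ω|) ∂μ := integral_const_mul _ _
      _ ≤ t ^ 3 / 6 * (512 * (2 * D + 1) * I3) :=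
          mul_le_mul_of_nonneg_left hB3 (by positivity)
  -- bounds on the w0 parts
  have hBw1 : ‖Complex.exp w0 - 1‖ ≤ 3 / 2 * ‖v‖ ^ 2 := by
    calc ‖Complex.exp w0 - 1‖ ≤ ‖w0‖ * Real.exp ‖w0‖ := exp_lin w0
      _ ≤ ‖w0‖ * 3 := mul_le_mul_of_nonneg_left hexp3 (norm_nonneg _)
      _ = 3 / 2 * ‖v‖ ^ 2 := by rw [hw0norm]; ring
  have hBw2 : ‖Complex.exp w0 - 1 - w0‖ ≤ ‖v‖ ^ 3 := by
    refine (exp_quad w0).trans ?_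
    exact bw2_arith ‖w0‖ ‖v‖ (Real.exp ‖w0‖) hw0norm (norm_nonneg v) hv
      (Real.exp_pos _) hexp3
  -- decomposition
  rw [hfactor]
  have hsplit : Complex.exp w0 * A - 1 - u * (EX : ℂ) + v ^ 2 / 2 - u ^ 2 / 2 * (EX2 : ℂ)
      = (A - 1 - u * (EX : ℂ) - u ^ 2 / 2 * (EX2 : ℂ))
        + (Complex.exp w0 - 1) * (A - 1) + (Complex.exp w0 - 1 - w0) := by
    rw [hw0def]; ring
  rw [hsplit]
  have htri : ‖(A - 1 - u * (EX : ℂ) - u ^ 2 / 2 * (EX2 : ℂ))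
        + (Complex.exp w0 - 1) * (A - 1) + (Complex.exp w0 - 1 - w0)‖
      ≤ ‖A - 1 - u * (EX : ℂ) - u ^ 2 / 2 * (EX2 : ℂ)‖
        + ‖(Complex.exp w0 - 1) * (A - 1)‖ + ‖Complex.exp w0 - 1 - w0‖ :=
      (norm_add_le _ _).trans (add_le_add_left (norm_add_le _ _) _)
  -- S2 bound
  have hBS2 : ‖(Complex.exp w0 - 1) * (A - 1)‖
      ≤ 512 * (2 * D + 1) * ‖v‖ ^ 3 + 256 * (2 * D + 1) * (t ^ 3 * I3) := by
    have hjen' : (t * I1) ^ 3 ≤ t ^ 3 * I3 := by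
      rw [mul_pow]
      exact mul_le_mul_of_nonneg_left hjen (pow_nonneg ht 3)
    have hamgm : ‖v‖ ^ 2 * (t * I1) ≤ (2 * ‖v‖ ^ 3 + t ^ 3 * I3) / 3 := by
      refine (amgm3 ‖v‖ (t * I1) (norm_nonneg v) (mul_nonneg ht hI1)).trans ?_
      gcongr
    calc ‖(Complex.exp w0 - 1) * (A - 1)‖ = ‖Complex.exp w0 - 1‖ * ‖A - 1‖ := norm_mul _ _
      _ ≤ 3 / 2 * ‖v‖ ^ 2 * (t * (512 * (2 * D + 1) * I1)) :=
          mul_le_mul hBw1 hB_A1 (norm_nonneg _) (by positivity)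
      _ = 768 * (2 * D + 1) * (‖v‖ ^ 2 * (t * I1)) := by ring
      _ ≤ 768 * (2 * D + 1) * ((2 * ‖v‖ ^ 3 + t ^ 3 * I3) / 3) :=
          mul_le_mul_of_nonneg_left hamgm (by positivity)
      _ = 512 * (2 * D + 1) * ‖v‖ ^ 3 + 256 * (2 * D + 1) * (t ^ 3 * I3) := by ring
  -- final arithmetic
  have hq : (0 : ℝ) ≤ t ^ 3 * I3 := mul_nonneg (pow_nonneg ht 3) hI3
  have hr : (0 : ℝ) ≤ ‖v‖ ^ 3 := by positivity
  refine htri.trans ?_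
  exact final_arith (2 * D + 1) (t ^ 3 * I3) (‖v‖ ^ 3) _ _ _ hK hq hr
    (hBS1.trans (le_of_eq (by ring))) (hBS2.trans (le_of_eq (by ring))) hBw2
end

section
/- Let X be a real random variable satisfying condition (bern1) with constants D, M > 0. Then there exists a positive constant D₁ (depending on D, M and E|X|) such that E|X|^k ≤ D₁ k! (2M)^k for all integers k ≥ 1. -/
open MeasureTheory Real

/-- If a real random variable `X` satisfies the Bernstein-type condition (bern1) with
constants `D, M > 0`, then there is a constant `D₁ > 0` (depending on `D`, `M` and `E|X|`)
such that `E|X|^k ≤ D₁ k! (2M)^k` for all integers `k ≥ 1`. -/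
theorem abs_moment_bound_of_bern1
    {Ω : Type} [MeasurableSpace Ω] (μ : Measure Ω) [IsProbabilityMeasure μ]
    (X : Ω → ℝ) (hX : Measurable X)
    (hmom : ∀ k : ℕ, Integrable (fun ω => |X ω| ^ k) μ)
    (D M : ℝ) (hD : 0 < D) (hM : 0 < M)
    (hbern : ∀ s ∈ ({1, 2, 3} : Set ℕ), ∀ k : ℕ, s ≤ k →
      |∫ ω, X ω ^ k ∂μ| ≤ D * (Nat.factorial k) * M ^ (k - s) * ∫ ω, |X ω| ^ s ∂μ) :
    ∃ D₁ > 0, ∀ k : ℕ, 1 ≤ k →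
      (∫ ω, |X ω| ^ k ∂μ) ≤ D₁ * (Nat.factorial k) * (2 * M) ^ k := by
  set A : ℝ := ∫ ω, |X ω| ^ 1 ∂μ with hA
  have hA0 : 0 ≤ A := integral_nonneg fun ω => by positivity
  -- absolute moments are nonnegative
  have habs0 : ∀ k : ℕ, 0 ≤ ∫ ω, |X ω| ^ k ∂μ := fun k =>
    integral_nonneg fun ω => by positivity
  -- even absolute moment bound: for even k ≥ 1, E|X|^k ≤ D * k! * M^(k-1) * A
  have heven : ∀ k : ℕ, 1 ≤ k → Even k →
      (∫ ω, |X ω| ^ k ∂μ) ≤ D * (Nat.factorial k) * M ^ (k - 1) * A := by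
    intro k hk hke
    have h1 := hbern 1 (by simp) k hk
    have heq : (∫ ω, |X ω| ^ k ∂μ) = ∫ ω, X ω ^ k ∂μ := by
      congr 1; funext ω; exact hke.pow_abs _
    rw [heq]
    exact (le_abs_self _).trans h1
  set D₁ : ℝ := A * Real.exp (1 / (2 * M)) + D * A + D * A / (2 * M) + 1 with hD₁
  have hD₁pos : 0 < D₁ := by positivity
  refine ⟨D₁, hD₁pos, fun k hk => ?_⟩
  have hP : (0:ℝ) < (Nat.factorial k : ℝ) * (2 * M) ^ k := by positivity
  rcases Nat.even_or_odd k with hke | hko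
  · -- even case
    have h := heven k hk hke
    have hpow : M ^ (k - 1) * (2 * M) ≤ (2 * M) ^ k := by
      have : (2 * M) ^ k = (2 * M) ^ (k - 1) * (2 * M) := by
        rw [← pow_succ]
        congr 1
        omega
      rw [this]
      have : M ^ (k - 1) ≤ (2 * M) ^ (k - 1) :=
        pow_le_pow_left₀ hM.le (by nlinarith) _
      nlinarith
    have hstep : D * (Nat.factorial k) * M ^ (k - 1) * A ≤
        (D * A / (2 * M)) * ((Nat.factorial k : ℝ) * (2 * M) ^ k) := by
      have hf : (0:ℝ) ≤ (Nat.factorial k : ℝ) := Nat.cast_nonneg _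
      rw [div_mul_eq_mul_div, le_div_iff₀ (by positivity)]
      have hM2 : (0:ℝ) ≤ M ^ (k - 1) := by positivity
      nlinarith [mul_le_mul_of_nonneg_left hpow (mul_nonneg (mul_nonneg hD.le hA0) hf)]
    have hco : D * A / (2 * M) ≤ D₁ := by
      have h1 : 0 ≤ A * Real.exp (1 / (2 * M)) := by positivity
      have h2 : 0 ≤ D * A := by positivity
      rw [hD₁]; linarith
    calc (∫ ω, |X ω| ^ k ∂μ) ≤ D * (Nat.factorial k) * M ^ (k - 1) * A := h
      _ ≤ (D * A / (2 * M)) * ((Nat.factorial k : ℝ) * (2 * M) ^ k) := hstep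
      _ ≤ D₁ * ((Nat.factorial k : ℝ) * (2 * M) ^ k) :=
          mul_le_mul_of_nonneg_right hco hP.le
      _ = D₁ * (Nat.factorial k) * (2 * M) ^ k := by ring
  · -- odd case: E|X|^k ≤ A + E|X|^(k+1)
    have hpt : ∀ ω, |X ω| ^ k ≤ |X ω| ^ 1 + |X ω| ^ (k + 1) := by
      intro ω
      rcases le_or_gt (|X ω|) 1 with h1 | h1
      · have : |X ω| ^ k ≤ |X ω| ^ 1 :=
          pow_le_pow_of_le_one (abs_nonneg _) h1 hk
        have h2 : 0 ≤ |X ω| ^ (k + 1) := by positivity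
        linarith
      · have : |X ω| ^ k ≤ |X ω| ^ (k + 1) :=
          pow_le_pow_right₀ h1.le (Nat.le_succ k)
        have h2 : 0 ≤ |X ω| ^ 1 := by positivity
        linarith
    have hint : (∫ ω, |X ω| ^ k ∂μ) ≤ ∫ ω, (|X ω| ^ 1 + |X ω| ^ (k + 1)) ∂μ :=
      integral_mono (hmom k) ((hmom 1).add (hmom (k + 1))) hpt
    rw [integral_add (hmom 1) (hmom (k + 1))] at hint
    have hnext : (∫ ω, |X ω| ^ (k + 1) ∂μ) ≤ D * (Nat.factorial (k + 1)) * M ^ k * A := by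
      have := heven (k + 1) (by omega) (hko.add_one)
      simpa using this
    -- (k+1)! M^k ≤ k! (2M)^k
    have hfac : (Nat.factorial (k + 1) : ℝ) * M ^ k ≤ (Nat.factorial k : ℝ) * (2 * M) ^ k := by
      have h2k : ((k:ℝ) + 1) ≤ 2 ^ k := by
        have := Nat.lt_two_pow_self (n := k)
        have : (k : ℝ) + 1 ≤ (2 ^ k : ℕ) := by exact_mod_cast this
        simpa using this
      have : (Nat.factorial (k + 1) : ℝ) = ((k:ℝ) + 1) * (Nat.factorial k) := by
        rw [Nat.factorial_succ]; push_cast; ring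
      rw [this, mul_pow]
      have hf : (0:ℝ) ≤ (Nat.factorial k : ℝ) := Nat.cast_nonneg _
      have hMk : (0:ℝ) ≤ M ^ k := by positivity
      calc ((k:ℝ) + 1) * (Nat.factorial k) * M ^ k
          ≤ 2 ^ k * (Nat.factorial k) * M ^ k := by nlinarith [mul_le_mul_of_nonneg_right h2k (mul_nonneg hf hMk)]
        _ = (Nat.factorial k : ℝ) * (2 ^ k * M ^ k) := by ring
    have hone : 1 ≤ Real.exp (1 / (2 * M)) * ((Nat.factorial k : ℝ) * (2 * M) ^ k) := by
      have := Real.pow_div_factorial_le_exp (x := 1 / (2 * M)) (by positivity) k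
      rw [div_le_iff₀ (by positivity)] at this
      have hpow : (1 / (2 * M)) ^ k * (2 * M) ^ k = 1 := by
        rw [← mul_pow]
        field_simp
        exact one_pow k
      nlinarith [pow_pos (show (0:ℝ) < 1 / (2*M) by positivity) k]
    have hA1 : A ≤ (A * Real.exp (1 / (2 * M))) * ((Nat.factorial k : ℝ) * (2 * M) ^ k) := by
      calc A = A * 1 := by ring
        _ ≤ A * (Real.exp (1 / (2 * M)) * ((Nat.factorial k : ℝ) * (2 * M) ^ k)) :=
            mul_le_mul_of_nonneg_left hone hA0
        _ = (A * Real.exp (1 / (2 * M))) * ((Nat.factorial k : ℝ) * (2 * M) ^ k) := by ring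
    have hA2 : D * (Nat.factorial (k + 1)) * M ^ k * A ≤
        (D * A) * ((Nat.factorial k : ℝ) * (2 * M) ^ k) := by
      have := mul_le_mul_of_nonneg_left hfac (mul_nonneg hD.le hA0)
      nlinarith
    have hco : A * Real.exp (1 / (2 * M)) + D * A ≤ D₁ := by
      have h3 : 0 ≤ D * A / (2 * M) := by positivity
      rw [hD₁]; linarith
    calc (∫ ω, |X ω| ^ k ∂μ) ≤ A + ∫ ω, |X ω| ^ (k + 1) ∂μ := hint
      _ ≤ A + D * (Nat.factorial (k + 1)) * M ^ k * A := by linarith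
      _ ≤ (A * Real.exp (1 / (2 * M)) + D * A) * ((Nat.factorial k : ℝ) * (2 * M) ^ k) := by
          rw [add_mul]; linarith
      _ ≤ D₁ * ((Nat.factorial k : ℝ) * (2 * M) ^ k) :=
          mul_le_mul_of_nonneg_right hco hP.le
      _ = D₁ * (Nat.factorial k) * (2 * M) ^ k := by ring
end

section
/- Under the combinatorial-sum setup, assume the centering condition (10). Then the variance of the combinatorial sum satisfies Var S_n = (1/(n(n−1))) Σ_{i,j=1}^n (E X_{nij})² + (1/n) Σ_{i,j=1}^n E X_{nij}². -/
open MeasureTheory ProbabilityTheory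

/-- Discrete measurable structure on the permutations of `Fin n`. -/
instance permMeasurableSpace (n : ℕ) : MeasurableSpace (Equiv.Perm (Fin n)) := ⊤

section Aux
open Finset Equiv

lemma csv_card_filter_mul {α : Type*} [DecidableEq α] [Fintype α]
    (τ : Perm α) (P : Perm α → Prop) [DecidablePred P] :
    #{p : Perm α | P p} = #{p : Perm α | P (τ * p)} := by
  classical
  refine (Finset.card_bij' (fun p (_ : p ∈ filter (fun p => P (τ * p)) univ) => τ * p)
    (fun p _ => τ⁻¹ * p) ?_ ?_ ?_ ?_).symm
  · intro p hp; simp only [mem_filter, mem_univ, true_and] at hp ⊢; exact hp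
  · intro p hp; simp only [mem_filter, mem_univ, true_and] at hp ⊢
    simpa using hp
  · intro p _; group
  · intro p _; group

lemma csv_exists_perm_two {α : Type*} [DecidableEq α] (j l j' l' : α)
    (hjl : j ≠ l) (hjl' : j' ≠ l') :
    ∃ τ : Perm α, τ j = j' ∧ τ l = l' := by
  classical
  set a := Equiv.swap j j' l with ha
  have haj' : a ≠ j' := by
    intro h
    apply hjl
    exact ((Equiv.swap j j').injective (h.trans (Equiv.swap_apply_left j j').symm)).symm
  refine ⟨(Equiv.swap a l') * (Equiv.swap j j'), ?_, ?_⟩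
  · simp only [Perm.mul_apply, Equiv.swap_apply_left]
    exact Equiv.swap_apply_of_ne_of_ne (Ne.symm haj') hjl'
  · simp only [Perm.mul_apply, ← ha, Equiv.swap_apply_left]

lemma csv_card_fiber_two {n : ℕ} (hn : 2 ≤ n) (i k j l : Fin n) (hik : i ≠ k) (hjl : j ≠ l) :
    #{p : Perm (Fin n) | p i = j ∧ p k = l} = (n - 2).factorial := by
  classical
  have hequal : ∀ j' l' : Fin n, j' ≠ l' →
      #{p : Perm (Fin n) | p i = j' ∧ p k = l'} = #{p : Perm (Fin n) | p i = j ∧ p k = l} := by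
    intro j' l' hjl'
    obtain ⟨τ, hτj, hτl⟩ := csv_exists_perm_two j l j' l' hjl hjl'
    rw [csv_card_filter_mul τ (fun p => p i = j' ∧ p k = l')]
    congr 1
    apply Finset.filter_congr
    intro p _
    simp only [Perm.mul_apply, ← hτj, ← hτl]
    constructor
    · rintro ⟨h1, h2⟩; exact ⟨τ.injective h1, τ.injective h2⟩
    · rintro ⟨h1, h2⟩; rw [h1, h2]; exact ⟨rfl, rfl⟩
  have htotal : (Finset.univ : Finset (Perm (Fin n))).card
      = ∑ jl ∈ (Finset.univ : Finset (Fin n)).offDiag,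
        #{p : Perm (Fin n) | p i = jl.1 ∧ p k = jl.2} := by
    rw [Finset.card_eq_sum_card_fiberwise
      (f := fun p : Perm (Fin n) => (p i, p k)) (t := (Finset.univ : Finset (Fin n)).offDiag)
      (fun p _ => by
        simp only [Finset.mem_coe, Finset.mem_offDiag, Finset.mem_univ, true_and]
        exact fun h => hik (p.injective h))]
    apply Finset.sum_congr rfl
    intro jl _
    congr 1
    apply Finset.filter_congr
    intro p _
    simp [Prod.ext_iff]
  have hconst : ∑ jl ∈ (Finset.univ : Finset (Fin n)).offDiag,
        #{p : Perm (Fin n) | p i = jl.1 ∧ p k = jl.2}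
      = (n * n - n) * #{p : Perm (Fin n) | p i = j ∧ p k = l} := by
    rw [Finset.sum_congr rfl (fun jl hjl' => hequal jl.1 jl.2
      (Finset.mem_offDiag.mp hjl').2.2)]
    rw [Finset.sum_const, smul_eq_mul, Finset.offDiag_card]
    simp [Finset.card_univ]
  obtain ⟨m, rfl⟩ : ∃ m, n = m + 2 := ⟨n - 2, by omega⟩
  have hcard : (Finset.univ : Finset (Perm (Fin (m + 2)))).card = (m + 2).factorial := by
    simp [Finset.card_univ, Fintype.card_perm]
  rw [hcard, hconst] at htotal
  have hfact : (m + 2).factorial = ((m + 2) * (m + 2) - (m + 2)) * m.factorial := by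
    have : (m + 2) * (m + 2) - (m + 2) = (m + 2) * (m + 1) := by ring_nf; omega
    rw [this]
    simp [Nat.factorial_succ]
    ring
  rw [hfact] at htotal
  have hpos : 0 < (m + 2) * (m + 2) - (m + 2) := by
    have h : (m + 2) * (m + 2) - (m + 2) = (m + 2) * (m + 1) := by ring_nf; omega
    rw [h]
    positivity
  simpa using (Nat.eq_of_mul_eq_mul_left hpos htotal).symm

lemma csv_card_fiber_one {n : ℕ} (hn : 2 ≤ n) (i j : Fin n) :
    #{p : Perm (Fin n) | p i = j} = (n - 1).factorial := by
  classical
  obtain ⟨k, hk⟩ : ∃ k : Fin n, k ≠ i :=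
    Fintype.exists_ne_of_one_lt_card (by simpa using by omega) i
  have : #{p : Perm (Fin n) | p i = j}
      = ∑ l ∈ Finset.univ \ {j}, #{p : Perm (Fin n) | p i = j ∧ p k = l} := by
    rw [Finset.card_eq_sum_card_fiberwise
      (f := fun p : Perm (Fin n) => p k) (t := Finset.univ \ {j})
      (fun p hp => by
        simp only [Finset.mem_coe, Finset.mem_filter, Finset.mem_univ, true_and] at hp
        simp only [Finset.mem_coe, Finset.mem_sdiff, Finset.mem_univ, Finset.mem_singleton, true_and]
        rw [← hp]
        exact fun h => hk (p.injective h))]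
    apply Finset.sum_congr rfl
    intro l _
    congr 1
    rw [Finset.filter_filter]
  rw [this]
  rw [Finset.sum_congr rfl (fun l hl => csv_card_fiber_two hn i k j l (Ne.symm hk)
    (by simp only [Finset.mem_sdiff, Finset.mem_singleton] at hl; exact fun h => hl.2 h.symm))]
  rw [Finset.sum_const, smul_eq_mul]
  have : (Finset.univ \ ({j} : Finset (Fin n))).card = n - 1 := by
    rw [Finset.card_sdiff_of_subset (by simp)]
    simp
  rw [this]
  obtain ⟨m, rfl⟩ : ∃ m, n = m + 2 := ⟨n - 2, by omega⟩
  simp [Nat.factorial_succ]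

/-- summing `g (p i)` over all permutations -/
lemma csv_sum_perm_one {n : ℕ} (hn : 2 ≤ n) (i : Fin n) (g : Fin n → ℝ) :
    ∑ p : Perm (Fin n), g (p i) = ((n - 1).factorial : ℝ) * ∑ j, g j := by
  classical
  rw [← Finset.sum_fiberwise' Finset.univ (fun p : Perm (Fin n) => p i) g]
  rw [Finset.mul_sum]
  apply Finset.sum_congr rfl
  intro j _
  rw [Finset.sum_const, nsmul_eq_mul, csv_card_fiber_one hn i j]

/-- summing `g (p i) (p k)` over all permutations, `i ≠ k` -/
lemma csv_sum_perm_two {n : ℕ} (hn : 2 ≤ n) {i k : Fin n} (hik : i ≠ k)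
    (g : Fin n → Fin n → ℝ) :
    ∑ p : Perm (Fin n), g (p i) (p k)
      = ((n - 2).factorial : ℝ) * ∑ j, ∑ l, (if j = l then 0 else g j l) := by
  classical
  have := Finset.sum_fiberwise' Finset.univ (fun p : Perm (Fin n) => (p i, p k))
    (fun jl : Fin n × Fin n => g jl.1 jl.2)
  rw [← this]
  rw [Fintype.sum_prod_type, Finset.mul_sum]
  apply Finset.sum_congr rfl
  intro j _
  rw [Finset.mul_sum]
  apply Finset.sum_congr rfl
  intro l _
  rw [Finset.sum_const, nsmul_eq_mul]
  by_cases hjl : j = l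
  · subst hjl
    simp only [if_pos rfl, mul_zero]
    have : filter (fun p : Perm (Fin n) => (p i, p k) = (j, j)) univ = ∅ := by
      rw [Finset.filter_eq_empty_iff]
      intro p _
      simp only [Prod.mk.injEq, not_and]
      intro h1 h2
      exact hik (p.injective (h1.trans h2.symm))
    rw [this]
    simp
  · rw [if_neg hjl]
    have : filter (fun p : Perm (Fin n) => (p i, p k) = (j, l)) univ
        = filter (fun p : Perm (Fin n) => p i = j ∧ p k = l) univ := by
      apply Finset.filter_congr
      intro p _
      simp [Prod.ext_iff]
    rw [this, csv_card_fiber_two hn i k j l hik hjl]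

lemma csv_sum_ite_ne {n : ℕ} (a : Fin n → ℝ) (j : Fin n) :
    ∑ l, (if j = l then 0 else a l) = (∑ l, a l) - a j := by
  rw [Finset.sum_congr rfl (fun l (_ : l ∈ Finset.univ) => show
      (if j = l then 0 else a l) = a l - (if j = l then a l else 0) by split <;> ring)]
  rw [Finset.sum_sub_distrib, Finset.sum_ite_eq, if_pos (Finset.mem_univ j)]

/-- The centering identity: off-diagonal product sums reduce to the diagonal. -/
lemma csv_cross_sum {n : ℕ} (m : Fin n → Fin n → ℝ)
    (h1 : ∀ j, ∑ i, m i j = 0) (h2 : ∀ i, ∑ j, m i j = 0) :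
    ∑ i, ∑ k, (if i = k then 0 else ∑ j, ∑ l, (if j = l then 0 else m i j * m k l))
      = ∑ i, ∑ j, m i j ^ 2 := by
  have hinner : ∀ i k : Fin n,
      (∑ j, ∑ l, (if j = l then 0 else m i j * m k l)) = -∑ j, m i j * m k j := by
    intro i k
    rw [Finset.sum_congr rfl (fun j (_ : j ∈ Finset.univ) => csv_sum_ite_ne (fun l => m i j * m k l) j)]
    rw [Finset.sum_sub_distrib, ← Finset.sum_neg_distrib]
    have : ∀ j : Fin n, ∑ l, m i j * m k l = 0 := by
      intro j; rw [← Finset.mul_sum, h2 k, mul_zero]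
    rw [Finset.sum_congr rfl (fun j _ => this j), Finset.sum_const, smul_zero, zero_sub,
      ← Finset.sum_neg_distrib]
  calc ∑ i, ∑ k, (if i = k then 0 else ∑ j, ∑ l, (if j = l then 0 else m i j * m k l))
      = ∑ i, ∑ k, (if i = k then 0 else -∑ j, m i j * m k j) := by
        refine Finset.sum_congr rfl fun i _ => Finset.sum_congr rfl fun k _ => ?_
        by_cases h : i = k
        · rw [if_pos h, if_pos h]
        · rw [if_neg h, if_neg h, hinner i k]
    _ = ∑ i, ∑ j, m i j ^ 2 := by
        apply Finset.sum_congr rfl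
        intro i _
        rw [csv_sum_ite_ne (fun k => -∑ j, m i j * m k j) i]
        have hz : ∑ k, -∑ j, m i j * m k j = 0 := by
          rw [Finset.sum_neg_distrib, Finset.sum_comm, neg_eq_zero]
          rw [Finset.sum_congr rfl (fun j (_ : j ∈ Finset.univ) => show
            ∑ k, m i j * m k j = 0 by rw [← Finset.mul_sum, h1 j, mul_zero])]
          simp
        rw [hz, zero_sub, neg_neg]
        exact Finset.sum_congr rfl fun j _ => by ring

end Aux
/-- Under the combinatorial-sum setup with the centering condition (10),
`Var S_n = (1/(n(n−1))) Σ_{i,j} (E X_{nij})² + (1/n) Σ_{i,j} E X_{nij}²`. -/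
theorem combinatorial_sum_variance
    {Ω : Type} [MeasurableSpace Ω] (μ : Measure Ω) [IsProbabilityMeasure μ]
    (n : ℕ) (hn : 2 ≤ n)
    (X : Fin n → Fin n → Ω → ℝ) (hXmeas : ∀ i j, Measurable (X i j))
    (hmom : ∀ i j (k : ℕ), Integrable (fun ω => |X i j ω| ^ k) μ)
    (π : Ω → Equiv.Perm (Fin n)) (hπmeas : Measurable π)
    (hπunif : ∀ p : Equiv.Perm (Fin n), μ {ω | π ω = p} = ((Nat.factorial n : ENNReal))⁻¹)
    (hXindep : iIndepFun
      (fun (ij : Fin n × Fin n) ω => X ij.1 ij.2 ω) μ)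
    (hπindep : IndepFun π (fun ω (ij : Fin n × Fin n) => X ij.1 ij.2 ω) μ)
    (hcent : (∀ j, ∑ i, ∫ ω, X i j ω ∂μ = 0) ∧ (∀ i, ∑ j, ∫ ω, X i j ω ∂μ = 0))
    (S : Ω → ℝ) (hS : ∀ ω, S ω = ∑ i, X i (π ω i) ω) :
    variance S μ
      = (1 / (n * (n - 1)) : ℝ) * ∑ i, ∑ j, (∫ ω, X i j ω ∂μ) ^ 2
        + (1 / n : ℝ) * ∑ i, ∑ j, ∫ ω, (X i j ω) ^ 2 ∂μ := by
  classical
  obtain ⟨hcent1, hcent2⟩ := hcent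
  -- abbreviations
  set M : Fin n → Fin n → ℝ := fun i j => ∫ ω, X i j ω ∂μ with hM
  set Q : Fin n → Fin n → ℝ := fun i j => ∫ ω, (X i j ω) ^ 2 ∂μ with hQ
  -- basic integrability
  have hcentM1 : ∀ j, ∑ i, M i j = 0 := hcent1
  have hcentM2 : ∀ i, ∑ j, M i j = 0 := hcent2
  have hXint : ∀ i j, Integrable (X i j) μ := by
    intro i j
    have h1 := hmom i j 1
    simp only [pow_one] at h1
    exact h1.mono' (hXmeas i j).aestronglyMeasurable
      (Filter.Eventually.of_forall fun ω => by simp [Real.norm_eq_abs])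
  have hXsq : ∀ i j, Integrable (fun ω => (X i j ω) ^ 2) μ := by
    intro i j
    simpa [sq_abs] using hmom i j 2
  have hpairindep : ∀ i j k l, (i, j) ≠ (k, l) → IndepFun (X i j) (X k l) μ := by
    intro i j k l h
    exact hXindep.indepFun h
  have hprod_int : ∀ i j k l, Integrable (fun ω => X i j ω * X k l ω) μ := by
    intro i j k l
    by_cases h : (i, j) = (k, l)
    · injection h with h1 h2
      subst h1; subst h2
      simpa [sq] using hXsq i j
    · exact (hpairindep i j k l h).integrable_mul (hXint i j) (hXint k l)
  have hprod_eq : ∀ i j k l, (i, j) ≠ (k, l) →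
      ∫ ω, X i j ω * X k l ω ∂μ = M i j * M k l := by
    intro i j k l h
    exact (hpairindep i j k l h).integral_mul_eq_mul_integral (hXint i j).aestronglyMeasurable (hXint k l).aestronglyMeasurable
  -- the summands by permutation value
  set T : Equiv.Perm (Fin n) → Ω → ℝ := fun p ω => ∑ i, X i (p i) ω with hT
  set ind : Equiv.Perm (Fin n) → Ω → ℝ := fun p ω => if π ω = p then 1 else 0 with hind
  have hTint : ∀ p, Integrable (T p) μ :=
    fun p => integrable_finset_sum _ fun i _ => hXint i (p i)
  have hTmeas : ∀ p, Measurable (T p) :=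
    fun p => Finset.measurable_sum _ fun i _ => hXmeas i (p i)
  have hsetm : ∀ p, MeasurableSet {ω | π ω = p} := fun p => by
    have h : {ω | π ω = p} = π ⁻¹' {p} := rfl
    rw [h]
    exact hπmeas (show MeasurableSet ({p} : Set (Equiv.Perm (Fin n))) from trivial)
  have hindmeas : ∀ p, Measurable (ind p) := fun p =>
    Measurable.ite (hsetm p) measurable_const measurable_const
  have hindicator : ∀ p, ind p = Set.indicator {ω | π ω = p} (fun _ => (1:ℝ)) := by
    intro p
    funext ω
    by_cases h : π ω = p <;> simp [hind, Set.indicator_apply, h]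
  have hindint : ∀ p, Integrable (ind p) μ := by
    intro p
    rw [hindicator p]
    exact (integrable_const 1).indicator (hsetm p)
  have hindval : ∀ p, ∫ ω, ind p ω ∂μ = ((n.factorial : ℝ))⁻¹ := by
    intro p
    rw [show (fun ω => ind p ω) = ind p from rfl, hindicator p,
      MeasureTheory.integral_indicator_const (1:ℝ) (hsetm p), measureReal_def, hπunif p]
    simp [ENNReal.toReal_inv]
  -- independence of the indicator and the X-side quantities
  have hindep1 : ∀ p, IndepFun (ind p) (T p) μ := by
    intro p
    exact hπindep.comp (φ := fun p' : Equiv.Perm (Fin n) => if p' = p then (1:ℝ) else 0)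
      (ψ := fun v : Fin n × Fin n → ℝ => ∑ i, v (i, p i))
      measurable_from_top
      (Finset.measurable_sum _ fun i _ => measurable_pi_apply (i, p i))
  have hindep2 : ∀ p, IndepFun (ind p) (fun ω => (T p ω) ^ 2) μ := by
    intro p
    exact hπindep.comp (φ := fun p' : Equiv.Perm (Fin n) => if p' = p then (1:ℝ) else 0)
      (ψ := fun v : Fin n × Fin n → ℝ => (∑ i, v (i, p i)) ^ 2)
      measurable_from_top
      ((Finset.measurable_sum _ fun i _ => measurable_pi_apply (i, p i)).pow_const 2)
  have hTsq_expand : ∀ p, (fun ω => (T p ω) ^ 2)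
      = fun ω => ∑ i, ∑ k, X i (p i) ω * X k (p k) ω := by
    intro p
    funext ω
    simp only [hT]
    rw [sq, Finset.sum_mul_sum]
  have hTsq_int : ∀ p, Integrable (fun ω => (T p ω) ^ 2) μ := by
    intro p
    rw [hTsq_expand p]
    exact integrable_finset_sum _ fun i _ =>
      integrable_finset_sum _ fun k _ => hprod_int i (p i) k (p k)
  have hindTprod_int : ∀ p, Integrable (fun ω => ind p ω * T p ω) μ := fun p =>
    (hindep1 p).integrable_mul (hindint p) (hTint p)
  have hindsq_prod_int : ∀ p, Integrable (fun ω => ind p ω * (T p ω) ^ 2) μ := fun p =>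
    (hindep2 p).integrable_mul (hindint p) (hTsq_int p)
  -- value of ∫ (T p)²
  have hTsq_val : ∀ p, ∫ ω, (T p ω) ^ 2 ∂μ
      = ∑ i, ∑ k, (if i = k then Q i (p i) else M i (p i) * M k (p k)) := by
    intro p
    rw [hTsq_expand p]
    rw [integral_finset_sum _ (fun i _ =>
      integrable_finset_sum _ fun k _ => hprod_int i (p i) k (p k))]
    refine Finset.sum_congr rfl fun i _ => ?_
    rw [integral_finset_sum _ (fun k _ => hprod_int i (p i) k (p k))]
    refine Finset.sum_congr rfl fun k _ => ?_
    by_cases h : i = k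
    · subst h
      rw [if_pos rfl]
      have : (fun ω => X i (p i) ω * X i (p i) ω) = fun ω => (X i (p i) ω) ^ 2 :=
        funext fun ω => (sq _).symm
      rw [this]
    · rw [if_neg h]
      exact hprod_eq i (p i) k (p k) (fun hc => h (congrArg Prod.fst hc))
  -- representation of S and S²
  have hSrep : S = fun ω => ∑ p, ind p ω * T p ω := by
    funext ω
    rw [hS ω]
    symm
    rw [Finset.sum_congr rfl (fun p (_ : p ∈ Finset.univ) => show
      ind p ω * T p ω = if π ω = p then T p ω else 0 by
        simp only [hind]; split <;> ring)]
    rw [Finset.sum_ite_eq, if_pos (Finset.mem_univ _)]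
  have hS2rep : (fun ω => S ω ^ 2) = fun ω => ∑ p, ind p ω * (T p ω) ^ 2 := by
    funext ω
    rw [hS ω]
    symm
    rw [Finset.sum_congr rfl (fun p (_ : p ∈ Finset.univ) => show
      ind p ω * (T p ω) ^ 2 = if π ω = p then (T p ω) ^ 2 else 0 by
        simp only [hind]; split <;> ring)]
    rw [Finset.sum_ite_eq, if_pos (Finset.mem_univ _)]
  -- expectation of S
  have hES : ∫ ω, S ω ∂μ = 0 := by
    simp only [hSrep]
    rw [integral_finset_sum _ fun p _ => hindTprod_int p]
    rw [Finset.sum_congr rfl (fun p (_ : p ∈ Finset.univ) => show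
      (∫ ω, ind p ω * T p ω ∂μ) = ((n.factorial : ℝ))⁻¹ * ∑ i, M i (p i) by
        have h' : ∫ ω, ind p ω * T p ω ∂μ = (∫ ω, ind p ω ∂μ) * ∫ ω, T p ω ∂μ :=
          (hindep1 p).integral_mul_eq_mul_integral (hindint p).aestronglyMeasurable (hTint p).aestronglyMeasurable
        rw [h', hindval p]
        congr 1
        exact integral_finset_sum _ fun i _ => hXint i (p i))]
    rw [← Finset.mul_sum, Finset.sum_comm]
    rw [Finset.sum_congr rfl (fun i (_ : i ∈ Finset.univ) =>
      (csv_sum_perm_one hn i (M i)).trans (by rw [hcentM2 i, mul_zero]))]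
    simp
  -- second moment of S
  have hES2 : ∫ ω, S ω ^ 2 ∂μ = ((n.factorial : ℝ))⁻¹ *
      (((n - 1).factorial : ℝ) * (∑ i, ∑ j, Q i j)
        + ((n - 2).factorial : ℝ) * (∑ i, ∑ j, M i j ^ 2)) := by
    rw [hS2rep]
    rw [integral_finset_sum _ fun p _ => hindsq_prod_int p]
    rw [Finset.sum_congr rfl (fun p (_ : p ∈ Finset.univ) => show
      (∫ ω, ind p ω * (T p ω) ^ 2 ∂μ) = ((n.factorial : ℝ))⁻¹ *
        ∑ i, ∑ k, (if i = k then Q i (p i) else M i (p i) * M k (p k)) by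
        have h' : ∫ ω, ind p ω * (T p ω) ^ 2 ∂μ
            = (∫ ω, ind p ω ∂μ) * ∫ ω, (T p ω) ^ 2 ∂μ :=
          (hindep2 p).integral_mul_eq_mul_integral (hindint p).aestronglyMeasurable (hTsq_int p).aestronglyMeasurable
        rw [h', hindval p, hTsq_val p])]
    rw [← Finset.mul_sum]
    congr 1
    rw [Finset.sum_comm]
    rw [Finset.sum_congr rfl (fun i (_ : i ∈ Finset.univ) => Finset.sum_comm)]
    -- now : ∑ i, ∑ k, ∑ p, (if i = k then Q i (p i) else M i (p i) * M k (p k))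
    rw [Finset.sum_congr rfl (fun i (_ : i ∈ Finset.univ) =>
      Finset.sum_congr rfl (fun k (_ : k ∈ Finset.univ) => show
        (∑ p : Equiv.Perm (Fin n), (if i = k then Q i (p i) else M i (p i) * M k (p k)))
          = (if i = k then ((n - 1).factorial : ℝ) * ∑ j, Q i j else 0)
            + ((n - 2).factorial : ℝ) *
              (if i = k then 0 else ∑ j, ∑ l, (if j = l then 0 else M i j * M k l)) by
        by_cases h : i = k
        · subst h
          simp only [if_pos rfl, ite_true, eq_self_iff_true, add_zero, mul_zero]
          exact csv_sum_perm_one hn i (Q i)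
        · simp only [if_neg h, zero_add]
          exact csv_sum_perm_two hn h (fun j l => M i j * M k l)))]
    rw [Finset.sum_congr rfl (fun i (_ : i ∈ Finset.univ) => Finset.sum_add_distrib)]
    rw [Finset.sum_add_distrib]
    congr 1
    · rw [Finset.sum_congr rfl (fun i (_ : i ∈ Finset.univ) => show
        (∑ k, (if i = k then ((n - 1).factorial : ℝ) * ∑ j, Q i j else 0))
          = ((n - 1).factorial : ℝ) * ∑ j, Q i j by
        rw [Finset.sum_ite_eq, if_pos (Finset.mem_univ _)])]
      rw [Finset.mul_sum]
    · rw [Finset.sum_congr rfl (fun i (_ : i ∈ Finset.univ) => (Finset.mul_sum _ _ _).symm)]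
      rw [← Finset.mul_sum]
      congr 1
      exact csv_cross_sum M hcentM1 hcentM2
  -- S is in L²
  have hmemLp : MemLp S 2 μ := by
    refine (memLp_two_iff_integrable_sq ?_).mpr ?_
    · rw [hSrep]
      exact (Finset.measurable_sum _ fun p _ =>
        ((hindmeas p).mul (hTmeas p))).aestronglyMeasurable
    · rw [hS2rep]
      exact integrable_finset_sum _ fun p _ => hindsq_prod_int p
  rw [variance_eq_sub hmemLp]
  have h2 : μ[S ^ 2] = ∫ ω, S ω ^ 2 ∂μ := by
    apply integral_congr_ae
    filter_upwards with ω
    simp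
  have h1 : μ[S] = ∫ ω, S ω ∂μ := rfl
  rw [h2, h1, hES, hES2]
  -- rewrite the goal's sums in terms of M and Q
  have hgoalM : (∑ i, ∑ j, (∫ ω, X i j ω ∂μ) ^ 2) = ∑ i, ∑ j, M i j ^ 2 := rfl
  have hgoalQ : (∑ i, ∑ j, ∫ ω, (X i j ω) ^ 2 ∂μ) = ∑ i, ∑ j, Q i j := rfl
  rw [hgoalM, hgoalQ]
  -- final arithmetic
  have hn0 : (n : ℝ) ≠ 0 := Nat.cast_ne_zero.mpr (by omega)
  have hnR : (2 : ℝ) ≤ (n : ℝ) := by exact_mod_cast hn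
  have hn1 : (n : ℝ) - 1 ≠ 0 := by linarith
  have hf2ne : (((n - 2).factorial : ℕ) : ℝ) ≠ 0 :=
    Nat.cast_ne_zero.mpr (Nat.factorial_ne_zero _)
  have hfac1 : ((n.factorial : ℕ) : ℝ) = (n : ℝ) * (((n - 1).factorial : ℕ) : ℝ) := by
    exact_mod_cast congrArg (Nat.cast : ℕ → ℝ) (Nat.mul_factorial_pred (by omega)).symm
  have hfac2 : (((n - 1).factorial : ℕ) : ℝ) = ((n : ℝ) - 1) * (((n - 2).factorial : ℕ) : ℝ) := by
    have h := Nat.mul_factorial_pred (n := n - 1) (by omega)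
    have h' : n - 1 - 1 = n - 2 := by omega
    rw [h'] at h
    have h2 := congrArg (Nat.cast : ℕ → ℝ) h.symm
    push_cast [Nat.cast_sub (show 1 ≤ n by omega)] at h2
    linarith
  rw [hfac1, hfac2]
  field_simp
  ring
end

section
/- Under the combinatorial-sum setup, assume the Bernstein-type condition (bern) with constants M_n, D, and fix j with Σ_{i=1}^n E X_{nij} = 0. Define b_{nij}(z) = e^{−z²/(2n)} E e^{z X_{nij}/√B_n} − 1. Then there exists a constant C₂ > 0 depending only on D such that for every complex z with |z| ≤ min{√n, √B_n/M_n}/8, |Σ_{i=1}^n b_{nij}(z)| ≤ C₂ |z|² (1 + Σ_{i=1}^n E X_{nij}²/B_n). -/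
open MeasureTheory Real

-- pointwise AM-GM: |t|^(k+1) ≤ (|t|^k + |t|^(k+2))/2
lemma abs_pow_amgm (t : ℝ) (k : ℕ) : |t| ^ (k+1) ≤ (|t| ^ k + |t| ^ (k+2)) / 2 := by
  have h0 : (0:ℝ) ≤ |t| := abs_nonneg t
  have h1 : (0:ℝ) ≤ |t| ^ k := pow_nonneg h0 k
  have h2 : 2 * |t| ≤ 1 + |t|^2 := by nlinarith [sq_nonneg (|t| - 1)]
  have h3 : 2 * |t|^(k+1) ≤ |t|^k + |t|^(k+2) := by
    calc 2 * |t|^(k+1) = |t|^k * (2 * |t|) := by ring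
    _ ≤ |t|^k * (1 + |t|^2) := mul_le_mul_of_nonneg_left h2 h1
    _ = |t|^k + |t|^(k+2) := by ring
  linarith

lemma key_bound {Ω : Type} [MeasurableSpace Ω] (μ : Measure Ω) [IsProbabilityMeasure μ]
    (x : Ω → ℝ) (hx : Measurable x)
    (hint : ∀ k : ℕ, Integrable (fun ω => |x ω| ^ k) μ)
    (D M : ℝ) (hD : 0 < D) (hM : 0 < M)
    (hbern : ∀ k : ℕ, 2 ≤ k →
      |∫ ω, x ω ^ k ∂μ| ≤ D * (Nat.factorial k) * M ^ (k - 2) * ∫ ω, x ω ^ 2 ∂μ)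
    (a : ℂ) (ha : ‖a‖ * M ≤ 1/8) :
    ‖(∫ ω, Complex.exp (a * x ω) ∂μ) - 1 - a * ((∫ ω, x ω ∂μ : ℝ) : ℂ)‖
      ≤ 2 * D * ‖a‖ ^ 2 * ∫ ω, x ω ^ 2 ∂μ := by
  set r : ℝ := ‖a‖ with hr
  have hr0 : 0 ≤ r := norm_nonneg a
  have hq0 : 0 ≤ r * M := mul_nonneg hr0 hM.le
  set A : ℕ → ℝ := fun k => ∫ ω, |x ω| ^ k ∂μ with hA
  have hA0 : ∀ k, 0 ≤ A k := fun k => integral_nonneg (fun ω => pow_nonneg (abs_nonneg _) k)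
  have hA2 : 0 ≤ A 2 := hA0 2
  have hI2 : A 2 = ∫ ω, x ω ^ 2 ∂μ := by
    apply integral_congr_ae
    filter_upwards with ω
    exact (even_two).pow_abs (x ω)
  have hI2nn : 0 ≤ ∫ ω, x ω ^ 2 ∂μ := hI2 ▸ hA2
  -- integrability of real powers
  have hxint : ∀ k : ℕ, Integrable (fun ω => x ω ^ k) μ := by
    intro k
    refine (hint k).mono ((hx.pow_const k).aestronglyMeasurable) ?_
    filter_upwards with ω
    simp [abs_pow, Real.norm_eq_abs, abs_abs, le_refl]
  -- even absolute moments
  have hAeven : ∀ k : ℕ, 2 ≤ k → Even k → A k ≤ D * (Nat.factorial k) * M ^ (k - 2) * A 2 := by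
    intro k hk hke
    have h1 : A k = ∫ ω, x ω ^ k ∂μ := by
      apply integral_congr_ae
      filter_upwards with ω
      exact hke.pow_abs (x ω)
    calc A k = ∫ ω, x ω ^ k ∂μ := h1
    _ ≤ |∫ ω, x ω ^ k ∂μ| := le_abs_self _
    _ ≤ D * (Nat.factorial k) * M ^ (k - 2) * ∫ ω, x ω ^ 2 ∂μ := hbern k hk
    _ = D * (Nat.factorial k) * M ^ (k - 2) * A 2 := by rw [hI2]
  -- pairing for odd exponents
  have hApair : ∀ k : ℕ, A (k+1) ≤ (A k + A (k+2)) / 2 := by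
    intro k
    have hle : ∀ ω, |x ω| ^ (k+1) ≤ (|x ω| ^ k + |x ω| ^ (k+2)) / 2 :=
      fun ω => abs_pow_amgm _ k
    calc A (k+1) ≤ ∫ ω, (|x ω| ^ k + |x ω| ^ (k+2)) / 2 ∂μ :=
          integral_mono (hint (k+1)) (((hint k).add (hint (k+2))).div_const 2) hle
    _ = (A k + A (k+2)) / 2 := by
          rw [integral_div, integral_add (hint k) (hint (k+2))]
  -- uniform bound on A (k+4)
  have hAk : ∀ k : ℕ, A (k+4)
      ≤ D * (Nat.factorial (k+5)) * (M^(k+1) + M^(k+2) + M^(k+3)) * A 2 := by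
    intro k
    have hMp : ∀ j : ℕ, (0:ℝ) ≤ M ^ j := fun j => pow_nonneg hM.le j
    have hfacmono : ∀ p q : ℕ, p ≤ q →
        ((Nat.factorial p : ℝ)) ≤ (Nat.factorial q : ℝ) := by
      intro p q hpq; exact_mod_cast Nat.factorial_le hpq
    rcases Nat.even_or_odd k with hke | hko
    · have he4 : Even (k+4) := by rcases hke with ⟨m, hm⟩; exact ⟨m+2, by omega⟩
      have h1 := hAeven (k+4) (by omega) he4
      have h2 : (k+4) - 2 = k+2 := by omega
      rw [h2] at h1
      have h3 : D * (Nat.factorial (k+4)) * M ^ (k+2) * A 2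
          ≤ D * (Nat.factorial (k+5)) * (M^(k+1) + M^(k+2) + M^(k+3)) * A 2 := by
        have hf := hfacmono (k+4) (k+5) (by omega)
        have hMs : M ^ (k+2) ≤ M^(k+1) + M^(k+2) + M^(k+3) := by
          have := hMp (k+1); have := hMp (k+3); linarith
        have hfp : (0:ℝ) ≤ (Nat.factorial (k+4) : ℝ) := by positivity
        gcongr
      linarith
    · have he3 : Even (k+3) := by rcases hko with ⟨m, hm⟩; exact ⟨m+2, by omega⟩
      have he5 : Even (k+5) := by rcases hko with ⟨m, hm⟩; exact ⟨m+3, by omega⟩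
      have hp := hApair (k+3)
      have h1 := hAeven (k+3) (by omega) he3
      have h2 := hAeven (k+5) (by omega) he5
      have e1 : (k+3) - 2 = k+1 := by omega
      have e2 : (k+5) - 2 = k+3 := by omega
      rw [e1] at h1; rw [e2] at h2
      have hf3 := hfacmono (k+3) (k+5) (by omega)
      have hT1 : D * (Nat.factorial (k+3)) * M ^ (k+1) * A 2
          ≤ D * (Nat.factorial (k+5)) * M ^ (k+1) * A 2 := by
        have := hMp (k+1); gcongr
      have hT2 : (0:ℝ) ≤ D * (Nat.factorial (k+5)) * M ^ (k+2) * A 2 := by positivity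
      have hT1nn : (0:ℝ) ≤ D * (Nat.factorial (k+5)) * M ^ (k+1) * A 2 := by positivity
      have hT3nn : (0:ℝ) ≤ D * (Nat.factorial (k+5)) * M ^ (k+3) * A 2 := by positivity
      have hexp : D * (Nat.factorial (k+5)) * (M^(k+1) + M^(k+2) + M^(k+3)) * A 2
          = D * (Nat.factorial (k+5)) * M ^ (k+1) * A 2
            + D * (Nat.factorial (k+5)) * M ^ (k+2) * A 2
            + D * (Nat.factorial (k+5)) * M ^ (k+3) * A 2 := by ring
      have h44 : k + 3 + 1 = k + 4 := by omega
      rw [h44] at hp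
      have h45 : k + 3 + 2 = k + 5 := by omega
      rw [h45] at hp
      rw [hexp]
      linarith
  -- the complex series terms
  set F : ℕ → Ω → ℂ := fun k ω => (a * x ω) ^ k / (Nat.factorial k) with hF
  have hFint : ∀ k, Integrable (F k) μ := by
    intro k
    have h1 : F k = fun ω => (a ^ k / (Nat.factorial k : ℂ)) * ((x ω ^ k : ℝ) : ℂ) := by
      funext ω; simp only [hF]; push_cast; ring
    rw [h1]
    exact ((hxint k).ofReal).const_mul _
  have hFnorm : ∀ k, (∫ ω, ‖F k ω‖ ∂μ) = r ^ k / (Nat.factorial k) * A k := by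
    intro k
    have h1 : (fun ω => ‖F k ω‖) = fun ω => r ^ k / (Nat.factorial k) * |x ω| ^ k := by
      funext ω
      simp only [hF, norm_div, norm_pow, norm_mul, Complex.norm_real, Real.norm_eq_abs,
        Complex.norm_natCast, hr]
      ring
    rw [h1, integral_const_mul]
  have hck : ∀ k, (∫ ω, F k ω ∂μ)
      = a ^ k / (Nat.factorial k) * ((∫ ω, x ω ^ k ∂μ : ℝ) : ℂ) := by
    intro k
    have h1 : F k = fun ω => (a ^ k / (Nat.factorial k : ℂ)) * ((x ω ^ k : ℝ) : ℂ) := by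
      funext ω; simp only [hF]; push_cast; ring
    rw [h1, integral_const_mul]; congr 1; exact integral_ofReal
  -- summability of the integral norms
  set g : ℕ → ℝ := fun k => r ^ k / (Nat.factorial k) * A k with hg
  have hg0 : ∀ k, 0 ≤ g k := by
    intro k
    apply mul_nonneg (div_nonneg (pow_nonneg hr0 k) (by positivity)) (hA0 k)
  have hqle : ∀ k m : ℕ, k ≤ m → (r*M)^m ≤ (1/8:ℝ)^k := by
    intro k m hkm
    calc (r*M)^m ≤ (1/8:ℝ)^m := pow_le_pow_left₀ hq0 ha m
    _ ≤ (1/8:ℝ)^k := pow_le_pow_of_le_one (by norm_num) (by norm_num) hkm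
  have hgb : ∀ k : ℕ, g (k+4)
      ≤ (D * A 2 * (r^3 + r^2 + r)) * (((k:ℝ)+5) * (1/8)^k) := by
    intro k
    have hfne : ((Nat.factorial (k+4) : ℝ)) ≠ 0 := by positivity
    have hfac : ((Nat.factorial (k+5) : ℝ)) = ((k:ℝ)+5) * (Nat.factorial (k+4)) := by
      have : Nat.factorial (k+5) = (k+5) * Nat.factorial (k+4) := Nat.factorial_succ (k+4)
      rw [this]; push_cast; ring
    have step1 : g (k+4) ≤ r^(k+4) / (Nat.factorial (k+4))
        * (D * (Nat.factorial (k+5)) * (M^(k+1) + M^(k+2) + M^(k+3)) * A 2) := by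
      apply mul_le_mul_of_nonneg_left (hAk k)
      positivity
    have step2 : r^(k+4) / (Nat.factorial (k+4))
        * (D * (Nat.factorial (k+5)) * (M^(k+1) + M^(k+2) + M^(k+3)) * A 2)
        = D * A 2 * (((k:ℝ)+5)
          * (r^3 * (r*M)^(k+1) + r^2 * (r*M)^(k+2) + r * (r*M)^(k+3))) := by
      rw [hfac]; field_simp; ring
    have step3 : r^3 * (r*M)^(k+1) + r^2 * (r*M)^(k+2) + r * (r*M)^(k+3)
        ≤ (r^3 + r^2 + r) * (1/8:ℝ)^k := by
      have b1 : (r*M)^(k+1) ≤ (1/8:ℝ)^k := hqle k (k+1) (by omega)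
      have b2 : (r*M)^(k+2) ≤ (1/8:ℝ)^k := hqle k (k+2) (by omega)
      have b3 : (r*M)^(k+3) ≤ (1/8:ℝ)^k := hqle k (k+3) (by omega)
      have r3 : (0:ℝ) ≤ r^3 := by positivity
      have r2 : (0:ℝ) ≤ r^2 := by positivity
      nlinarith [mul_le_mul_of_nonneg_left b1 r3, mul_le_mul_of_nonneg_left b2 r2,
        mul_le_mul_of_nonneg_left b3 hr0]
    calc g (k+4) ≤ D * A 2 * (((k:ℝ)+5)
          * (r^3 * (r*M)^(k+1) + r^2 * (r*M)^(k+2) + r * (r*M)^(k+3))) := by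
          rw [← step2]; exact step1
    _ ≤ D * A 2 * (((k:ℝ)+5) * ((r^3 + r^2 + r) * (1/8:ℝ)^k)) := by
          apply mul_le_mul_of_nonneg_left _ (by positivity)
          apply mul_le_mul_of_nonneg_left step3 (by positivity)
    _ = (D * A 2 * (r^3 + r^2 + r)) * (((k:ℝ)+5) * (1/8)^k) := by ring
  have hmaj : Summable (fun k : ℕ => (D * A 2 * (r^3 + r^2 + r)) * (((k:ℝ)+5) * (1/8)^k)) := by
    apply Summable.mul_left
    have h1 : Summable (fun k : ℕ => (k:ℝ) * (1/8:ℝ)^k) := by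
      simpa using summable_pow_mul_geometric_of_norm_lt_one (R := ℝ) 1 (r := 1/8) (by norm_num)
    have h2 : Summable (fun k : ℕ => (5:ℝ) * (1/8:ℝ)^k) :=
      (summable_geometric_of_lt_one (by norm_num) (by norm_num)).mul_left 5
    exact (h1.add h2).congr fun k => by ring
  have hgs : Summable g := by
    rw [← summable_nat_add_iff 4]
    exact Summable.of_nonneg_of_le (fun k => hg0 (k+4)) hgb hmaj
  have hnormsum : Summable (fun k => ∫ ω, ‖F k ω‖ ∂μ) :=
    hgs.congr fun k => (hFnorm k).symm
  have hHS : HasSum (fun k => ∫ ω, F k ω ∂μ) (∫ ω, ∑' k, F k ω ∂μ) :=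
    hasSum_integral_of_summable_integral_norm hFint hnormsum
  have hpt : ∀ ω, (∑' k, F k ω) = Complex.exp (a * x ω) := by
    intro ω
    rw [Complex.exp_eq_exp_ℂ]
    exact (NormedSpace.expSeries_div_hasSum_exp (a * x ω : ℂ)).tsum_eq
  have hint_eq : (∫ ω, ∑' k, F k ω ∂μ) = ∫ ω, Complex.exp (a * x ω) ∂μ :=
    integral_congr_ae (.of_forall fun ω => hpt ω)
  rw [hint_eq] at hHS
  -- shift off the first two terms
  have h2 := (hasSum_nat_add_iff' (f := fun k => ∫ ω, F k ω ∂μ) 2).mpr hHS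
  have hsum2 : (∑ i ∈ Finset.range 2, ∫ ω, F i ω ∂μ)
      = 1 + a * ((∫ ω, x ω ∂μ : ℝ) : ℂ) := by
    rw [Finset.sum_range_succ, Finset.sum_range_one, hck 0, hck 1]
    simp
  rw [hsum2] at h2
  have htsum : (∫ ω, Complex.exp (a * x ω) ∂μ) - 1 - a * ((∫ ω, x ω ∂μ : ℝ) : ℂ)
      = ∑' n, ∫ ω, F (n+2) ω ∂μ := by
    rw [h2.tsum_eq]; ring
  rw [htsum]
  -- bound each shifted term
  have hcb : ∀ n : ℕ, ‖∫ ω, F (n+2) ω ∂μ‖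
      ≤ (D * (∫ ω, x ω ^ 2 ∂μ) * r^2) * (1/8:ℝ)^n := by
    intro n
    rw [hck (n+2)]
    have hb := hbern (n+2) (by omega)
    have e1 : (n+2) - 2 = n := by omega
    rw [e1] at hb
    have hfne : ((Nat.factorial (n+2) : ℝ)) ≠ 0 := by positivity
    have hnorm : ‖a ^ (n+2) / ((Nat.factorial (n+2) : ℂ))
        * ((∫ ω, x ω ^ (n+2) ∂μ : ℝ) : ℂ)‖
        = r^(n+2) / (Nat.factorial (n+2)) * |∫ ω, x ω ^ (n+2) ∂μ| := by
      simp only [norm_mul, norm_div, norm_pow, Complex.norm_natCast, Complex.norm_real,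
        Real.norm_eq_abs, hr]
    rw [hnorm]
    have step : r^(n+2) / (Nat.factorial (n+2)) * |∫ ω, x ω ^ (n+2) ∂μ|
        ≤ r^(n+2) / (Nat.factorial (n+2))
          * (D * (Nat.factorial (n+2)) * M ^ n * ∫ ω, x ω ^ 2 ∂μ) := by
      apply mul_le_mul_of_nonneg_left hb (by positivity)
    have step2 : r^(n+2) / (Nat.factorial (n+2))
          * (D * (Nat.factorial (n+2)) * M ^ n * ∫ ω, x ω ^ 2 ∂μ)
        = (D * (∫ ω, x ω ^ 2 ∂μ) * r^2) * (r*M)^n := by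
      field_simp; ring
    have step3 : (D * (∫ ω, x ω ^ 2 ∂μ) * r^2) * (r*M)^n
        ≤ (D * (∫ ω, x ω ^ 2 ∂μ) * r^2) * (1/8:ℝ)^n := by
      apply mul_le_mul_of_nonneg_left (hqle n n le_rfl) (by positivity)
    calc r^(n+2) / (Nat.factorial (n+2)) * |∫ ω, x ω ^ (n+2) ∂μ|
        ≤ (D * (∫ ω, x ω ^ 2 ∂μ) * r^2) * (r*M)^n := by rw [← step2]; exact step
    _ ≤ (D * (∫ ω, x ω ^ 2 ∂μ) * r^2) * (1/8:ℝ)^n := step3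
  have hgeo : HasSum (fun n : ℕ => (D * (∫ ω, x ω ^ 2 ∂μ) * r^2) * (1/8:ℝ)^n)
      ((D * (∫ ω, x ω ^ 2 ∂μ) * r^2) * (1 - 1/8)⁻¹) :=
    (hasSum_geometric_of_lt_one (by norm_num) (by norm_num)).mul_left _
  have hfinal := tsum_of_norm_bounded hgeo hcb
  calc ‖∑' n, ∫ ω, F (n+2) ω ∂μ‖
      ≤ (D * (∫ ω, x ω ^ 2 ∂μ) * r^2) * (1 - 1/8)⁻¹ := hfinal
  _ ≤ 2 * D * r ^ 2 * ∫ ω, x ω ^ 2 ∂μ := by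
      have : (0:ℝ) ≤ D * (∫ ω, x ω ^ 2 ∂μ) * r^2 := by positivity
      nlinarith


set_option maxHeartbeats 1000000 in
/-- Column-sum bound (120): under the Bernstein-type condition (bern), if column `j` is
centered, then with `b_{nij}(z) = e^{−z²/(2n)} E e^{z X_{nij}/√B_n} − 1` there is `C₂ > 0`
depending only on `D` such that for `|z| ≤ min{√n, √B_n/M_n}/8`,
`|Σ_i b_{nij}(z)| ≤ C₂ |z|² (1 + Σ_i E X_{nij}²/B_n)`. -/
theorem column_sum_b_bound (D : ℝ) (hD : 0 < D) :
    ∃ C₂ > (0 : ℝ),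
      ∀ (Ω : Type) (_ : MeasurableSpace Ω) (μ : Measure Ω), IsProbabilityMeasure μ →
      ∀ (n : ℕ), 2 ≤ n →
      ∀ (X : Fin n → Fin n → Ω → ℝ), (∀ i j, Measurable (X i j)) →
      (∀ i j (k : ℕ), Integrable (fun ω => |X i j ω| ^ k) μ) →
      ∀ (M B : ℝ), 0 < M → 0 < B →
      B = (1 / n : ℝ) * ∑ i, ∑ j, ∫ ω, (X i j ω) ^ 2 ∂μ →
      (∀ s ∈ ({1, 2, 3} : Set ℕ), ∀ k : ℕ, s ≤ k → ∀ i j,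
        |∫ ω, X i j ω ^ k ∂μ|
          ≤ D * (Nat.factorial k) * M ^ (k - s) * ∫ ω, |X i j ω| ^ s ∂μ) →
      ∀ j : Fin n, (∑ i, ∫ ω, X i j ω ∂μ) = 0 →
      ∀ z : ℂ, ‖z‖ ≤ min (Real.sqrt n) (Real.sqrt B / M) / 8 →
        ‖∑ i, (Complex.exp (-z ^ 2 / (2 * n)) *
              (∫ ω, Complex.exp (z * (X i j ω : ℂ) / (Real.sqrt B : ℂ)) ∂μ) - 1)‖
          ≤ C₂ * ‖z‖ ^ 2 * (1 + (∑ i, ∫ ω, (X i j ω) ^ 2 ∂μ) / B) := by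
  refine ⟨6 * D + 1, by linarith, ?_⟩
  intro Ωt _ μ hprob n hn X hmeas hintX M B hM hB hBdef hbern j hcent z hz
  have hn0 : (0:ℝ) < n := by positivity
  have hn2 : (2:ℝ) ≤ n := by exact_mod_cast hn
  have hsB : (0:ℝ) < Real.sqrt B := Real.sqrt_pos.mpr hB
  set a : ℂ := z / ((Real.sqrt B : ℝ) : ℂ) with haa
  have hna : ‖a‖ = ‖z‖ / Real.sqrt B := by
    rw [haa, norm_div, Complex.norm_real, Real.norm_eq_abs, abs_of_nonneg (Real.sqrt_nonneg B)]
  -- |a| * M ≤ 1/8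
  have hz2' : ‖z‖ ≤ (Real.sqrt B / M) / 8 :=
    hz.trans (by gcongr; exact min_le_right _ _)
  have ha : ‖a‖ * M ≤ 1/8 := by
    rw [hna, div_mul_eq_mul_div, div_le_div_iff₀ hsB (by norm_num)]
    rw [div_div, le_div_iff₀ (by positivity)] at hz2'
    nlinarith
  -- per-(i) key bound
  have hkey : ∀ i : Fin n,
      ‖(∫ ω, Complex.exp (a * X i j ω) ∂μ) - 1 - a * ((∫ ω, X i j ω ∂μ : ℝ) : ℂ)‖
        ≤ 2 * D * ‖a‖ ^ 2 * ∫ ω, X i j ω ^ 2 ∂μ := by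
    intro i
    apply key_bound μ (X i j) (hmeas i j) (fun k => hintX i j k) D M hD hM
    · intro k hk
      have h := hbern 2 (by simp) k hk i j
      have h2 : (∫ ω, |X i j ω| ^ 2 ∂μ) = ∫ ω, X i j ω ^ 2 ∂μ :=
        integral_congr_ae (.of_forall fun ω => (even_two).pow_abs (X i j ω))
      rwa [h2] at h
    · exact ha
  -- notation
  set E : ℂ := Complex.exp (-z ^ 2 / (2 * n)) with hE
  set φ : Fin n → ℂ := fun i => ∫ ω, Complex.exp (a * X i j ω) ∂μ with hφ
  set m : Fin n → ℂ := fun i => ((∫ ω, X i j ω ∂μ : ℝ) : ℂ) with hm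
  set S : ℝ := ∑ i, ∫ ω, X i j ω ^ 2 ∂μ with hS
  have hSnn : 0 ≤ S :=
    Finset.sum_nonneg fun i _ => integral_nonneg fun ω => sq_nonneg _
  have hm0 : (∑ i, m i) = 0 := by
    have : ((∑ i, ∫ ω, X i j ω ∂μ : ℝ) : ℂ) = ((0:ℝ):ℂ) := by rw [hcent]
    rw [Complex.ofReal_sum] at this
    simpa using this
  -- rewrite the LHS integrand
  have hrw : ∀ i : Fin n,
      (∫ ω, Complex.exp (z * (X i j ω : ℂ) / (Real.sqrt B : ℂ)) ∂μ) = φ i := by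
    intro i
    apply integral_congr_ae
    filter_upwards with ω
    rw [mul_div_right_comm]
  have hgoal_lhs : (∑ i, (E *
        (∫ ω, Complex.exp (z * (X i j ω : ℂ) / (Real.sqrt B : ℂ)) ∂μ) - 1))
      = E * (∑ i, (φ i - 1 - a * m i)) + (n:ℂ) * (E - 1) := by
    have h1 : ∑ i, (φ i - 1 - a * m i) = (∑ i, φ i) - n := by
      rw [Finset.sum_sub_distrib, Finset.sum_sub_distrib, ← Finset.mul_sum, hm0]
      simp [Finset.card_univ]
    have h2 : (∑ i, (E *
        (∫ ω, Complex.exp (z * (X i j ω : ℂ) / (Real.sqrt B : ℂ)) ∂μ) - 1))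
        = E * (∑ i, φ i) - n := by
      rw [Finset.sum_sub_distrib]
      simp only [hrw]
      rw [← Finset.mul_sum]
      simp [Finset.card_univ]
    rw [h2, h1]; ring
  rw [hgoal_lhs]
  -- norm estimates
  have hw : ‖-z ^ 2 / (2 * (n:ℂ))‖ = ‖z‖^2 / (2 * n) := by
    rw [norm_div, norm_neg, norm_pow, norm_mul, Complex.norm_natCast]
    norm_num
  have hzn : ‖z‖ ≤ Real.sqrt n / 8 :=
    hz.trans (by gcongr; exact min_le_left _ _)
  have hzsq : ‖z‖^2 ≤ n / 64 := by
    have h1 : ‖z‖^2 ≤ (Real.sqrt n / 8)^2 := by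
      apply pow_le_pow_left₀ (norm_nonneg z) hzn
    have h2 : (Real.sqrt n / 8)^2 = n / 64 := by
      rw [div_pow, Real.sq_sqrt hn0.le]; norm_num
    linarith [h1, h2.le, h2.ge]
  have hwle : ‖-z ^ 2 / (2 * (n:ℂ))‖ ≤ 1 := by
    rw [hw]
    rw [div_le_one (by positivity)]
    nlinarith
  have hEnorm : ‖E‖ ≤ 3 := by
    rw [hE, Complex.norm_exp]
    have h1 : (-z ^ 2 / (2 * (n:ℂ))).re ≤ 1 := by
      calc (-z ^ 2 / (2 * (n:ℂ))).re ≤ ‖-z ^ 2 / (2 * (n:ℂ))‖ :=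
            Complex.re_le_norm _
      _ = ‖-z ^ 2 / (2 * (n:ℂ))‖ := rfl
      _ ≤ 1 := hwle
    have h2 : Real.exp 1 ≤ 3 := Real.exp_one_lt_d9.le.trans (by norm_num)
    exact (Real.exp_le_exp.mpr h1).trans h2
  have hE1 : (n:ℝ) * ‖E - 1‖ ≤ ‖z‖^2 := by
    have h1 : ‖E - 1‖ ≤ 2 * ‖-z ^ 2 / (2 * (n:ℂ))‖ := by
      have h0 := Complex.norm_exp_sub_one_le (x := -z ^ 2 / (2 * (n:ℂ)))
        (by exact hwle)
      rw [hE]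
      exact h0
    rw [hw] at h1
    calc (n:ℝ) * ‖E - 1‖ ≤ (n:ℝ) * (2 * (‖z‖^2 / (2*n))) := by
          apply mul_le_mul_of_nonneg_left h1 hn0.le
    _ = ‖z‖^2 := by field_simp
  have hsum_bound : ‖∑ i, (φ i - 1 - a * m i)‖ ≤ 2 * D * (‖z‖^2 / B) * S := by
    have hasq : ‖a‖^2 = ‖z‖^2 / B := by
      rw [hna, div_pow, Real.sq_sqrt hB.le]
    calc ‖∑ i, (φ i - 1 - a * m i)‖ ≤ ∑ i, ‖φ i - 1 - a * m i‖ := norm_sum_le _ _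
    _ ≤ ∑ i, 2 * D * ‖a‖ ^ 2 * ∫ ω, X i j ω ^ 2 ∂μ :=
        Finset.sum_le_sum fun i _ => hkey i
    _ = 2 * D * ‖a‖^2 * S := by rw [← Finset.mul_sum]
    _ = 2 * D * (‖z‖^2 / B) * S := by rw [hasq]
  -- assemble
  calc ‖E * (∑ i, (φ i - 1 - a * m i)) + (n:ℂ) * (E - 1)‖
      ≤ ‖E * (∑ i, (φ i - 1 - a * m i))‖ + ‖(n:ℂ) * (E - 1)‖ := norm_add_le _ _
  _ = ‖E‖ * ‖∑ i, (φ i - 1 - a * m i)‖ + (n:ℝ) * ‖E - 1‖ := by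
      rw [norm_mul, norm_mul, Complex.norm_natCast]
  _ ≤ 3 * (2 * D * (‖z‖^2 / B) * S) + ‖z‖^2 := by
      have h1 : ‖∑ i, (φ i - 1 - a * m i)‖ ≤ 2 * D * (‖z‖^2 / B) * S := hsum_bound
      have h2 : 0 ≤ ‖∑ i, (φ i - 1 - a * m i)‖ := norm_nonneg _
      have h3 : 0 ≤ ‖E‖ := norm_nonneg _
      nlinarith [hE1, hEnorm]
  _ = 6 * D * ‖z‖ ^ 2 * (S / B) + ‖z‖^2 := by ring
  _ ≤ (6 * D + 1) * ‖z‖ ^ 2 * (1 + S / B) := by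
      have hSB : 0 ≤ S / B := div_nonneg hSnn hB.le
      have hz0 : 0 ≤ ‖z‖^2 := sq_nonneg _
      nlinarith [mul_nonneg hz0 hSB, mul_nonneg hD.le hz0]
end

section
/- Under the combinatorial-sum setup, assume the centering condition (10) and the Bernstein-type condition (bern) with constants M_n, D. Define b_{nij}(z) = e^{−z²/(2n)} E e^{z X_{nij}/√B_n} − 1. Then there exists a constant C₃ > 0 depending only on D such that for every complex z with |z| ≤ min{√n, √B_n/M_n}/8, |Σ_{i,j=1}^n b_{nij}(z)| ≤ C₃ |z|³ √n (1 + (1/(√n B_n^{3/2})) Σ_{i,j=1}^n E|X_{nij}|³). -/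
open MeasureTheory Real


lemma factorial_two_mul_le (k : ℕ) : Nat.factorial (2 * k) ≤ 4 ^ k * Nat.factorial k ^ 2 := by
  induction k with
  | zero => simp
  | succ k ih =>
    have h1 : 2 * (k + 1) = (2 * k + 1) + 1 := by ring
    rw [h1, Nat.factorial_succ, Nat.factorial_succ]
    have h2 : (2 * k + 1 + 1) * ((2 * k + 1) * Nat.factorial (2 * k))
        ≤ (2 * k + 1 + 1) * ((2 * k + 1) * (4 ^ k * Nat.factorial k ^ 2)) := by
      exact Nat.mul_le_mul_left _ (Nat.mul_le_mul_left _ ih)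
    refine h2.trans ?_
    have h3 : (2 * k + 1 + 1) * (2 * k + 1) ≤ 4 * (k+1)^2 := by nlinarith
    calc (2 * k + 1 + 1) * ((2 * k + 1) * (4 ^ k * Nat.factorial k ^ 2))
        = ((2 * k + 1 + 1) * (2 * k + 1)) * (4 ^ k * Nat.factorial k ^ 2) := by ring
      _ ≤ (4 * (k+1)^2) * (4 ^ k * Nat.factorial k ^ 2) := Nat.mul_le_mul_right _ h3
      _ = 4 ^ (k + 1) * ((k + 1) * Nat.factorial k) ^ 2 := by ring

lemma sq_integral_le {Ω : Type} [MeasurableSpace Ω] (μ : Measure Ω) [IsProbabilityMeasure μ]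
    (g : Ω → ℝ) (hg : Integrable g μ) (hg2 : Integrable (fun ω => g ω ^ 2) μ) :
    (∫ ω, g ω ∂μ) ^ 2 ≤ ∫ ω, g ω ^ 2 ∂μ := by
  set c := ∫ ω, g ω ∂μ with hc
  have h0 : 0 ≤ ∫ ω, (g ω - c) ^ 2 ∂μ := integral_nonneg fun ω => sq_nonneg _
  have hexp : (fun ω => (g ω - c) ^ 2) = fun ω => g ω ^ 2 - (2 * c) * g ω + c ^ 2 := by
    funext ω; ring
  have hi1 : Integrable (fun ω => (2 * c) * g ω) μ := hg.const_mul (2 * c)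
  have hi2 : Integrable (fun ω => g ω ^ 2 - (2 * c) * g ω) μ := hg2.sub hi1
  rw [hexp, integral_add hi2 (integrable_const _),
    integral_sub hg2 hi1, MeasureTheory.integral_const_mul, integral_const] at h0
  simp only [measure_univ, probReal_univ, ENNReal.toReal_one, smul_eq_mul, one_mul] at h0
  nlinarith [h0]

set_option maxHeartbeats 1000000 in
lemma char_fn_expansion {Ω : Type} [MeasurableSpace Ω] (μ : Measure Ω) [IsProbabilityMeasure μ]
    (X : Ω → ℝ) (hX : Measurable X) (hint : ∀ k : ℕ, Integrable (fun ω => |X ω| ^ k) μ)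
    (D M : ℝ) (hD : 0 < D) (hM : 0 < M) (c : ℂ) (hc : ‖c‖ * M ≤ 1 / 8)
    (hb1 : ∀ k : ℕ, 1 ≤ k → |∫ ω, X ω ^ k ∂μ|
      ≤ D * (Nat.factorial k) * M ^ (k - 1) * ∫ ω, |X ω| ∂μ)
    (hb3 : ∀ k : ℕ, 3 ≤ k → |∫ ω, X ω ^ k ∂μ|
      ≤ D * (Nat.factorial k) * M ^ (k - 3) * ∫ ω, |X ω| ^ 3 ∂μ) :
    ∃ R : ℂ, (∫ ω, Complex.exp (c * X ω) ∂μ)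
        = 1 + c * (∫ ω, X ω ∂μ) + c ^ 2 * (∫ ω, X ω ^ 2 ∂μ) / 2 + R ∧
      ‖R‖ ≤ 2 * D * ‖c‖ ^ 3 * ∫ ω, |X ω| ^ 3 ∂μ := by
  have hcnn : (0:ℝ) ≤ ‖c‖ * M := mul_nonneg (norm_nonneg _) hM.le
  have hE1 : (0:ℝ) ≤ ∫ ω, |X ω| ∂μ := integral_nonneg fun ω => abs_nonneg _
  have hE3 : (0:ℝ) ≤ ∫ ω, |X ω| ^ 3 ∂μ := integral_nonneg fun ω => by positivity
  set F : ℕ → Ω → ℂ := fun k ω => (c * X ω) ^ k / (Nat.factorial k : ℂ) with hF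
  have hfacC : ∀ k : ℕ, ((Nat.factorial k : ℂ)) ≠ 0 :=
    fun k => Nat.cast_ne_zero.2 (Nat.factorial_ne_zero k)
  have hfacR : ∀ k : ℕ, (0:ℝ) < (Nat.factorial k : ℝ) :=
    fun k => Nat.cast_pos.2 (Nat.factorial_pos k)
  -- integrability of complex powers
  have hXkC : ∀ k : ℕ, Integrable (fun ω => ((X ω : ℂ)) ^ k) μ := by
    intro k
    have h1 : Integrable (fun ω => X ω ^ k) μ := by
      refine (hint k).mono' ((hX.pow_const k).aestronglyMeasurable) ?_
      exact ae_of_all _ fun ω => by rw [Real.norm_eq_abs, abs_pow]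
    have := h1.ofReal (𝕜 := ℂ)
    simpa using this
  have hFint : ∀ k : ℕ, Integrable (F k) μ := by
    intro k
    have heq : F k = fun ω => (c ^ k / (Nat.factorial k : ℂ)) * ((X ω : ℂ)) ^ k := by
      funext ω; simp only [hF]; ring
    rw [heq]
    exact (hXkC k).const_mul _
  have hFnorm : ∀ k : ℕ, ∫ ω, ‖F k ω‖ ∂μ
      = ‖c‖ ^ k / (Nat.factorial k : ℝ) * ∫ ω, |X ω| ^ k ∂μ := by
    intro k
    have heq : (fun ω => ‖F k ω‖)
        = fun ω => (‖c‖ ^ k / (Nat.factorial k : ℝ)) * |X ω| ^ k := by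
      funext ω
      simp only [hF, norm_div, norm_pow, norm_mul, Complex.norm_real, Complex.norm_natCast,
        Real.norm_eq_abs]
      rw [mul_pow]
      ring
    rw [heq, MeasureTheory.integral_const_mul]
  -- moment bound via Cauchy-Schwarz
  set Q : ℝ := Real.sqrt (D * (∫ ω, |X ω| ∂μ) / M) with hQ
  have hQnn : 0 ≤ Q := Real.sqrt_nonneg _
  have hmom : ∀ k : ℕ, 1 ≤ k → ∫ ω, |X ω| ^ k ∂μ
      ≤ Q * (2 ^ k * (Nat.factorial k : ℝ) * M ^ k) := by
    intro k hk
    have habs : (fun ω => |X ω| ^ (2 * k)) = fun ω => X ω ^ (2 * k) := by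
      funext ω; rw [pow_mul, sq_abs, ← pow_mul]
    have h2k : ∫ ω, |X ω| ^ (2 * k) ∂μ ≤ D * (Nat.factorial (2*k) : ℝ) * M ^ (2*k - 1) * ∫ ω, |X ω| ∂μ := by
      rw [habs]
      have hnn : 0 ≤ ∫ ω, X ω ^ (2*k) ∂μ := by
        rw [← habs]; exact integral_nonneg fun ω => by positivity
      calc ∫ ω, X ω ^ (2*k) ∂μ = |∫ ω, X ω ^ (2*k) ∂μ| := (abs_of_nonneg hnn).symm
        _ ≤ _ := hb1 (2*k) (by omega)
    have hsq : (∫ ω, |X ω| ^ k ∂μ) ^ 2 ≤ ∫ ω, |X ω| ^ (2 * k) ∂μ := by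
      have hg2 : Integrable (fun ω => (|X ω| ^ k) ^ 2) μ := by
        have := hint (2 * k)
        refine this.congr (ae_of_all _ fun ω => ?_)
        show |X ω| ^ (2 * k) = (|X ω| ^ k) ^ 2
        rw [show 2 * k = k * 2 by ring, pow_mul]
      have := sq_integral_le μ (fun ω => |X ω| ^ k) (hint k) hg2
      refine this.trans_eq ?_
      congr 1; funext ω; rw [← pow_mul, mul_comm k 2]
    have hA : (∫ ω, |X ω| ^ k ∂μ) ^ 2 ≤ D * (Nat.factorial (2*k) : ℝ) * M ^ (2*k - 1) * ∫ ω, |X ω| ∂μ :=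
      hsq.trans h2k
    have hle : ∫ ω, |X ω| ^ k ∂μ ≤ Real.sqrt (D * (Nat.factorial (2*k) : ℝ) * M ^ (2*k-1) * ∫ ω, |X ω| ∂μ) :=
      Real.le_sqrt_of_sq_le hA
    refine hle.trans ?_
    have hcmp : D * (Nat.factorial (2*k) : ℝ) * M ^ (2*k-1) * ∫ ω, |X ω| ∂μ
        ≤ (Q * (2 ^ k * (Nat.factorial k : ℝ) * M ^ k)) ^ 2 := by
      have hQsq : Q ^ 2 = D * (∫ ω, |X ω| ∂μ) / M := by
        rw [hQ, Real.sq_sqrt (by positivity)]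
      have hfact : (Nat.factorial (2*k) : ℝ) ≤ 4 ^ k * (Nat.factorial k : ℝ) ^ 2 := by
        have := factorial_two_mul_le k
        exact_mod_cast this
      have hMk : M ^ (2*k-1) * M = M ^ (2*k) := by
        rw [← pow_succ]; congr 1; omega
      have h4 : ((2:ℝ)^k)^2 = 4^k := by
        rw [← pow_mul, mul_comm k 2, pow_mul]; norm_num
      have hM2 : (M^k)^2 = M^(2*k) := by rw [← pow_mul, mul_comm k 2]
      have hrw : (Q * (2 ^ k * (Nat.factorial k : ℝ) * M ^ k)) ^ 2
          = (D * (∫ ω, |X ω| ∂μ) / M) * (4 ^ k * (Nat.factorial k : ℝ)^2 * M ^ (2*k)) := by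
        rw [mul_pow, mul_pow, mul_pow, hQsq, h4, hM2]
      rw [hrw]
      rw [div_mul_eq_mul_div, le_div_iff₀ hM]
      calc D * (Nat.factorial (2*k):ℝ) * M ^ (2*k-1) * (∫ ω, |X ω| ∂μ) * M
          = D * (∫ ω, |X ω| ∂μ) * (Nat.factorial (2*k):ℝ) * (M ^ (2*k-1) * M) := by ring
        _ = D * (∫ ω, |X ω| ∂μ) * (Nat.factorial (2*k):ℝ) * M ^ (2*k) := by rw [hMk]
        _ ≤ D * (∫ ω, |X ω| ∂μ) * (4 ^ k * (Nat.factorial k:ℝ)^2) * M ^ (2*k) := by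
            have h1 : 0 ≤ D * (∫ ω, |X ω| ∂μ) := by positivity
            have h2 : (0:ℝ) ≤ M ^ (2*k) := by positivity
            nlinarith [mul_le_mul_of_nonneg_left hfact h1]
        _ = D * (∫ ω, |X ω| ∂μ) * (4 ^ k * (Nat.factorial k:ℝ)^2 * M ^ (2*k)) := by ring
    calc Real.sqrt (D * (Nat.factorial (2*k) : ℝ) * M ^ (2*k-1) * ∫ ω, |X ω| ∂μ)
        ≤ Real.sqrt ((Q * (2 ^ k * (Nat.factorial k : ℝ) * M ^ k)) ^ 2) := Real.sqrt_le_sqrt hcmp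
      _ = Q * (2 ^ k * (Nat.factorial k : ℝ) * M ^ k) := Real.sqrt_sq (by positivity)
  -- summability of norm integrals
  have hterm : ∀ k : ℕ, ∫ ω, ‖F k ω‖ ∂μ ≤ (1 + Q) * (2 * (‖c‖ * M)) ^ k := by
    intro k
    rw [hFnorm]
    rcases Nat.eq_zero_or_pos k with hk | hk
    · subst hk
      simp only [pow_zero, Nat.factorial_zero, Nat.cast_one, div_one, one_mul]
      rw [integral_const]
      simp only [measure_univ, probReal_univ, ENNReal.toReal_one, smul_eq_mul, mul_one]
      linarith
    · have h1 := hmom k hk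
      have h2 : ‖c‖ ^ k / (Nat.factorial k : ℝ) * ∫ ω, |X ω| ^ k ∂μ
          ≤ ‖c‖ ^ k / (Nat.factorial k : ℝ) * (Q * (2 ^ k * (Nat.factorial k : ℝ) * M ^ k)) := by
        apply mul_le_mul_of_nonneg_left h1 (by positivity)
      refine h2.trans ?_
      have hfk := (hfacR k).ne'
      have heq : ‖c‖ ^ k / (Nat.factorial k : ℝ) * (Q * (2 ^ k * (Nat.factorial k : ℝ) * M ^ k))
          = Q * (2 * (‖c‖ * M)) ^ k := by
        field_simp
        ring
      rw [heq]
      have : (0:ℝ) ≤ (2 * (‖c‖ * M)) ^ k := by positivity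
      nlinarith
  have hgeom : Summable (fun k : ℕ => (1 + Q) * (2 * (‖c‖ * M)) ^ k) := by
    apply Summable.mul_left
    apply summable_geometric_of_lt_one (by positivity)
    linarith
  have hsumnorm : Summable (fun k => ∫ ω, ‖F k ω‖ ∂μ) := by
    refine Summable.of_nonneg_of_le (fun k => integral_nonneg fun ω => norm_nonneg _)
      (fun k => hterm k) hgeom
  have hHasSum := MeasureTheory.hasSum_integral_of_summable_integral_norm hFint hsumnorm
  have hexp : ∀ ω, (∑' k, F k ω) = Complex.exp (c * X ω) := by
    intro ω
    rw [Complex.exp_eq_exp_ℂ, NormedSpace.exp_eq_tsum_div]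
  have hIeq : ∀ k : ℕ, ∫ ω, F k ω ∂μ
      = c ^ k * ((∫ ω, X ω ^ k ∂μ : ℝ) : ℂ) / (Nat.factorial k : ℂ) := by
    intro k
    have heq : F k = fun ω => (c ^ k / (Nat.factorial k : ℂ)) * (((X ω ^ k : ℝ)) : ℂ) := by
      funext ω; simp only [hF]; push_cast; ring
    have hor : (∫ a, ((X a ^ k : ℝ) : ℂ) ∂μ) = ((∫ ω, X ω ^ k ∂μ : ℝ) : ℂ) := integral_ofReal
    rw [heq, MeasureTheory.integral_const_mul, hor]
    ring
  set f : ℕ → ℂ := fun k => c ^ k * ((∫ ω, X ω ^ k ∂μ : ℝ) : ℂ) / (Nat.factorial k : ℂ) with hfdef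
  have hHS : HasSum f (∫ ω, Complex.exp (c * X ω) ∂μ) := by
    have h2 : (∫ a, (∑' i, F i a) ∂μ) = ∫ ω, Complex.exp (c * X ω) ∂μ :=
      integral_congr_ae (ae_of_all _ fun ω => hexp ω)
    have h3 := hHasSum
    simp only [hIeq] at h3
    rwa [h2] at h3
  -- norm of the coefficients
  have hfnorm : ∀ k : ℕ, ‖f k‖ = ‖c‖ ^ k * |∫ ω, X ω ^ k ∂μ| / (Nat.factorial k : ℝ) := by
    intro k
    simp only [hfdef, norm_div, norm_mul, norm_pow, Complex.norm_real, Complex.norm_natCast,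
      Real.norm_eq_abs]
  have hfle : ∀ k, ‖f k‖ ≤ ∫ ω, ‖F k ω‖ ∂μ := by
    intro k
    rw [hFnorm k, hfnorm k]
    have h2 : |∫ ω, X ω ^ k ∂μ| ≤ ∫ ω, |X ω| ^ k ∂μ := by
      calc |∫ ω, X ω ^ k ∂μ| ≤ ∫ ω, |X ω ^ k| ∂μ := by
            simpa [Real.norm_eq_abs] using norm_integral_le_integral_norm (fun ω => X ω ^ k)
        _ = ∫ ω, |X ω| ^ k ∂μ := by congr 1; funext ω; rw [abs_pow]
    calc ‖c‖ ^ k * |∫ ω, X ω ^ k ∂μ| / (Nat.factorial k : ℝ)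
        = ‖c‖ ^ k / (Nat.factorial k : ℝ) * |∫ ω, X ω ^ k ∂μ| := by ring
      _ ≤ ‖c‖ ^ k / (Nat.factorial k : ℝ) * ∫ ω, |X ω| ^ k ∂μ :=
          mul_le_mul_of_nonneg_left h2 (by positivity)
  have hfs : Summable fun k => ‖f k‖ :=
    Summable.of_nonneg_of_le (fun k => norm_nonneg _) hfle hsumnorm
  have hsum3 : Summable fun k => ‖f (k + 3)‖ := (summable_nat_add_iff 3).2 hfs
  set R : ℂ := ∑' k, f (k + 3) with hR
  have hsplit : ∑ k ∈ Finset.range 3, f k + R = ∫ ω, Complex.exp (c * X ω) ∂μ := by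
    rw [hR, Summable.sum_add_tsum_nat_add 3 hfs.of_norm]
    exact hHS.tsum_eq
  have hm0 : (∫ ω, X ω ^ 0 ∂μ) = (1:ℝ) := by simp
  have hrange : ∑ k ∈ Finset.range 3, f k
      = 1 + c * (∫ ω, X ω ∂μ) + c ^ 2 * (∫ ω, X ω ^ 2 ∂μ) / 2 := by
    rw [Finset.sum_range_succ, Finset.sum_range_succ, Finset.sum_range_one]
    simp only [hfdef, pow_zero, pow_one, Nat.factorial_zero, Nat.factorial_one,
      Nat.factorial_two, Nat.cast_one, Nat.cast_ofNat, integral_const, measure_univ,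
      probReal_univ, ENNReal.toReal_one, smul_eq_mul, one_mul, Complex.ofReal_one]
    ring
  have hRle : ‖R‖ ≤ 2 * D * ‖c‖ ^ 3 * ∫ ω, |X ω| ^ 3 ∂μ := by
    have h1 : ‖R‖ ≤ ∑' k, ‖f (k + 3)‖ := norm_tsum_le_tsum_norm hsum3
    have hgeo8 : Summable fun k : ℕ => (D * ‖c‖ ^ 3 * ∫ ω, |X ω| ^ 3 ∂μ) * (1/8 : ℝ) ^ k :=
      (summable_geometric_of_lt_one (by norm_num) (by norm_num)).mul_left _
    have h2 : ∀ k : ℕ, ‖f (k + 3)‖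
        ≤ (D * ‖c‖ ^ 3 * ∫ ω, |X ω| ^ 3 ∂μ) * (1/8 : ℝ) ^ k := by
      intro k
      rw [hfnorm (k + 3)]
      have hb := hb3 (k + 3) (by omega)
      have hsub : (k + 3) - 3 = k := by omega
      rw [hsub] at hb
      have hfp := hfacR (k + 3)
      calc ‖c‖ ^ (k+3) * |∫ ω, X ω ^ (k+3) ∂μ| / (Nat.factorial (k+3) : ℝ)
          ≤ ‖c‖ ^ (k+3) * (D * (Nat.factorial (k+3):ℝ) * M ^ k * ∫ ω, |X ω| ^ 3 ∂μ)
              / (Nat.factorial (k+3) : ℝ) := by gcongr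
        _ = (D * ‖c‖ ^ 3 * ∫ ω, |X ω| ^ 3 ∂μ) * (‖c‖ * M) ^ k := by
            field_simp
            ring
        _ ≤ (D * ‖c‖ ^ 3 * ∫ ω, |X ω| ^ 3 ∂μ) * (1/8 : ℝ) ^ k := by
            apply mul_le_mul_of_nonneg_left _ (by positivity)
            exact pow_le_pow_left₀ hcnn hc k
    have h3 : ∑' k, ‖f (k+3)‖
        ≤ (D * ‖c‖ ^ 3 * ∫ ω, |X ω| ^ 3 ∂μ) * ∑' k : ℕ, (1/8:ℝ) ^ k := by
      rw [← tsum_mul_left]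
      exact Summable.tsum_le_tsum h2 hsum3 hgeo8
    have h4 : ∑' k : ℕ, (1/8:ℝ) ^ k = (1 - 1/8 : ℝ)⁻¹ :=
      tsum_geometric_of_lt_one (by norm_num) (by norm_num)
    rw [h4] at h3
    have h5 : (D * ‖c‖ ^ 3 * ∫ ω, |X ω| ^ 3 ∂μ) * (1 - 1/8 : ℝ)⁻¹
        ≤ 2 * D * ‖c‖ ^ 3 * ∫ ω, |X ω| ^ 3 ∂μ := by
      have hnn : (0:ℝ) ≤ D * ‖c‖ ^ 3 * ∫ ω, |X ω| ^ 3 ∂μ := by positivity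
      nlinarith
    linarith [h1.trans (h3.trans h5)]
  exact ⟨R, by rw [← hsplit, hrange], hRle⟩

set_option maxHeartbeats 2000000 in
/-- Full-sum bound (140): under the centering condition (10) and the Bernstein-type
condition (bern), with `b_{nij}(z) = e^{−z²/(2n)} E e^{z X_{nij}/√B_n} − 1` there is
`C₃ > 0` depending only on `D` such that for `|z| ≤ min{√n, √B_n/M_n}/8`,
`|Σ_{i,j} b_{nij}(z)| ≤ C₃ |z|³ √n (1 + (1/(√n B_n^{3/2})) Σ_{i,j} E|X_{nij}|³)`. -/
theorem full_sum_b_bound (D : ℝ) (hD : 0 < D) :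
    ∃ C₃ > (0 : ℝ),
      ∀ (Ω : Type) (_ : MeasurableSpace Ω) (μ : Measure Ω), IsProbabilityMeasure μ →
      ∀ (n : ℕ), 2 ≤ n →
      ∀ (X : Fin n → Fin n → Ω → ℝ), (∀ i j, Measurable (X i j)) →
      (∀ i j (k : ℕ), Integrable (fun ω => |X i j ω| ^ k) μ) →
      ∀ (M B : ℝ), 0 < M → 0 < B →
      B = (1 / n : ℝ) * ∑ i, ∑ j, ∫ ω, (X i j ω) ^ 2 ∂μ →
      (∀ s ∈ ({1, 2, 3} : Set ℕ), ∀ k : ℕ, s ≤ k → ∀ i j,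
        |∫ ω, X i j ω ^ k ∂μ|
          ≤ D * (Nat.factorial k) * M ^ (k - s) * ∫ ω, |X i j ω| ^ s ∂μ) →
      (∀ j, ∑ i, ∫ ω, X i j ω ∂μ = 0) → (∀ i, ∑ j, ∫ ω, X i j ω ∂μ = 0) →
      ∀ z : ℂ, ‖z‖ ≤ min (Real.sqrt n) (Real.sqrt B / M) / 8 →
        ‖∑ i, ∑ j, (Complex.exp (-z ^ 2 / (2 * n)) *
              (∫ ω, Complex.exp (z * (X i j ω : ℂ) / (Real.sqrt B : ℂ)) ∂μ) - 1)‖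
          ≤ C₃ * ‖z‖ ^ 3 * Real.sqrt n *
              (1 + (1 / (Real.sqrt n * B ^ ((3 : ℝ) / 2))) *
                ∑ i, ∑ j, ∫ ω, |X i j ω| ^ 3 ∂μ) := by
  refine ⟨1 + 6 * D, by linarith, ?_⟩
  intro Ω mΩ μ hμ n hn X hmeas hint M B hM hB hBdef hbern h10a h10b z hz
  have hn0 : (0:ℝ) < (n:ℝ) := by
    have : 0 < n := lt_of_lt_of_le Nat.zero_lt_two hn
    exact_mod_cast this
  have hsqn : (0:ℝ) < Real.sqrt n := Real.sqrt_pos.2 hn0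
  have hsqB : (0:ℝ) < Real.sqrt B := Real.sqrt_pos.2 hB
  have hzn : ‖z‖ ≤ Real.sqrt n / 8 := hz.trans (by gcongr; exact min_le_left _ _)
  have hzB : ‖z‖ ≤ Real.sqrt B / M / 8 := hz.trans (by gcongr; exact min_le_right _ _)
  set c : ℂ := z / (Real.sqrt B : ℂ) with hcdef
  have hnormc : ‖c‖ = ‖z‖ / Real.sqrt B := by
    rw [hcdef, norm_div, Complex.norm_real, Real.norm_eq_abs, abs_of_nonneg hsqB.le]
  have hcM : ‖c‖ * M ≤ 1 / 8 := by
    rw [hnormc]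
    have h1 : ‖z‖ * M ≤ Real.sqrt B / 8 := by
      calc ‖z‖ * M ≤ (Real.sqrt B / M / 8) * M := by gcongr
        _ = Real.sqrt B / 8 := by field_simp
    calc ‖z‖ / Real.sqrt B * M = (‖z‖ * M) / Real.sqrt B := by ring
      _ ≤ (Real.sqrt B / 8) / Real.sqrt B := by gcongr
      _ = 1 / 8 := by field_simp
  -- per-entry expansion
  have key : ∀ i j : Fin n, ∃ R : ℂ,
      (∫ ω, Complex.exp (c * X i j ω) ∂μ)
        = 1 + c * (∫ ω, X i j ω ∂μ) + c ^ 2 * (∫ ω, X i j ω ^ 2 ∂μ) / 2 + R ∧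
      ‖R‖ ≤ 2 * D * ‖c‖ ^ 3 * ∫ ω, |X i j ω| ^ 3 ∂μ := by
    intro i j
    refine char_fn_expansion μ (X i j) (hmeas i j) (hint i j) D M hD hM c hcM ?_ ?_
    · intro k hk
      have := hbern 1 (by norm_num) k hk i j
      simpa using this
    · intro k hk
      exact hbern 3 (by norm_num) k hk i j
  choose R hRval hRbd using key
  set E : ℂ := Complex.exp (-z ^ 2 / (2 * (n:ℂ))) with hEdef
  have hφ : ∀ i j, (∫ ω, Complex.exp (z * (X i j ω : ℂ) / (Real.sqrt B : ℂ)) ∂μ)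
      = 1 + c * (∫ ω, X i j ω ∂μ) + c ^ 2 * (∫ ω, X i j ω ^ 2 ∂μ) / 2 + R i j := by
    intro i j
    rw [← hRval i j]
    refine integral_congr_ae (ae_of_all _ fun ω => ?_)
    show Complex.exp (z * (X i j ω : ℂ) / (Real.sqrt B : ℂ)) = Complex.exp (c * (X i j ω : ℂ))
    rw [hcdef]
    congr 1
    ring
  have hstep : ∀ i j : Fin n,
      E * (∫ ω, Complex.exp (z * (X i j ω : ℂ) / (Real.sqrt B : ℂ)) ∂μ) - 1
      = (E - 1) + (E * c) * ((∫ ω, X i j ω ∂μ : ℝ) : ℂ)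
        + (E * c ^ 2 / 2) * ((∫ ω, X i j ω ^ 2 ∂μ : ℝ) : ℂ) + E * R i j := by
    intro i j
    rw [hφ i j]
    ring
  have hsum_eq : ∑ i, ∑ j, (E *
        (∫ ω, Complex.exp (z * (X i j ω : ℂ) / (Real.sqrt B : ℂ)) ∂μ) - 1)
      = (n:ℂ)^2 * (E - 1) + (E * c) * (((∑ i, ∑ j, ∫ ω, X i j ω ∂μ : ℝ)) : ℂ)
        + (E * c ^ 2 / 2) * (((∑ i, ∑ j, ∫ ω, X i j ω ^ 2 ∂μ : ℝ)) : ℂ)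
        + E * ∑ i, ∑ j, R i j := by
    simp only [hstep]
    simp only [Finset.sum_add_distrib, ← Finset.mul_sum, Finset.sum_const, Finset.card_univ,
      Fintype.card_fin, nsmul_eq_mul]
    push_cast
    ring
  have hm1 : (∑ i, ∑ j, ∫ ω, X i j ω ∂μ) = (0:ℝ) :=
    Finset.sum_eq_zero fun i _ => h10b i
  have hm2 : (∑ i, ∑ j, ∫ ω, X i j ω ^ 2 ∂μ) = (n:ℝ) * B := by
    rw [hBdef]
    field_simp
  rw [hsum_eq, hm1, hm2]
  simp only [Complex.ofReal_zero, mul_zero, add_zero, Complex.ofReal_mul, Complex.ofReal_natCast]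
  -- now bound ‖n²(E-1) + (E c²/2)(n B) + E ΣR‖
  set w : ℂ := z ^ 2 / (2 * (n:ℂ)) with hwdef
  have hEw : E = Complex.exp (-w) := by rw [hEdef, hwdef, neg_div]
  have hnne : ((n:ℂ)) ≠ 0 := by
    simp only [ne_eq, Nat.cast_eq_zero]
    omega
  have hc2B : c ^ 2 * (B:ℂ) = z ^ 2 := by
    have hBC : ((Real.sqrt B : ℝ) : ℂ) ^ 2 = (B : ℂ) := by
      norm_cast
      exact Real.sq_sqrt hB.le
    rw [hcdef, div_pow, hBC, div_mul_cancel₀]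
    exact Complex.ofReal_ne_zero.2 hB.ne'
  have hPid : (n:ℂ)^2 * (E - 1) + (E * c ^ 2 / 2) * ((n:ℂ) * (B:ℂ))
      = (n:ℂ)^2 * ((Complex.exp (-w) - 1 - (-w)) + w * (Complex.exp (-w) - 1)) := by
    have h1 : (E * c ^ 2 / 2) * ((n:ℂ) * (B:ℂ)) = E * z ^ 2 * (n:ℂ) / 2 := by
      calc (E * c ^ 2 / 2) * ((n:ℂ) * (B:ℂ)) = E * (c ^ 2 * (B:ℂ)) * (n:ℂ) / 2 := by ring
        _ = E * z ^ 2 * (n:ℂ) / 2 := by rw [hc2B]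
    have h2 : z ^ 2 = w * (2 * (n:ℂ)) := by
      rw [hwdef, div_mul_cancel₀]
      exact mul_ne_zero two_ne_zero hnne
    rw [h1, ← hEw, h2]
    ring
  have hwnorm : ‖w‖ = ‖z‖^2 / (2 * (n:ℝ)) := by
    rw [hwdef, norm_div, norm_pow, norm_mul]
    norm_num [Complex.norm_natCast]
  have hz2 : ‖z‖^2 ≤ (n:ℝ)/64 := by
    have h1 : ‖z‖^2 ≤ (Real.sqrt n / 8)^2 := by
      apply pow_le_pow_left₀ (norm_nonneg z) hzn
    have h2 : (Real.sqrt n / 8)^2 = (n:ℝ)/64 := by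
      rw [div_pow, Real.sq_sqrt hn0.le]
      norm_num
    linarith [h1, h2.le]
  have hw128 : ‖w‖ ≤ 1/128 := by
    rw [hwnorm, div_le_iff₀ (by positivity)]
    nlinarith
  have habsw : ‖-w‖ = ‖w‖ := by rw [norm_neg]
  have hx1 : ‖Complex.exp (-w) - 1 - (-w)‖ ≤ ‖w‖^2 := by
    have h := Complex.norm_exp_sub_one_sub_id_le (x := -w) (by rw [habsw]; linarith)
    rw [habsw] at h
    exact h
  have hx2 : ‖Complex.exp (-w) - 1‖ ≤ 2 * ‖w‖ := by
    have h := Complex.norm_exp_sub_one_le (x := -w) (by rw [habsw]; linarith)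
    rw [habsw] at h
    exact h
  have hdet : ‖(n:ℂ)^2 * (E - 1) + (E * c ^ 2 / 2) * ((n:ℂ) * (B:ℂ))‖
      ≤ 3 * (n:ℝ)^2 * ‖w‖^2 := by
    rw [hPid, norm_mul, norm_pow, Complex.norm_natCast]
    have h1 : ‖(Complex.exp (-w) - 1 - (-w)) + w * (Complex.exp (-w) - 1)‖ ≤ 3 * ‖w‖^2 := by
      calc ‖(Complex.exp (-w) - 1 - (-w)) + w * (Complex.exp (-w) - 1)‖
          ≤ ‖Complex.exp (-w) - 1 - (-w)‖ + ‖w * (Complex.exp (-w) - 1)‖ := norm_add_le _ _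
        _ ≤ ‖w‖^2 + ‖w‖ * (2 * ‖w‖) := by
            refine add_le_add hx1 ?_
            rw [norm_mul]
            exact mul_le_mul_of_nonneg_left hx2 (norm_nonneg _)
        _ = 3 * ‖w‖^2 := by ring
    calc (n:ℝ)^2 * ‖(Complex.exp (-w) - 1 - (-w)) + w * (Complex.exp (-w) - 1)‖
        ≤ (n:ℝ)^2 * (3 * ‖w‖^2) := mul_le_mul_of_nonneg_left h1 (by positivity)
      _ = 3 * (n:ℝ)^2 * ‖w‖^2 := by ring
  have hdet2 : 3 * (n:ℝ)^2 * ‖w‖^2 ≤ ‖z‖^3 * Real.sqrt n := by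
    rw [hwnorm]
    have h1 : 3 * (n:ℝ)^2 * (‖z‖^2/(2*(n:ℝ)))^2 = (3/4) * ‖z‖^4 := by
      field_simp
      ring
    rw [h1]
    have h2 : ‖z‖^4 = ‖z‖^3 * ‖z‖ := by ring
    have h3 : ‖z‖^3 * ‖z‖ ≤ ‖z‖^3 * (Real.sqrt n / 8) :=
      mul_le_mul_of_nonneg_left hzn (by positivity)
    nlinarith [pow_nonneg (norm_nonneg z) 3, hsqn.le]
  have hEnorm : ‖E‖ ≤ 3 := by
    rw [hEw, Complex.norm_exp]
    have h1 : (-w).re ≤ 1 := by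
      have h2 : (-w).re ≤ ‖-w‖ := Complex.re_le_norm (-w)
      rw [habsw] at h2
      linarith
    calc Real.exp (-w).re ≤ Real.exp 1 := Real.exp_le_exp.2 h1
      _ ≤ 3 := by
        have h3 := Real.exp_one_lt_d9
        norm_num at h3 ⊢
        linarith
  have hS3nn : (0:ℝ) ≤ ∑ i, ∑ j, ∫ ω, |X i j ω|^3 ∂μ :=
    Finset.sum_nonneg fun i _ => Finset.sum_nonneg fun j _ =>
      integral_nonneg fun ω => by positivity
  have hB32 : Real.sqrt B ^ 3 = B ^ ((3:ℝ)/2) := by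
    rw [Real.sqrt_eq_rpow, ← Real.rpow_natCast (B ^ ((1:ℝ)/2)) 3, ← Real.rpow_mul hB.le]
    norm_num
  have hB32pos : (0:ℝ) < B ^ ((3:ℝ)/2) := Real.rpow_pos_of_pos hB _
  have hc3 : ‖c‖^3 = ‖z‖^3 / B ^ ((3:ℝ)/2) := by
    rw [hnormc, div_pow, hB32]
  have hRsum : ‖∑ i : Fin n, ∑ j, R i j‖
      ≤ 2 * D * ‖c‖^3 * ∑ i, ∑ j, ∫ ω, |X i j ω|^3 ∂μ := by
    calc ‖∑ i : Fin n, ∑ j, R i j‖ ≤ ∑ i, ∑ j, ‖R i j‖ :=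
          (norm_sum_le _ _).trans (Finset.sum_le_sum fun i _ => norm_sum_le _ _)
      _ ≤ ∑ i, ∑ j, 2 * D * ‖c‖^3 * ∫ ω, |X i j ω|^3 ∂μ :=
          Finset.sum_le_sum fun i _ => Finset.sum_le_sum fun j _ => hRbd i j
      _ = 2 * D * ‖c‖^3 * ∑ i, ∑ j, ∫ ω, |X i j ω|^3 ∂μ := by
          simp [Finset.mul_sum]
  have htot : ‖(n:ℂ)^2 * (E - 1) + (E * c ^ 2 / 2) * ((n:ℂ) * (B:ℂ)) + E * ∑ i : Fin n, ∑ j, R i j‖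
      ≤ ‖z‖^3 * Real.sqrt n
        + 6 * D * (‖z‖^3 / B ^ ((3:ℝ)/2)) * ∑ i, ∑ j, ∫ ω, |X i j ω|^3 ∂μ := by
    calc ‖(n:ℂ)^2 * (E - 1) + (E * c ^ 2 / 2) * ((n:ℂ) * (B:ℂ)) + E * ∑ i : Fin n, ∑ j, R i j‖
        ≤ ‖(n:ℂ)^2 * (E - 1) + (E * c ^ 2 / 2) * ((n:ℂ) * (B:ℂ))‖
          + ‖E * ∑ i : Fin n, ∑ j, R i j‖ := norm_add_le _ _
      _ ≤ 3 * (n:ℝ)^2 * ‖w‖^2 + 3 * (2 * D * ‖c‖^3 * ∑ i, ∑ j, ∫ ω, |X i j ω|^3 ∂μ) := by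
          refine add_le_add hdet ?_
          rw [norm_mul]
          have hmm : (0:ℝ) ≤ 2 * D * ‖c‖^3 * ∑ i, ∑ j, ∫ ω, |X i j ω|^3 ∂μ := by positivity
          exact mul_le_mul hEnorm hRsum (norm_nonneg _) (by norm_num)
      _ ≤ ‖z‖^3 * Real.sqrt n
          + 6 * D * (‖z‖^3 / B ^ ((3:ℝ)/2)) * ∑ i, ∑ j, ∫ ω, |X i j ω|^3 ∂μ := by
          have heq : 3 * (2 * D * ‖c‖^3 * ∑ i, ∑ j, ∫ ω, |X i j ω|^3 ∂μ)
              = 6 * D * (‖z‖^3 / B ^ ((3:ℝ)/2)) * ∑ i, ∑ j, ∫ ω, |X i j ω|^3 ∂μ := by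
            rw [hc3]; ring
          rw [heq]
          exact add_le_add hdet2 le_rfl
  refine htot.trans ?_
  set S3 := ∑ i, ∑ j, ∫ ω, |X i j ω|^3 ∂μ with hS3
  have hTid : 6 * D * (‖z‖^3 / B ^ ((3:ℝ)/2)) * S3
      = 6 * D * (‖z‖^3 * Real.sqrt n) * (1 / (Real.sqrt n * B ^ ((3:ℝ)/2)) * S3) := by
    field_simp
  rw [hTid]
  have hT : (0:ℝ) ≤ 1 / (Real.sqrt n * B ^ ((3:ℝ)/2)) * S3 := by positivity
  have hzs : (0:ℝ) ≤ ‖z‖^3 * Real.sqrt n := by positivity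
  nlinarith [mul_nonneg hzs hT, mul_nonneg (mul_nonneg hD.le hzs) hT]
end

section
/- Let x > 0 and let φ be a function analytic on the closed disc |z| ≤ 16x in the complex plane with φ(0) = 1. Suppose that sup_{|z| ≤ 8x} |e^{−z²/2} φ(z) − 1| ≤ g for some 0 ≤ g < 1. Then φ has no zeros in the closed disc |z| ≤ 4x, and there is an absolute constant C > 0 such that for every z with |z| ≤ 4x, |φ'(z)/φ(z) − z| ≤ C g / (x (1 − g)). -/
open Complex Metric

lemma phi_ne_zero_aux {φ : ℂ → ℂ} {g : ℝ} (hg1 : g < 1) {z : ℂ}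
    (hb : ‖Complex.exp (-z ^ 2 / 2) * φ z - 1‖ ≤ g) : φ z ≠ 0 := by
  intro h0
  rw [h0, mul_zero, zero_sub, norm_neg, norm_one] at hb
  linarith

/-- If `φ` is analytic on the closed disc `|z| ≤ 16x` with `φ(0) = 1` and
`|e^{−z²/2} φ(z) − 1| ≤ g < 1` on the closed disc `|z| ≤ 8x`, then `φ` has no zeros in the
closed disc `|z| ≤ 4x`, and there is an absolute constant `C` such that
`|φ'(z)/φ(z) − z| ≤ C g / (x (1 − g))` for all `|z| ≤ 4x`. -/
theorem log_deriv_close_to_id_of_close_to_gaussian :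
    (∀ (x : ℝ), 0 < x → ∀ (φ : ℂ → ℂ), AnalyticOnNhd ℂ φ (closedBall 0 (16 * x)) →
      φ 0 = 1 → ∀ (g : ℝ), 0 ≤ g → g < 1 →
      (∀ z ∈ closedBall (0 : ℂ) (8 * x), ‖Complex.exp (-z ^ 2 / 2) * φ z - 1‖ ≤ g) →
      ∀ z ∈ closedBall (0 : ℂ) (4 * x), φ z ≠ 0) ∧
    ∃ C > (0 : ℝ),
      ∀ (x : ℝ), 0 < x → ∀ (φ : ℂ → ℂ), AnalyticOnNhd ℂ φ (closedBall 0 (16 * x)) →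
      φ 0 = 1 → ∀ (g : ℝ), 0 ≤ g → g < 1 →
      (∀ z ∈ closedBall (0 : ℂ) (8 * x), ‖Complex.exp (-z ^ 2 / 2) * φ z - 1‖ ≤ g) →
      ∀ z ∈ closedBall (0 : ℂ) (4 * x),
        ‖deriv φ z / φ z - z‖ ≤ C * g / (x * (1 - g)) := by
  constructor
  · intro x hx φ hφ hφ0 g hg0 hg1 hb z hz
    have hz8 : z ∈ closedBall (0 : ℂ) (8 * x) :=
      closedBall_subset_closedBall (by linarith) hz
    exact phi_ne_zero_aux hg1 (hb z hz8)
  · refine ⟨1, one_pos, ?_⟩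
    intro x hx φ hφ hφ0 g hg0 hg1 hb z hz
    set F : ℂ → ℂ := fun w => Complex.exp (-w ^ 2 / 2) * φ w with hF
    -- z is in the closed ball of radius 8x
    have hz4 : ‖z‖ ≤ 4 * x := by simpa [Complex.dist_eq] using hz
    have hsub : closedBall z (4 * x) ⊆ closedBall (0 : ℂ) (8 * x) := by
      apply closedBall_subset_closedBall'
      simp only [Complex.dist_eq, sub_zero]
      have : ‖z‖ = ‖z‖ := rfl
      linarith [hz4]
    have hsub16 : closedBall (0 : ℂ) (8 * x) ⊆ closedBall (0 : ℂ) (16 * x) :=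
      closedBall_subset_closedBall (by linarith)
    -- F is differentiable on the closed ball of radius 16x around 0
    have hFdiff : ∀ w ∈ closedBall (0 : ℂ) (16 * x), DifferentiableAt ℂ F w := by
      intro w hw
      exact ((Complex.differentiable_exp.comp
        (((differentiable_id.pow 2).neg).div_const 2)).differentiableAt).mul
        ((hφ w hw).differentiableAt)
    -- Cauchy estimate for the derivative of F - 1 at z
    have hd : DiffContOnCl ℂ (fun w => F w - 1) (ball z (4 * x)) := by
      apply DifferentiableOn.diffContOnCl
      rw [closure_ball z (by positivity : (4 : ℝ) * x ≠ 0)]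
      intro w hw
      exact ((hFdiff w (hsub16 (hsub hw))).sub_const 1).differentiableWithinAt
    have hC : ∀ w ∈ sphere z (4 * x), ‖F w - 1‖ ≤ g := by
      intro w hw
      exact hb w (hsub (sphere_subset_closedBall hw))
    have hder : ‖deriv (fun w => F w - 1) z‖ ≤ g / (4 * x) :=
      Complex.norm_deriv_le_of_forall_mem_sphere_norm_le (by positivity) hd hC
    -- compute the derivative of F
    have hz16 : z ∈ closedBall (0 : ℂ) (16 * x) := hsub16 (hsub (mem_closedBall_self (by positivity)))
    have h1 : HasDerivAt (fun w : ℂ => -w ^ 2 / 2) (-z) z := by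
      have := ((hasDerivAt_pow 2 z).neg).div_const 2
      exact this.congr_deriv (by ring)
    have h2 : HasDerivAt (fun w : ℂ => Complex.exp (-w ^ 2 / 2))
        (Complex.exp (-z ^ 2 / 2) * (-z)) z := h1.cexp
    have hφd : HasDerivAt φ (deriv φ z) z := ((hφ z hz16).differentiableAt).hasDerivAt
    have hFd : HasDerivAt F (Complex.exp (-z ^ 2 / 2) * (-z) * φ z
        + Complex.exp (-z ^ 2 / 2) * deriv φ z) z := h2.mul hφd
    have hFd' : HasDerivAt (fun w => F w - 1) (Complex.exp (-z ^ 2 / 2) * (-z) * φ z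
        + Complex.exp (-z ^ 2 / 2) * deriv φ z) z := hFd.sub_const 1
    have hderiv_eq : deriv (fun w => F w - 1) z
        = Complex.exp (-z ^ 2 / 2) * (-z) * φ z + Complex.exp (-z ^ 2 / 2) * deriv φ z :=
      hFd'.deriv
    -- lower bound on ‖F z‖
    have hz8 : z ∈ closedBall (0 : ℂ) (8 * x) := hsub (mem_closedBall_self (by positivity))
    have hbz : ‖F z - 1‖ ≤ g := hb z hz8
    have hFz_lb : 1 - g ≤ ‖F z‖ := by
      have := norm_sub_norm_le (1 : ℂ) (F z)
      rw [norm_one] at this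
      have h' : ‖(1 : ℂ) - F z‖ = ‖F z - 1‖ := by rw [← norm_neg]; ring_nf
      linarith [this, h'.le, hbz]
    have hφz : φ z ≠ 0 := phi_ne_zero_aux hg1 hbz
    have hexp : Complex.exp (-z ^ 2 / 2) ≠ 0 := Complex.exp_ne_zero _
    have hFz : F z ≠ 0 := mul_ne_zero hexp hφz
    -- key identity
    have hkey : deriv φ z / φ z - z = deriv (fun w => F w - 1) z / F z := by
      rw [hderiv_eq, hF]
      field_simp
      ring
    rw [hkey, norm_div]
    have h1g : (0 : ℝ) < 1 - g := by linarith
    have hFznorm : (0 : ℝ) < ‖F z‖ := norm_pos_iff.2 hFz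
    calc ‖deriv (fun w => F w - 1) z‖ / ‖F z‖
        ≤ (g / (4 * x)) / (1 - g) := by
          exact div_le_div₀ (by positivity) hder h1g hFz_lb
      _ ≤ 1 * g / (x * (1 - g)) := by
          rw [div_div, one_mul]
          apply div_le_div_of_nonneg_left hg0 (by positivity)
          nlinarith
end

section
/- Let x > 0 and let φ be a function analytic on the closed disc |z| ≤ 16x in the complex plane with φ(0) = 1. Suppose that sup_{|z| ≤ 8x} |e^{−z²/2} φ(z) − 1| ≤ g for some 0 ≤ g < 1. Then there is an absolute constant C > 0 such that for every z with |z| ≤ 4x, |φ''(z)/φ(z) − (φ'(z)/φ(z))² − 1| ≤ C (g + g²) / (x² (1 − g)²). -/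
open Complex Metric

/-- If `φ` is analytic on the closed disc `|z| ≤ 16x` with `φ(0) = 1` and
`|e^{−z²/2} φ(z) − 1| ≤ g < 1` on the closed disc `|z| ≤ 8x`, then there is an absolute
constant `C > 0` such that `|φ''(z)/φ(z) − (φ'(z)/φ(z))² − 1| ≤ C (g + g²) / (x² (1 − g)²)`
for all `|z| ≤ 4x`. -/
theorem second_log_deriv_close_to_one_of_close_to_gaussian :
    ∃ C > (0 : ℝ),
      ∀ (x : ℝ), 0 < x → ∀ (φ : ℂ → ℂ), AnalyticOnNhd ℂ φ (closedBall 0 (16 * x)) →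
      φ 0 = 1 → ∀ (g : ℝ), 0 ≤ g → g < 1 →
      (∀ z ∈ closedBall (0 : ℂ) (8 * x), ‖Complex.exp (-z ^ 2 / 2) * φ z - 1‖ ≤ g) →
      ∀ z ∈ closedBall (0 : ℂ) (4 * x),
        ‖deriv (deriv φ) z / φ z - (deriv φ z / φ z) ^ 2 - 1‖
          ≤ C * (g + g ^ 2) / (x ^ 2 * (1 - g) ^ 2) := by
  refine ⟨1, one_pos, ?_⟩
  intro x hx φ hφ hφ0 g hg0 hg1 hbound z hz
  have hg' : (0:ℝ) < 1 - g := by linarith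
  set h : ℂ → ℂ := fun w => Complex.exp (-w ^ 2 / 2) * φ w with hhdef
  have hbound' : ∀ w ∈ closedBall (0:ℂ) (8 * x), ‖h w - 1‖ ≤ g := fun w hw => hbound w hw
  -- analyticity of h
  have hexp : ∀ w : ℂ, AnalyticAt ℂ (fun w : ℂ => Complex.exp (-w ^ 2 / 2)) w := fun w =>
    (((analyticAt_id.pow 2).neg.div analyticAt_const two_ne_zero)).cexp
  have hhan : AnalyticOnNhd ℂ h (closedBall 0 (16 * x)) := fun w hw => (hexp w).mul (hφ w hw)
  -- membership facts
  have hzn : ‖z‖ ≤ 4 * x := mem_closedBall_zero_iff.mp hz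
  have hz8 : z ∈ closedBall (0:ℂ) (8 * x) := mem_closedBall_zero_iff.mpr (by linarith)
  have hz16 : z ∈ closedBall (0:ℂ) (16 * x) := mem_closedBall_zero_iff.mpr (by linarith)
  have hzb : z ∈ ball (0:ℂ) (8 * x) := mem_ball_zero_iff.mpr (by linarith)
  -- nonvanishing
  have hhlb : ∀ w ∈ closedBall (0:ℂ) (8 * x), 1 - g ≤ ‖h w‖ := by
    intro w hw
    have := hbound' w hw
    have h2 : ‖(1:ℂ)‖ - ‖h w - 1‖ ≤ ‖h w‖ := by
      have := norm_sub_norm_le (h w) (1:ℂ)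
      linarith [abs_le.mp (abs_norm_sub_norm_le (h w) (1:ℂ))]
    simp only [norm_one] at h2
    linarith
  have hhne : ∀ w ∈ closedBall (0:ℂ) (8 * x), h w ≠ 0 := by
    intro w hw
    have := hhlb w hw
    intro h0
    rw [h0, norm_zero] at this
    linarith
  have hφne : ∀ w ∈ closedBall (0:ℂ) (8 * x), φ w ≠ 0 := by
    intro w hw h0
    exact hhne w hw (by simp [hhdef, h0])
  -- φ = exp(w^2/2) * h
  have hφeq : φ = fun w => Complex.exp (w ^ 2 / 2) * h w := by
    funext w
    simp only [hhdef]
    rw [← mul_assoc, ← Complex.exp_add]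
    have : w ^ 2 / 2 + -w ^ 2 / 2 = 0 := by ring
    rw [this, Complex.exp_zero, one_mul]
  -- derivative of gaussian factor
  have hgau : ∀ w : ℂ, HasDerivAt (fun w : ℂ => Complex.exp (w ^ 2 / 2))
      (Complex.exp (w ^ 2 / 2) * w) w := by
    intro w
    have h1 : HasDerivAt (fun w : ℂ => w ^ 2 / 2) w w := by
      have := (hasDerivAt_pow 2 w).div_const 2
      refine this.congr_deriv ?_
      push_cast
      ring
    exact h1.cexp
  -- logDeriv identity on the open ball
  have hball : Set.EqOn (logDeriv φ) (fun w => w + logDeriv h w) (ball (0:ℂ) (8 * x)) := by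
    intro w hw
    have hw' : w ∈ closedBall (0:ℂ) (8 * x) := ball_subset_closedBall hw
    have hw16 : w ∈ closedBall (0:ℂ) (16 * x) := by
      have := mem_closedBall_zero_iff.mp hw'
      exact mem_closedBall_zero_iff.mpr (by linarith)
    have hld : logDeriv (fun w : ℂ => Complex.exp (w ^ 2 / 2)) w = w := by
      rw [logDeriv_apply, (hgau w).deriv, mul_div_cancel_left₀ _ (Complex.exp_ne_zero _)]
    rw [hφeq]
    show logDeriv (fun w => Complex.exp (w ^ 2 / 2) * h w) w = w + logDeriv h w
    rw [logDeriv_mul (f := fun w : ℂ => Complex.exp (w ^ 2 / 2)) (g := h) w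
      (Complex.exp_ne_zero _) (hhne w hw')
      (hgau w).differentiableAt ((hhan w hw16).differentiableAt), hld]
  -- differentiability pieces at z
  have hdh : DifferentiableAt ℂ (deriv h) z := ((hhan.deriv) z hz16).differentiableAt
  have hhz : DifferentiableAt ℂ h z := (hhan z hz16).differentiableAt
  have hldh : DifferentiableAt ℂ (logDeriv h) z := by
    have : logDeriv h = fun w => deriv h w / h w := rfl
    rw [this]
    exact hdh.div hhz (hhne z hz8)
  have hdφ : DifferentiableAt ℂ (deriv φ) z := ((hφ.deriv) z hz16).differentiableAt
  have hφz : DifferentiableAt ℂ φ z := (hφ z hz16).differentiableAt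
  -- derivative formulas
  have hφld : deriv (logDeriv φ) z
      = (deriv (deriv φ) z * φ z - deriv φ z * deriv φ z) / φ z ^ 2 := by
    have e : logDeriv φ = fun w => deriv φ w / φ w := rfl
    rw [e]; exact deriv_div hdφ hφz (hφne z hz8)
  have hhld : deriv (logDeriv h) z
      = (deriv (deriv h) z * h z - deriv h z * deriv h z) / h z ^ 2 := by
    have e : logDeriv h = fun w => deriv h w / h w := rfl
    rw [e]; exact deriv_div hdh hhz (hhne z hz8)
  have hderiveq : deriv (logDeriv φ) z = 1 + deriv (logDeriv h) z := by
    have hev := (hball.eventuallyEq_of_mem (isOpen_ball.mem_nhds hzb)).deriv_eq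
    rw [hev]
    exact ((hasDerivAt_id' z).add hldh.hasDerivAt).deriv
  -- the key identity
  have main : deriv (deriv φ) z / φ z - (deriv φ z / φ z) ^ 2 - 1
      = deriv (deriv h) z / h z - (deriv h z / h z) ^ 2 := by
    have l1 : deriv (logDeriv φ) z = deriv (deriv φ) z / φ z - (deriv φ z / φ z) ^ 2 := by
      rw [hφld]
      have := hφne z hz8
      field_simp
    have l2 : deriv (logDeriv h) z = deriv (deriv h) z / h z - (deriv h z / h z) ^ 2 := by
      rw [hhld]
      have := hhne z hz8
      field_simp
    rw [l1, l2] at hderiveq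
    linear_combination hderiveq
  rw [main]
  -- Cauchy estimates
  have hx2 : (0:ℝ) < 2 * x := by linarith
  have hA6 : ∀ w ∈ closedBall (0:ℂ) (6 * x), ‖deriv h w‖ ≤ g / (2 * x) := by
    intro w hw
    have hwn : ‖w‖ ≤ 6 * x := mem_closedBall_zero_iff.mp hw
    have hsub : closedBall w (2 * x) ⊆ closedBall (0:ℂ) (8 * x) := by
      apply closedBall_subset_closedBall'
      rw [dist_zero_right]
      linarith
    have hsub16 : closedBall w (2 * x) ⊆ closedBall (0:ℂ) (16 * x) := by
      refine hsub.trans (closedBall_subset_closedBall ?_)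
      linarith
    have hdo : DifferentiableOn ℂ (fun u => h u - 1) (closedBall w (2 * x)) := fun u hu =>
      ((hhan u (hsub16 hu)).sub analyticAt_const).differentiableAt.differentiableWithinAt
    have hdc : DiffContOnCl ℂ (fun u => h u - 1) (ball w (2 * x)) :=
      (hdo.mono closure_ball_subset_closedBall).diffContOnCl
    have := Complex.norm_deriv_le_of_forall_mem_sphere_norm_le hx2 hdc
      (fun u hu => hbound' u (hsub (sphere_subset_closedBall hu)))
    rwa [deriv_sub_const] at this
  have hz6 : z ∈ closedBall (0:ℂ) (6 * x) := mem_closedBall_zero_iff.mpr (by linarith)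
  have hB : ‖deriv h z‖ ≤ g / (2 * x) := hA6 z hz6
  have hA : ‖deriv (deriv h) z‖ ≤ g / (2 * x) / (2 * x) := by
    have hsub6 : closedBall z (2 * x) ⊆ closedBall (0:ℂ) (6 * x) := by
      apply closedBall_subset_closedBall'
      rw [dist_zero_right]
      linarith
    have hsub16 : closedBall z (2 * x) ⊆ closedBall (0:ℂ) (16 * x) := by
      refine hsub6.trans (closedBall_subset_closedBall ?_)
      linarith
    have hdo : DifferentiableOn ℂ (deriv h) (closedBall z (2 * x)) := fun u hu =>
      ((hhan.deriv) u (hsub16 hu)).differentiableAt.differentiableWithinAt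
    have hdc : DiffContOnCl ℂ (deriv h) (ball z (2 * x)) :=
      (hdo.mono closure_ball_subset_closedBall).diffContOnCl
    exact Complex.norm_deriv_le_of_forall_mem_sphere_norm_le hx2 hdc
      (fun u hu => hA6 u (hsub6 (sphere_subset_closedBall hu)))
  have hH : 1 - g ≤ ‖h z‖ := hhlb z hz8
  -- final estimate
  have hquot : deriv (deriv h) z / h z - (deriv h z / h z) ^ 2
      = deriv (deriv h) z / h z - (deriv h z / h z) ^ 2 := rfl
  calc ‖deriv (deriv h) z / h z - (deriv h z / h z) ^ 2‖
      ≤ ‖deriv (deriv h) z / h z‖ + ‖(deriv h z / h z) ^ 2‖ := norm_sub_le _ _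
    _ = ‖deriv (deriv h) z‖ / ‖h z‖ + (‖deriv h z‖ / ‖h z‖) ^ 2 := by
        rw [norm_div, norm_pow, norm_div]
    _ ≤ (g / (2 * x) / (2 * x)) / (1 - g) + ((g / (2 * x)) / (1 - g)) ^ 2 := by
        gcongr
    _ ≤ 1 * (g + g ^ 2) / (x ^ 2 * (1 - g) ^ 2) := by
        have e : g / (2 * x) / (2 * x) / (1 - g) + (g / (2 * x) / (1 - g)) ^ 2
            = (g * (1 - g) + g ^ 2) / (4 * (x ^ 2 * (1 - g) ^ 2)) := by
          field_simp
          ring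
        rw [e, one_mul, div_le_div_iff₀ (by positivity) (by positivity)]
        have hXpos : (0:ℝ) < x ^ 2 * (1 - g) ^ 2 := by positivity
        nlinarith [mul_nonneg hg0 hXpos.le, mul_nonneg (mul_nonneg hg0 hg0) hXpos.le]
end
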